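/- arXiv:2605.03960 — 8 statements merged into one kernel-verified Lean document; each statement's English description precedes it below -/
import Mathlib

section
/- Let d be a positive integer and (λ_n)_{n≥1} a nondecreasing sequence of positive real numbers with λ_n/n^{2/d} → L as n → ∞ for some L > 0, and set ρ_n = √λ_n, Θ_D(t) = Σ_{n≥1} e^{−ρ_n t}. Then for every integer m ≥ d + 1 there exists a locally bounded function α : (−π/2, π/2) → ℝ_{>0} such that |t^{m−1} Θ_D(t)| ≤ α(θ) for every θ ∈ (−π/2, π/2) and every t = r e^{iθ} with r > 0. -/
open Filter MeasureTheory Set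
open scoped Topology Real

private lemma integrableOn_exp_rt (d : ℕ) (hd : 0 < d) {b : ℝ} (hb : 0 < b) :
    IntegrableOn (fun x : ℝ => Real.exp (-(b * x ^ ((1:ℝ)/(d:ℝ))))) (Ioi 0) := by
  have hdR : (0:ℝ) < (d:ℝ) := by exact_mod_cast hd
  rw [← integrableOn_Ioi_comp_rpow_iff _ (p := (d:ℝ)) hdR.ne']
  have h1 : IntegrableOn (fun x : ℝ => x ^ ((d:ℝ) - 1) * Real.exp (-b * x ^ (1:ℝ))) (Ioi 0) :=
    integrableOn_rpow_mul_exp_neg_mul_rpow (by linarith) zero_lt_one hb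
  have h2 : IntegrableOn (fun x : ℝ => |(d:ℝ)| * (x ^ ((d:ℝ) - 1) * Real.exp (-b * x ^ (1:ℝ))))
      (Ioi 0) := h1.const_mul |(d:ℝ)|
  refine IntegrableOn.congr_fun h2 (fun x hx => ?_) measurableSet_Ioi
  have hx0 : (0:ℝ) < x := hx
  rw [smul_eq_mul, ← Real.rpow_mul hx0.le]
  have : (d:ℝ) * ((1:ℝ)/(d:ℝ)) = 1 := by field_simp
  rw [this, Real.rpow_one]
  ring_nf

private lemma sum_exp_le (d : ℕ) (hd : 0 < d) {b : ℝ} (hb : 0 < b) :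
    Summable (fun n : ℕ => Real.exp (-(b * ((n:ℝ)+1) ^ ((1:ℝ)/(d:ℝ))))) ∧
    ∑' n : ℕ, Real.exp (-(b * ((n:ℝ)+1) ^ ((1:ℝ)/(d:ℝ)))) ≤
      Real.Gamma ((d:ℝ) + 1) * (b ^ (d:ℕ))⁻¹ := by
  have hdR : (0:ℝ) < (d:ℝ) := by exact_mod_cast hd
  set p : ℝ := (1:ℝ)/(d:ℝ) with hp
  have hp0 : 0 < p := by positivity
  set f : ℝ → ℝ := fun x => Real.exp (-(b * x ^ p)) with hf
  have hanti : AntitoneOn f (Set.Ici (0:ℝ)) := by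
    intro x hx y hy hxy
    simp only [hf]
    apply Real.exp_le_exp.2
    have := Real.rpow_le_rpow hx hxy hp0.le
    nlinarith
  have hnonneg : ∀ x, 0 ≤ f x := fun x => (Real.exp_pos _).le
  have hint : IntegrableOn f (Ioi 0) := integrableOn_exp_rt d hd hb
  have hIval : ∫ x in Ioi (0:ℝ), f x = b ^ (-1/p) * Real.Gamma (1/p + 1) := by
    simp only [hf]
    have := integral_exp_neg_mul_rpow hp0 hb
    simpa [neg_mul] using this
  have key : ∀ n : ℕ, ∑ i ∈ Finset.range n, f ((i:ℝ)+1) ≤ ∫ x in Ioi (0:ℝ), f x := by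
    intro n
    have hmono : AntitoneOn f (Set.Icc (0:ℝ) (0 + n)) :=
      hanti.mono (fun x hx => hx.1)
    have h1 := hmono.sum_le_integral
    have h2 : (∑ i ∈ Finset.range n, f ((i:ℝ)+1)) = ∑ i ∈ Finset.range n, f ((0:ℝ) + ((i:ℕ)+1:ℕ)) := by
      refine Finset.sum_congr rfl (fun i _ => ?_)
      push_cast; ring_nf
    rw [h2]
    refine h1.trans ?_
    rw [intervalIntegral.integral_of_le (by positivity)]
    refine setIntegral_mono_set hint ?_ ?_
    · exact Filter.Eventually.of_forall (fun x => hnonneg x)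
    · exact HasSubset.Subset.eventuallyLE Ioc_subset_Ioi_self
  have hsummable : Summable (fun n : ℕ => f ((n:ℝ)+1)) :=
    summable_of_sum_range_le (fun n => hnonneg _) (fun n => key n)
  constructor
  · exact hsummable
  · have h3 : ∑' n : ℕ, f ((n:ℝ)+1) ≤ ∫ x in Ioi (0:ℝ), f x :=
      Summable.tsum_le_of_sum_range_le hsummable key
    rw [hIval] at h3
    refine h3.trans (le_of_eq ?_)
    have h4 : (-1:ℝ)/p = -(d:ℝ) := by rw [hp]; field_simp
    have h5 : (1:ℝ)/p = (d:ℝ) := by rw [hp]; field_simp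
    rw [h4, h5, Real.rpow_neg hb.le, mul_comm]
    congr 1
    congr 1
    exact Real.rpow_natCast b d

/-- For every integer `m ≥ d + 1` there is a locally bounded function
`α : (-π/2, π/2) → ℝ_{>0}` such that `|t^{m-1} Θ_D(t)| ≤ α(θ)` for every
`θ ∈ (-π/2, π/2)` and `t = r e^{iθ}` with `r > 0`. -/
theorem stmt_3 (d : ℕ) (hd : 0 < d) (lam : ℕ → ℝ) (hpos : ∀ n, 0 < lam n)
    (hmono : Monotone lam) (L : ℝ) (hL : 0 < L)
    (hweyl : Tendsto (fun n : ℕ => lam n / (((n : ℝ) + 1) ^ ((2 : ℝ) / (d : ℝ))))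
      atTop (𝓝 L))
    (m : ℕ) (hm : d + 1 ≤ m) :
    ∃ α : ℝ → ℝ,
      (∀ θ ∈ Set.Ioo (-(π / 2)) (π / 2), 0 < α θ) ∧
      (∀ K : Set ℝ, K ⊆ Set.Ioo (-(π / 2)) (π / 2) → IsCompact K →
        ∃ M : ℝ, ∀ θ ∈ K, |α θ| ≤ M) ∧
      ∀ θ ∈ Set.Ioo (-(π / 2)) (π / 2), ∀ r : ℝ, 0 < r →
        ‖((r : ℂ) * Complex.exp ((θ : ℂ) * Complex.I)) ^ (m - 1) *
            ∑' n : ℕ, Complex.exp (-(Real.sqrt (lam n) : ℂ) *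
              ((r : ℂ) * Complex.exp ((θ : ℂ) * Complex.I)))‖ ≤ α θ := by
  -- Step 1: a uniform lower bound for √(lam n)
  obtain ⟨c', hc', hrho⟩ : ∃ c' : ℝ, 0 < c' ∧
      ∀ n : ℕ, c' * ((n:ℝ)+1) ^ ((1:ℝ)/(d:ℝ)) ≤ Real.sqrt (lam n) := by
    obtain ⟨N, hN⟩ : ∃ N : ℕ, ∀ n ≥ N, L/2 ≤ lam n / (((n:ℝ)+1) ^ ((2:ℝ)/(d:ℝ))) :=
      eventually_atTop.1 (hweyl.eventually_const_le (half_lt_self hL))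
    have hdR : (0:ℝ) < (d:ℝ) := by exact_mod_cast hd
    set c₂ : ℝ := min (L/2) (lam 0 / (((N:ℝ)+1) ^ ((2:ℝ)/(d:ℝ)))) with hc₂def
    have hc₂ : 0 < c₂ := lt_min (half_pos hL) (div_pos (hpos 0) (by positivity))
    have hlow : ∀ n : ℕ, c₂ * ((n:ℝ)+1) ^ ((2:ℝ)/(d:ℝ)) ≤ lam n := by
      intro n
      have hpow : (0:ℝ) < ((n:ℝ)+1) ^ ((2:ℝ)/(d:ℝ)) := by positivity
      rcases le_or_gt N n with h | h
      · have h1 : L/2 * (((n:ℝ)+1) ^ ((2:ℝ)/(d:ℝ))) ≤ lam n := by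
          rw [← le_div_iff₀ hpow]; exact hN n h
        calc c₂ * ((n:ℝ)+1) ^ ((2:ℝ)/(d:ℝ))
            ≤ L/2 * ((n:ℝ)+1) ^ ((2:ℝ)/(d:ℝ)) :=
              mul_le_mul_of_nonneg_right (min_le_left _ _) hpow.le
          _ ≤ lam n := h1
      · have h1 : lam 0 ≤ lam n := hmono (Nat.zero_le n)
        have hpowN : (0:ℝ) < ((N:ℝ)+1) ^ ((2:ℝ)/(d:ℝ)) := by positivity
        have hcast : ((n:ℝ)+1) ≤ ((N:ℝ)+1) := by
          have : (n:ℝ) ≤ (N:ℝ) := by exact_mod_cast h.le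
          linarith
        have hpowmono : ((n:ℝ)+1) ^ ((2:ℝ)/(d:ℝ)) ≤ ((N:ℝ)+1) ^ ((2:ℝ)/(d:ℝ)) :=
          Real.rpow_le_rpow (by positivity) hcast (by positivity)
        calc c₂ * ((n:ℝ)+1) ^ ((2:ℝ)/(d:ℝ))
            ≤ (lam 0 / ((N:ℝ)+1) ^ ((2:ℝ)/(d:ℝ))) * ((N:ℝ)+1) ^ ((2:ℝ)/(d:ℝ)) := by
              apply mul_le_mul (min_le_right _ _) hpowmono hpow.le
              exact le_of_lt (div_pos (hpos 0) hpowN)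
          _ = lam 0 := div_mul_cancel₀ _ hpowN.ne'
          _ ≤ lam n := h1
    refine ⟨Real.sqrt c₂, Real.sqrt_pos.2 hc₂, fun n => ?_⟩
    have h1 := Real.sqrt_le_sqrt (hlow n)
    rw [Real.sqrt_mul hc₂.le] at h1
    refine le_trans (le_of_eq ?_) h1
    congr 1
    rw [Real.sqrt_eq_rpow, ← Real.rpow_mul (by positivity)]
    congr 1
    field_simp
  -- notation
  set ρ₀ : ℝ := Real.sqrt (lam 0) with hρ₀def
  have hρ₀ : 0 < ρ₀ := Real.sqrt_pos.2 (hpos 0)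
  set k : ℕ := m - 1 - d with hkdef
  have hmk : m - 1 = k + d := by omega
  have hΓ : 0 < Real.Gamma ((d:ℝ) + 1) := Real.Gamma_pos_of_pos (by positivity)
  set A₀ : ℝ := ((Nat.factorial k : ℝ)) * (2/ρ₀)^k * Real.Gamma ((d:ℝ) + 1) * (2/c')^d with hA₀def
  have hA₀ : 0 < A₀ := by
    apply mul_pos
    apply mul_pos
    apply mul_pos
    · exact_mod_cast Nat.factorial_pos k
    · positivity
    · exact hΓ
    · positivity
  refine ⟨fun θ => A₀ / (Real.cos θ) ^ (m-1), ?_, ?_, ?_⟩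
  · intro θ hθ
    have hc : 0 < Real.cos θ := Real.cos_pos_of_mem_Ioo hθ
    positivity
  · intro K hK hKc
    have hcont : ContinuousOn (fun θ => A₀ / (Real.cos θ) ^ (m-1)) K := by
      refine ContinuousOn.div continuousOn_const
        ((Real.continuous_cos.pow (m-1)).continuousOn) (fun x hx => ?_)
      exact pow_ne_zero _ (ne_of_gt (Real.cos_pos_of_mem_Ioo (hK hx)))
    obtain ⟨M, hM⟩ := hKc.exists_bound_of_continuousOn hcont
    exact ⟨M, fun θ hθ => by rw [← Real.norm_eq_abs]; exact hM θ hθ⟩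
  · intro θ hθ r hr
    have hc : 0 < Real.cos θ := Real.cos_pos_of_mem_Ioo hθ
    set c : ℝ := Real.cos θ with hcdef
    set t : ℂ := (r:ℂ) * Complex.exp ((θ:ℂ) * Complex.I) with htdef
    have hterm : ∀ x : ℝ, ‖Complex.exp (-(x:ℂ) * t)‖ = Real.exp (-(x * (r * c))) := by
      intro x
      rw [Complex.norm_exp]
      congr 1
      simp [htdef, Complex.mul_re, Complex.exp_ofReal_mul_I_re, Complex.exp_ofReal_mul_I_im,
        hcdef]
    have hpownorm : ‖t ^ (m-1)‖ = r ^ (m-1) := by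
      rw [norm_pow, htdef, norm_mul, Complex.norm_exp,
        Complex.norm_real, Real.norm_eq_abs, abs_of_pos hr]
      simp
    -- the comparison series
    set b : ℝ := c' * (r * c) / 2 with hbdef
    have hb : 0 < b := by positivity
    obtain ⟨hGsum', hGle⟩ := sum_exp_le d hd hb
    set F : ℕ → ℝ := fun n => Real.exp (-(Real.sqrt (lam n) * (r * c))) with hFdef
    set G : ℕ → ℝ := fun n =>
      Real.exp (-(ρ₀ * (r * c) / 2)) * Real.exp (-(b * ((n:ℝ)+1) ^ ((1:ℝ)/(d:ℝ)))) with hGdef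
    have hFG : ∀ n, F n ≤ G n := by
      intro n
      simp only [hGdef, hFdef, ← Real.exp_add]
      apply Real.exp_le_exp.2
      have h1 : ρ₀ ≤ Real.sqrt (lam n) := Real.sqrt_le_sqrt (hmono (Nat.zero_le n))
      have h2 := hrho n
      have hrc : (0:ℝ) < r * c := by positivity
      have := mul_le_mul_of_nonneg_right h1 hrc.le
      have := mul_le_mul_of_nonneg_right h2 hrc.le
      rw [hbdef]
      nlinarith
    have hGsum : Summable G := hGsum'.mul_left _
    have hFpos : ∀ n, (0:ℝ) ≤ F n := fun n => (Real.exp_pos _).le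
    have hFsum : Summable F := hGsum.of_nonneg_of_le hFpos hFG
    have hnormF : ∀ n : ℕ, ‖Complex.exp (-(Real.sqrt (lam n) : ℂ) * t)‖ = F n := by
      intro n; rw [hterm (Real.sqrt (lam n))]
    have hCsum : Summable (fun n : ℕ => Complex.exp (-(Real.sqrt (lam n) : ℂ) * t)) := by
      refine Summable.of_norm ?_
      simpa only [hnormF] using hFsum
    have hnorm1 : ‖∑' n : ℕ, Complex.exp (-(Real.sqrt (lam n) : ℂ) * t)‖ ≤ ∑' n, F n := by
      refine (norm_tsum_le_tsum_norm ?_).trans (le_of_eq ?_)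
      · simpa only [hnormF] using hFsum
      · exact tsum_congr hnormF
    have hGval : ∑' n, G n
        = Real.exp (-(ρ₀ * (r * c) / 2)) * ∑' n : ℕ, Real.exp (-(b * ((n:ℝ)+1) ^ ((1:ℝ)/(d:ℝ)))) :=
      tsum_mul_left
    -- key pointwise exponential bound
    have key1 : r^k * Real.exp (-(ρ₀ * (r * c) / 2)) ≤ ((Nat.factorial k : ℝ)) * (2/(ρ₀ * c))^k := by
      set x : ℝ := ρ₀ * (r * c) / 2 with hxdef
      have hx0 : (0:ℝ) < x := by positivity
      have h1 : x^k / (Nat.factorial k : ℝ) ≤ Real.exp x := by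
        calc x^k / (Nat.factorial k : ℝ) ≤ ∑ i ∈ Finset.range (k+1), x^i / (Nat.factorial i : ℝ) := by
              refine Finset.single_le_sum (f := fun i => x^i / (Nat.factorial i : ℝ)) (fun i _ => by positivity)
                (Finset.self_mem_range_succ k)
          _ ≤ Real.exp x := Real.sum_le_exp_of_nonneg hx0.le _
      have h2 : x^k ≤ (Nat.factorial k : ℝ) * Real.exp x := by
        rw [div_le_iff₀ (by exact_mod_cast Nat.factorial_pos k)] at h1
        linarith [h1]
      have h3 : r^k = x^k * (2/(ρ₀ * c))^k := by
        rw [← mul_pow]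
        congr 1
        rw [hxdef]
        field_simp
      rw [Real.exp_neg, h3]
      calc x^k * (2/(ρ₀*c))^k * (Real.exp x)⁻¹
          ≤ ((Nat.factorial k : ℝ) * Real.exp x) * (2/(ρ₀*c))^k * (Real.exp x)⁻¹ := by
            have hnn : (0:ℝ) ≤ (2/(ρ₀*c))^k * (Real.exp x)⁻¹ := by positivity
            nlinarith [mul_le_mul_of_nonneg_right h2 hnn]
        _ = (Nat.factorial k : ℝ) * (2/(ρ₀*c))^k := by
            field_simp
      -- done
    have key2 : r^d * ((b ^ (d:ℕ))⁻¹) = (2/(c' * c))^d := by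
      rw [← div_eq_mul_inv, ← div_pow]
      congr 1
      rw [hbdef]
      field_simp
    -- assemble
    rw [norm_mul, hpownorm]
    calc r ^ (m-1) * ‖∑' n : ℕ, Complex.exp (-(Real.sqrt (lam n) : ℂ) * t)‖
        ≤ r ^ (m-1) * ∑' n, F n := by
          exact mul_le_mul_of_nonneg_left hnorm1 (by positivity)
      _ ≤ r ^ (m-1) * ∑' n, G n := by
          refine mul_le_mul_of_nonneg_left (Summable.tsum_le_tsum hFG hFsum hGsum) (by positivity)
      _ ≤ r ^ (m-1) * (Real.exp (-(ρ₀ * (r * c) / 2)) * (Real.Gamma ((d:ℝ)+1) * (b ^ (d:ℕ))⁻¹)) := by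
          rw [hGval]
          refine mul_le_mul_of_nonneg_left ?_ (by positivity)
          exact mul_le_mul_of_nonneg_left hGle (Real.exp_pos _).le
      _ = (r^k * Real.exp (-(ρ₀ * (r * c) / 2))) * Real.Gamma ((d:ℝ)+1) * (r^d * (b ^ (d:ℕ))⁻¹) := by
          rw [hmk, pow_add]
          ring
      _ ≤ (((Nat.factorial k : ℝ)) * (2/(ρ₀ * c))^k) * Real.Gamma ((d:ℝ)+1) * (2/(c' * c))^d := by
          rw [key2]
          refine mul_le_mul_of_nonneg_right
            (mul_le_mul_of_nonneg_right key1 hΓ.le) (by positivity)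
      _ = A₀ / c ^ (m-1) := by
          rw [hA₀def, hmk, pow_add]
          rw [div_pow, div_pow, div_pow, div_pow]
          rw [mul_pow, mul_pow]
          field_simp
end

section
/- Let d be a positive integer and (λ_n)_{n≥1} a nondecreasing sequence of positive real numbers with λ_n/n^{2/d} → L as n → ∞ for some L > 0, and let Θ(t) = Σ_{n≥1} e^{−λ_n t}. Then for every integer m′ ≥ ⌊d/2⌋ + 1, every θ ∈ (−π/2, π/2), and every λ ∈ ℂ with Re(λ e^{iθ}) > 0, the improper integral ∫_0^{e^{iθ}∞} (−t)^{m′−1} Θ(t) e^{−λ t} dt over the ray {r e^{iθ} : r > 0} converges absolutely and equals Σ_{n≥1} (−1)^{m′−1} (m′−1)! / (λ + λ_n)^{m′}, the series on the right converging absolutely. -/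
open Filter MeasureTheory Set
open scoped Topology Real

open scoped ENNReal NNReal

lemma intOn_pow_exp (k : ℕ) {b : ℝ} (hb : 0 < b) :
    IntegrableOn (fun r : ℝ => r ^ k * Real.exp (-b * r)) (Ioi 0) := by
  have := integrableOn_rpow_mul_exp_neg_mul_rpow (p := 1) (s := (k:ℝ))
    (by exact_mod_cast neg_one_lt_zero.trans_le (Nat.cast_nonneg k)) zero_lt_one hb
  refine this.congr_fun (fun x hx => ?_) measurableSet_Ioi
  beta_reduce
  rw [Real.rpow_natCast, Real.rpow_one]

lemma tendsto_pow_exp (k : ℕ) {b : ℝ} (hb : 0 < b) :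
    Tendsto (fun r : ℝ => r ^ k * Real.exp (-b * r)) atTop (𝓝 0) := by
  have h1 : Tendsto (fun r : ℝ => b * r) atTop atTop :=
    Tendsto.const_mul_atTop hb tendsto_id
  have h2 := (Real.tendsto_pow_mul_exp_neg_atTop_nhds_zero k).comp h1
  have h3 : Tendsto (fun r : ℝ => (1 / b ^ k) * ((b * r) ^ k * Real.exp (-(b * r))))
      atTop (𝓝 ((1 / b ^ k) * 0)) := h2.const_mul _
  rw [mul_zero] at h3
  refine h3.congr fun r => ?_
  rw [mul_pow]
  field_simp

lemma norm_pow_exp (k : ℕ) (b : ℂ) {r : ℝ} (hr : 0 ≤ r) :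
    ‖(r : ℂ) ^ k * Complex.exp (-b * r)‖ = r ^ k * Real.exp (-b.re * r) := by
  simp only [norm_mul, norm_pow, Complex.norm_real, Real.norm_eq_abs, Complex.norm_exp,
    abs_of_nonneg hr]
  congr 2
  simp [Complex.mul_re]

lemma intOn_pow_exp_c (k : ℕ) {b : ℂ} (hb : 0 < b.re) :
    IntegrableOn (fun r : ℝ => (r : ℂ) ^ k * Complex.exp (-b * r)) (Ioi 0) := by
  refine (intOn_pow_exp k hb).integrable.mono' ?_ ?_
  · apply Measurable.aestronglyMeasurable
    fun_prop
  · filter_upwards [ae_restrict_mem measurableSet_Ioi] with r hr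
    rw [norm_pow_exp k b (le_of_lt hr)]

lemma tendsto_pow_exp_c (k : ℕ) {b : ℂ} (hb : 0 < b.re) :
    Tendsto (fun r : ℝ => (r : ℂ) ^ k * Complex.exp (-b * r)) atTop (𝓝 0) := by
  rw [tendsto_zero_iff_norm_tendsto_zero]
  have := tendsto_pow_exp k hb
  refine this.congr' ?_
  filter_upwards [eventually_ge_atTop (0:ℝ)] with r hr
  rw [norm_pow_exp k b hr]

lemma hasDerivAt_pow_exp (k : ℕ) (b : ℂ) (r : ℝ) :
    HasDerivAt (fun r : ℝ => (r : ℂ) ^ (k + 1) * Complex.exp (-b * r))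
      (((k : ℂ) + 1) * (r : ℂ) ^ k * Complex.exp (-b * r)
        - b * ((r : ℂ) ^ (k + 1) * Complex.exp (-b * r))) r := by
  have h : HasDerivAt (fun z : ℂ => z ^ (k + 1) * Complex.exp (-b * z))
      (((k : ℂ) + 1) * (r : ℂ) ^ k * Complex.exp (-b * r)
        - b * ((r : ℂ) ^ (k + 1) * Complex.exp (-b * r))) (r : ℂ) := by
    have h1 : HasDerivAt (fun z : ℂ => z ^ (k + 1)) (((k:ℂ)+1) * (r:ℂ) ^ k) (r:ℂ) := by
      simpa using hasDerivAt_pow (k+1) (r:ℂ)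
    have h2 : HasDerivAt (fun z : ℂ => Complex.exp (-b * z)) (-b * Complex.exp (-b * r)) (r:ℂ) := by
      have := (Complex.hasDerivAt_exp (-b * r)).comp (r:ℂ)
        ((hasDerivAt_id (r:ℂ)).const_mul (-b))
      simp only [Function.comp_def, mul_one] at this
      exact this.congr_deriv (by ring)
    have := h1.mul h2
    exact this.congr_deriv (by ring)
  exact h.comp_ofReal

lemma integral_pow_exp_c (k : ℕ) {b : ℂ} (hb : 0 < b.re) :
    ∫ r in Ioi (0:ℝ), (r : ℂ) ^ k * Complex.exp (-b * r) = (Nat.factorial k : ℂ) / b ^ (k + 1) := by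
  have hbne : b ≠ 0 := fun h => by simp [h] at hb
  induction k with
  | zero =>
    have hderiv : ∀ x ∈ Ioi (0:ℝ), HasDerivAt (fun r : ℝ => -Complex.exp (-b * r) / b)
        ((x:ℂ) ^ 0 * Complex.exp (-b * x)) x := by
      intro x _
      have h2 : HasDerivAt (fun z : ℂ => -Complex.exp (-b * z) / b)
          (Complex.exp (-b * x)) (x:ℂ) := by
        have := ((Complex.hasDerivAt_exp (-b * x)).comp (x:ℂ)
          ((hasDerivAt_id (x:ℂ)).const_mul (-b))).neg.div_const b
        simp only [Function.comp_def, mul_one, neg_mul] at this ⊢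
        refine this.congr_deriv ?_
        field_simp
      simpa using h2.comp_ofReal
    have hcont : ContinuousWithinAt (fun r : ℝ => -Complex.exp (-b * r) / b) (Ici 0) 0 := by
      apply Continuous.continuousWithinAt
      fun_prop
    have htend : Tendsto (fun r : ℝ => -Complex.exp (-b * r) / b) atTop (𝓝 0) := by
      have := (tendsto_pow_exp_c 0 hb).neg.div_const b
      simpa using this
    have := integral_Ioi_of_hasDerivAt_of_tendsto hcont hderiv
      ((intOn_pow_exp_c 0 hb).congr_fun (fun x hx => by simp) measurableSet_Ioi) htend
    rw [this]
    simp [Nat.factorial]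
    rw [neg_div, neg_neg, one_div]
  | succ k ih =>
    have hderiv : ∀ x ∈ Ioi (0:ℝ), HasDerivAt (fun r : ℝ => (r : ℂ) ^ (k + 1) * Complex.exp (-b * r))
        (((k : ℂ) + 1) * ((x : ℂ) ^ k * Complex.exp (-b * x))
          - b * ((x : ℂ) ^ (k + 1) * Complex.exp (-b * x))) x := by
      intro x _
      have := hasDerivAt_pow_exp k b x
      convert this using 1
      ring
    have hint : IntegrableOn (fun x : ℝ => ((k : ℂ) + 1) * ((x : ℂ) ^ k * Complex.exp (-b * x))
        - b * ((x : ℂ) ^ (k + 1) * Complex.exp (-b * x))) (Ioi 0) :=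
      (((intOn_pow_exp_c k hb).const_mul _).sub ((intOn_pow_exp_c (k+1) hb).const_mul _))
    have hcont : ContinuousWithinAt (fun r : ℝ => (r : ℂ) ^ (k + 1) * Complex.exp (-b * r))
        (Ici 0) 0 := by
      apply Continuous.continuousWithinAt
      fun_prop
    have h0 := integral_Ioi_of_hasDerivAt_of_tendsto hcont hderiv hint (tendsto_pow_exp_c (k+1) hb)
    rw [integral_sub ((intOn_pow_exp_c k hb).const_mul _) ((intOn_pow_exp_c (k+1) hb).const_mul _),
      integral_const_mul, integral_const_mul, ih,
      show (((0:ℝ):ℂ))^(k+1) * Complex.exp (-b * ((0:ℝ):ℂ)) = 0 by simp] at h0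
    have h1 : b * ∫ r in Ioi (0:ℝ), (r:ℂ)^(k+1) * Complex.exp (-b * r)
        = ((k:ℂ)+1) * ((Nat.factorial k : ℂ) / b ^ (k+1)) := by
      linear_combination -h0
    have hI : ∫ r in Ioi (0:ℝ), (r:ℂ)^(k+1) * Complex.exp (-b * r)
        = ((k:ℂ)+1) * ((Nat.factorial k : ℂ) / b ^ (k+1)) / b := by
      rw [eq_div_iff hbne, mul_comm]
      exact h1
    rw [hI, Nat.factorial_succ]
    push_cast
    rw [mul_div_assoc, div_div, ← pow_succ, mul_div_assoc]

lemma integral_pow_exp_r (k : ℕ) {b : ℝ} (hb : 0 < b) :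
    ∫ r in Ioi (0:ℝ), r ^ k * Real.exp (-b * r) = (Nat.factorial k : ℝ) / b ^ (k + 1) := by
  have h := integral_pow_exp_c k (b := (b:ℂ)) (by simpa using hb)
  have h2 : ∫ r in Ioi (0:ℝ), (r:ℂ) ^ k * Complex.exp (-(b:ℂ) * r)
      = ((∫ r in Ioi (0:ℝ), r ^ k * Real.exp (-b * r) : ℝ) : ℂ) := by
    rw [show ((∫ r in Ioi (0:ℝ), r ^ k * Real.exp (-b * r) : ℝ) : ℂ)
        = ∫ r in Ioi (0:ℝ), ((r ^ k * Real.exp (-b * r) : ℝ) : ℂ) from (integral_ofReal).symm]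
    refine integral_congr_ae (Eventually.of_forall fun r => ?_)
    push_cast [Complex.ofReal_exp]
    ring_nf
  rw [h2] at h
  have : ((∫ r in Ioi (0:ℝ), r ^ k * Real.exp (-b * r) : ℝ) : ℂ)
      = (((Nat.factorial k : ℝ) / b ^ (k+1) : ℝ) : ℂ) := by
    rw [h]; push_cast; ring
  exact_mod_cast this

lemma summable_helper {d : ℕ} (hd : 0 < d) {lam : ℕ → ℝ} (hpos : ∀ n, 0 < lam n)
    {L : ℝ} (hL : 0 < L)
    (hweyl : Tendsto (fun n : ℕ => lam n / (((n : ℝ) + 1) ^ ((2 : ℝ) / (d : ℝ)))) atTop (𝓝 L))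
    {p : ℕ} (hp : d < 2 * p) {A c : ℝ} (hA : 0 ≤ A) (hc : 0 < c) :
    Summable (fun n : ℕ => 1 / (A + c * lam n) ^ p) := by
  have hev : ∀ᶠ n : ℕ in atTop, L / 2 ≤ lam n / (((n : ℝ) + 1) ^ ((2 : ℝ) / (d : ℝ))) :=
    hweyl.eventually (eventually_ge_nhds (by linarith))
  obtain ⟨N, hN⟩ := eventually_atTop.mp hev
  have hdR : (0:ℝ) < (d:ℝ) := by exact_mod_cast hd
  have hpR : (d:ℝ) < 2 * (p:ℕ) := by exact_mod_cast hp
  have hq : (1:ℝ) < (2 / (d:ℝ)) * p := by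
    rw [div_mul_eq_mul_div, lt_div_iff₀ hdR]
    linarith
  have hbase : Summable (fun n : ℕ => 1 / ((n:ℝ) + 1) ^ ((2 / (d:ℝ)) * p)) := by
    have := (Real.summable_one_div_nat_rpow (p := (2 / (d:ℝ)) * p)).mpr hq
    have h2 := (summable_nat_add_iff (f := fun n : ℕ => 1 / (n:ℝ) ^ ((2 / (d:ℝ)) * p)) 1).mpr this
    refine h2.congr fun n => ?_
    push_cast
    ring_nf
  rw [← summable_nat_add_iff N]
  refine Summable.of_nonneg_of_le
    (fun n => by have := hpos (n + N); positivity)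
    (fun n => ?_) ((hbase.mul_left (1 / (c * (L/2)) ^ p)))
  have hpow : (0:ℝ) < (((n + N : ℕ):ℝ) + 1) ^ ((2:ℝ) / (d:ℝ)) := by positivity
  have h1 := hN (n + N) (by omega)
  rw [le_div_iff₀ hpow] at h1
  have h3 : ((n:ℝ) + 1) ^ ((2:ℝ) / (d:ℝ)) ≤ (((n + N : ℕ):ℝ) + 1) ^ ((2:ℝ) / (d:ℝ)) := by
    apply Real.rpow_le_rpow (by positivity) (by push_cast; linarith [Nat.cast_nonneg (α := ℝ) N]) (by positivity)
  have h4 : L/2 * (((n:ℝ) + 1) ^ ((2:ℝ)/(d:ℝ))) ≤ L/2 * ((((n + N : ℕ):ℝ) + 1) ^ ((2:ℝ)/(d:ℝ))) :=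
    mul_le_mul_of_nonneg_left h3 (by positivity)
  have h5 : L/2 * (((n:ℝ) + 1) ^ ((2:ℝ)/(d:ℝ))) ≤ lam (n + N) := h4.trans h1
  have h6 := mul_le_mul_of_nonneg_left h5 hc.le
  have hlow : c * (L / 2) * ((n:ℝ) + 1) ^ ((2:ℝ) / (d:ℝ)) ≤ A + c * lam (n + N) := by
    nlinarith
  calc 1 / (A + c * lam (n + N)) ^ p
      ≤ 1 / ((c * (L/2)) * ((n:ℝ) + 1) ^ ((2:ℝ)/(d:ℝ))) ^ p := by
        exact one_div_le_one_div_of_le (by positivity) (pow_le_pow_left₀ (by positivity) hlow p)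
    _ = (1 / (c * (L/2)) ^ p) * (1 / ((n:ℝ) + 1) ^ ((2 / (d:ℝ)) * p)) := by
        rw [mul_pow, ← Real.rpow_natCast (((n:ℝ)+1) ^ ((2:ℝ)/(d:ℝ))) p,
          ← Real.rpow_mul (by positivity)]
        ring

/-- The point `r e^{iθ}` of the ray of direction `θ`. -/
noncomputable def rayPt (θ r : ℝ) : ℂ := (r : ℂ) * Complex.exp ((θ : ℂ) * Complex.I)

/-- The unit direction `e^{iθ}`. -/
noncomputable def rayDir (θ : ℝ) : ℂ := Complex.exp ((θ : ℂ) * Complex.I)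

/-- For `m' ≥ ⌊d/2⌋ + 1`, `θ ∈ (-π/2, π/2)` and `Re(λ e^{iθ}) > 0`, the
Laplace integral of `(-t)^{m'-1} Θ(t)` along the ray of direction `θ` converges
absolutely and equals `Σ_{n≥1} (-1)^{m'-1} (m'-1)! / (λ + λ_n)^{m'}`, the series
converging absolutely. -/
theorem stmt_4 (d : ℕ) (hd : 0 < d) (lam : ℕ → ℝ) (hpos : ∀ n, 0 < lam n)
    (hmono : Monotone lam) (L : ℝ) (hL : 0 < L)
    (hweyl : Tendsto (fun n : ℕ => lam n / (((n : ℝ) + 1) ^ ((2 : ℝ) / (d : ℝ))))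
      atTop (𝓝 L))
    (m' : ℕ) (hm' : d / 2 + 1 ≤ m')
    (θ : ℝ) (hθ : θ ∈ Set.Ioo (-(π / 2)) (π / 2))
    (lambda : ℂ) (hlam : 0 < (lambda * rayDir θ).re) :
    IntegrableOn
      (fun r : ℝ =>
        (-(rayPt θ r)) ^ (m' - 1) *
          (∑' n : ℕ, Complex.exp (-(lam n : ℂ) * rayPt θ r)) *
          Complex.exp (-lambda * rayPt θ r) * rayDir θ)
      (Set.Ioi 0) ∧
    Summable (fun n : ℕ =>
      ‖(-1 : ℂ) ^ (m' - 1) * (Nat.factorial (m' - 1) : ℂ) / (lambda + (lam n : ℂ)) ^ m'‖) ∧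
    (∫ r in Set.Ioi (0 : ℝ),
        (-(rayPt θ r)) ^ (m' - 1) *
          (∑' n : ℕ, Complex.exp (-(lam n : ℂ) * rayPt θ r)) *
          Complex.exp (-lambda * rayPt θ r) * rayDir θ)
      = ∑' n : ℕ,
          (-1 : ℂ) ^ (m' - 1) * (Nat.factorial (m' - 1) : ℂ) / (lambda + (lam n : ℂ)) ^ m' := by
  obtain ⟨k, rfl⟩ : ∃ k, m' = k + 1 := ⟨m' - 1, by omega⟩
  simp only [Nat.add_sub_cancel]
  have hp2 : d < 2 * (k + 1) := by omega
  have hc : 0 < Real.cos θ := Real.cos_pos_of_mem_Ioo hθ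
  have he_re : (rayDir θ).re = Real.cos θ := by
    rw [rayDir, Complex.exp_mul_I]
    simp [Complex.cos_ofReal_re]
  have henorm : ‖rayDir θ‖ = 1 := by
    rw [rayDir, Complex.norm_exp]
    simp
  have hene : rayDir θ ≠ 0 := Complex.exp_ne_zero _
  -- the coefficient of the n-th term
  have hbre : ∀ n : ℕ, ((lambda + (lam n : ℂ)) * rayDir θ).re
      = (lambda * rayDir θ).re + Real.cos θ * lam n := by
    intro n
    rw [add_mul, Complex.add_re, Complex.re_ofReal_mul, he_re]
    ring
  have hb : ∀ n : ℕ, 0 < ((lambda + (lam n : ℂ)) * rayDir θ).re := by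
    intro n
    rw [hbre n]
    have := hpos n
    nlinarith
  have hne : ∀ n : ℕ, lambda + (lam n : ℂ) ≠ 0 := by
    intro n h
    have := hb n
    rw [h, zero_mul] at this
    simp at this
  set G : ℕ → ℝ → ℂ := fun n r =>
    ((-1 : ℂ) ^ k * (rayDir θ) ^ (k + 1)) *
      ((r : ℂ) ^ k * Complex.exp (-((lambda + (lam n : ℂ)) * rayDir θ) * r)) with hGdef
  have hGi : ∀ n, IntegrableOn (G n) (Ioi 0) := fun n =>
    ((intOn_pow_exp_c k (hb n)).const_mul _)
  have hGval : ∀ n, (∫ r in Ioi (0:ℝ), G n r)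
      = (-1 : ℂ) ^ k * (Nat.factorial k : ℂ) / (lambda + (lam n : ℂ)) ^ (k + 1) := by
    intro n
    rw [hGdef]
    rw [MeasureTheory.integral_const_mul, integral_pow_exp_c k (hb n), mul_pow]
    have h1 : (lambda + (lam n : ℂ)) ^ (k+1) ≠ 0 := pow_ne_zero _ (hne n)
    have h2 : (rayDir θ) ^ (k+1) ≠ 0 := pow_ne_zero _ hene
    field_simp
    try ring
  have hGnorm : ∀ n, (∫ r in Ioi (0:ℝ), ‖G n r‖)
      = (Nat.factorial k : ℝ) / ((lambda * rayDir θ).re + Real.cos θ * lam n) ^ (k + 1) := by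
    intro n
    rw [← hbre n, ← integral_pow_exp_r k (hb n)]
    refine setIntegral_congr_fun measurableSet_Ioi fun r hr => ?_
    rw [hGdef]
    simp only
    rw [norm_mul, norm_mul, norm_pow, norm_pow, norm_neg, norm_one, one_pow, henorm, one_pow,
      one_mul, one_mul, norm_pow_exp k _ (le_of_lt hr)]
    try norm_num
  have hsumInt : Summable (fun n => ∫ r in Ioi (0:ℝ), ‖G n r‖) := by
    have h := (summable_helper hd hpos hL hweyl hp2 (le_of_lt hlam) hc).mul_left
      (Nat.factorial k : ℝ)
    refine h.congr fun n => ?_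
    rw [hGnorm n]
    ring
  -- pointwise identity between the integrand and the series of G's
  have heq : (fun r : ℝ =>
        (-(rayPt θ r)) ^ k *
          (∑' n : ℕ, Complex.exp (-(lam n : ℂ) * rayPt θ r)) *
          Complex.exp (-lambda * rayPt θ r) * rayDir θ)
      = fun r : ℝ => ∑' n : ℕ, G n r := by
    funext r
    have step1 : ∀ n : ℕ, G n r = Complex.exp (-(lam n : ℂ) * rayPt θ r) *
        ((-(rayPt θ r)) ^ k * Complex.exp (-lambda * rayPt θ r) * rayDir θ) := by
      intro n
      rw [hGdef]
      simp only
      have hexp : Complex.exp (-((lambda + (lam n : ℂ)) * rayDir θ) * r)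
          = Complex.exp (-(lam n : ℂ) * rayPt θ r) * Complex.exp (-lambda * rayPt θ r) := by
        rw [← Complex.exp_add]
        congr 1
        rw [rayPt, rayDir]
        ring
      rw [hexp, rayPt, rayDir]
      ring
    rw [tsum_congr step1, tsum_mul_right]
    ring
  rw [heq]
  -- integrability of the sum
  have hint : IntegrableOn (fun r : ℝ => ∑' n : ℕ, G n r) (Ioi 0) := by
    set μ := volume.restrict (Ioi (0:ℝ)) with hμ
    have hGmeas : ∀ n, AEStronglyMeasurable (G n) μ := fun n => (hGi n).aestronglyMeasurable
    have hsum_r : ∀ r : ℝ, 0 < r → Summable (fun n => ‖G n r‖) := by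
      intro r hr
      have hcr : 0 < Real.cos θ * r := by positivity
      have h := (summable_helper hd hpos hL hweyl hp2 (le_refl (0:ℝ))
        hcr).mul_left (r ^ k * (Nat.factorial (k+1) : ℝ))
      refine Summable.of_nonneg_of_le (fun n => norm_nonneg _) (fun n => ?_) h
      rw [hGdef]
      simp only
      rw [norm_mul, norm_mul, norm_pow, norm_pow, norm_neg, norm_one, one_pow, henorm, one_pow,
        one_mul, one_mul, norm_pow_exp k _ (le_of_lt hr)]
      have hy : 0 < Real.cos θ * r * lam n := by have := hpos n; positivity
      set y := Real.cos θ * r * lam n with hydef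
      have h8 := Real.pow_div_factorial_le_exp (x := y) (le_of_lt hy) (k+1)
      have h9 : Real.exp (-y) ≤ (Nat.factorial (k+1) : ℝ) / y ^ (k+1) := by
        rw [Real.exp_neg, inv_eq_one_div, div_le_div_iff₀ (Real.exp_pos y) (by positivity)]
        have h10 := (div_le_iff₀ (by positivity : (0:ℝ) < (Nat.factorial (k+1) : ℝ))).mp h8
        nlinarith [h10]
      have hmono2 : Real.exp (-(((lambda + (lam n : ℂ)) * rayDir θ).re) * r) ≤ Real.exp (-y) := by
        apply Real.exp_le_exp.mpr
        rw [hbre n, hydef]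
        nlinarith [hlam, hpos n, hr, hc]
      calc r ^ k * Real.exp (-(((lambda + (lam n : ℂ)) * rayDir θ).re) * r)
          ≤ r ^ k * ((Nat.factorial (k+1) : ℝ) / y ^ (k+1)) := by
            apply mul_le_mul_of_nonneg_left (hmono2.trans h9) (by positivity)
        _ = r ^ k * (Nat.factorial (k+1) : ℝ) * (1 / (0 + Real.cos θ * r * lam n) ^ (k+1)) := by
            rw [zero_add, hydef]
            ring
    have haesm : AEStronglyMeasurable (fun r => ∑' n, G n r) μ := by
      refine aestronglyMeasurable_of_tendsto_ae atTop
        (f := fun N r => ∑ n ∈ Finset.range N, G n r)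
        (fun N => Finset.aestronglyMeasurable_fun_sum _ fun n _ => hGmeas n) ?_
      filter_upwards [ae_restrict_mem measurableSet_Ioi] with r hr
      exact ((hsum_r r hr).of_norm).hasSum.tendsto_sum_nat
    refine ⟨haesm, ?_⟩
    show (∫⁻ r, (‖(∑' n : ℕ, G n r)‖₊ : ℝ≥0∞) ∂μ) < ⊤
    calc ∫⁻ r, (‖(∑' n : ℕ, G n r)‖₊ : ℝ≥0∞) ∂μ
        ≤ ∫⁻ r, ∑' n, (‖G n r‖₊ : ℝ≥0∞) ∂μ := by
          apply lintegral_mono_ae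
          filter_upwards [ae_restrict_mem measurableSet_Ioi] with r hr
          have hnn : Summable (fun n => ‖G n r‖₊) := by
            rw [← NNReal.summable_coe]
            simpa [coe_nnnorm] using hsum_r r hr
          calc (‖(∑' n : ℕ, G n r)‖₊ : ℝ≥0∞) ≤ ((∑' n, ‖G n r‖₊ : ℝ≥0) : ℝ≥0∞) :=
                ENNReal.coe_le_coe.mpr (nnnorm_tsum_le hnn)
            _ = ∑' n, (‖G n r‖₊ : ℝ≥0∞) := ENNReal.coe_tsum hnn
      _ = ∑' n, ∫⁻ r, (‖G n r‖₊ : ℝ≥0∞) ∂μ := lintegral_tsum fun n => (hGmeas n).enorm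
      _ = ∑' n, ENNReal.ofReal (∫ r, ‖G n r‖ ∂μ) := by
          refine tsum_congr fun n => ?_
          rw [ofReal_integral_eq_lintegral_ofReal (hGi n).norm
            (Eventually.of_forall fun r => norm_nonneg _)]
          refine lintegral_congr fun r => ?_
          exact (ofReal_norm (G n r)).symm
      _ = ENNReal.ofReal (∑' n, ∫ r, ‖G n r‖ ∂μ) := by
          rw [ENNReal.ofReal_tsum_of_nonneg (fun n => integral_nonneg fun r => norm_nonneg _)
            hsumInt]
      _ < ⊤ := ENNReal.ofReal_lt_top
  refine ⟨hint, ?_, ?_⟩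
  · -- summability of the norms of the closed forms
    refine Summable.of_nonneg_of_le (fun n => norm_nonneg _) (fun n => ?_)
      (hsumInt.congr fun n => (hGnorm n))
    have hle : (lambda * rayDir θ).re + Real.cos θ * lam n ≤ ‖lambda + (lam n : ℂ)‖ := by
      have h1 : ((lambda + (lam n : ℂ)) * rayDir θ).re ≤ ‖(lambda + (lam n : ℂ)) * rayDir θ‖ :=
        Complex.re_le_norm _
      rw [norm_mul, henorm, mul_one] at h1
      rw [← hbre n]
      exact h1
    have hβ : 0 < (lambda * rayDir θ).re + Real.cos θ * lam n := by
      rw [← hbre n]; exact hb n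
    have hX : (0:ℝ) < ‖lambda + (lam n : ℂ)‖ ^ (k+1) :=
      pow_pos (norm_pos_iff.mpr (hne n)) _
    have hpow : ((lambda * rayDir θ).re + Real.cos θ * lam n) ^ (k+1)
        ≤ ‖lambda + (lam n : ℂ)‖ ^ (k+1) := pow_le_pow_left₀ hβ.le hle _
    rw [norm_div, norm_mul, norm_pow, norm_pow, norm_neg, norm_one, one_pow, one_mul,
      Complex.norm_natCast, div_le_div_iff₀ hX (by positivity)]
    exact mul_le_mul_of_nonneg_left hpow (by positivity)
  · rw [← integral_tsum_of_summable_integral_norm hGi hsumInt]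
    exact tsum_congr hGval
end

section
/- Let d be a positive integer and (λ_n)_{n≥1} a nondecreasing sequence of positive real numbers with λ_n/n^{2/d} → L as n → ∞ for some L > 0; set ρ_n = √λ_n and Θ_D(t) = Σ_{n≥1} e^{−ρ_n t}. Then for every integer m ≥ d + 1, every θ ∈ (−π/2, π/2), and every ρ ∈ ℂ with Re(ρ e^{iθ}) > 0, the improper integral ∫_0^{e^{iθ}∞} (−t)^{m−1} Θ_D(t) e^{−ρ t} dt over the ray {r e^{iθ} : r > 0} converges absolutely and equals Σ_{n≥1} (−1)^{m−1} (m−1)! / (ρ + ρ_n)^{m}, the series on the right converging absolutely. -/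
open Filter MeasureTheory Set
open scoped Topology Real

section Aux

lemma lapR_integrable (k : ℕ) {b : ℝ} (hb : 0 < b) :
    IntegrableOn (fun r : ℝ => r ^ k * Real.exp (-(b * r))) (Ioi 0) := by
  apply integrable_of_isBigO_exp_neg (a := 0) (b := b / 2) (by positivity)
    (Continuous.continuousOn (by continuity))
  rw [Asymptotics.isBigO_iff]
  refine ⟨1, ?_⟩
  have h0 : Tendsto (fun r : ℝ => r ^ (k : ℝ) * Real.exp (-(b / 2) * r)) atTop (𝓝 0) :=
    tendsto_rpow_mul_exp_neg_mul_atTop_nhds_zero k (b / 2) (by positivity)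
  have h1 : ∀ᶠ r : ℝ in atTop, r ^ (k : ℝ) * Real.exp (-(b / 2) * r) < 1 :=
    h0.eventually (eventually_lt_nhds one_pos)
  filter_upwards [h1, eventually_ge_atTop (0 : ℝ)] with r hr1 hr0
  have hpow : r ^ (k : ℝ) = r ^ k := Real.rpow_natCast r k
  have hsplit : Real.exp (-(b * r)) = Real.exp (-(b / 2) * r) * Real.exp (-(b / 2) * r) := by
    rw [← Real.exp_add]; ring_nf
  rw [Real.norm_eq_abs, Real.norm_eq_abs, abs_of_nonneg (by positivity),
    abs_of_nonneg (Real.exp_pos _).le, hsplit, ← mul_assoc, one_mul]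
  have := hr1.le
  rw [hpow] at this
  calc r ^ k * Real.exp (-(b / 2) * r) * Real.exp (-(b / 2) * r)
      ≤ 1 * Real.exp (-(b / 2) * r) := by
        apply mul_le_mul_of_nonneg_right _ (Real.exp_pos _).le
        simpa [neg_mul] using this
    _ = Real.exp (-(b / 2) * r) := one_mul _

lemma norm_aux (k : ℕ) (s : ℂ) {r : ℝ} (hr : 0 ≤ r) :
    ‖(r : ℂ) ^ k * Complex.exp (-(s * r))‖ = r ^ k * Real.exp (-(s.re * r)) := by
  rw [norm_mul, norm_pow, Complex.norm_real, Real.norm_eq_abs, abs_of_nonneg hr,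
    Complex.norm_exp]
  congr 2
  simp [Complex.mul_re]

lemma lapC_integrable (k : ℕ) {s : ℂ} (hs : 0 < s.re) :
    IntegrableOn (fun r : ℝ => (r : ℂ) ^ k * Complex.exp (-(s * r))) (Ioi 0) := by
  refine ((lapR_integrable k hs).mono' (Continuous.aestronglyMeasurable (by continuity)
    |>.restrict) ?_)
  filter_upwards [ae_restrict_mem measurableSet_Ioi] with r (hr : 0 < r)
  rw [norm_aux k s hr.le]

lemma lapR (k : ℕ) {b : ℝ} (hb : 0 < b) :
    ∫ r in Ioi (0 : ℝ), r ^ k * Real.exp (-(b * r)) = k.factorial / b ^ (k + 1) := by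
  have h := Real.integral_rpow_mul_exp_neg_mul_Ioi (a := (k : ℝ) + 1) (by positivity) hb
  rw [show ((k : ℝ) + 1) - 1 = (k : ℝ) by ring] at h
  rw [setIntegral_congr_fun measurableSet_Ioi
    (fun t (ht : (0:ℝ) < t) => by rw [← Real.rpow_natCast t k]), h]
  have hg : Real.Gamma ((k:ℝ) + 1) = k.factorial := by
    exact_mod_cast Real.Gamma_nat_eq_factorial k
  rw [hg, show ((k : ℝ) + 1) = ((k + 1 : ℕ) : ℝ) by push_cast; ring, Real.rpow_natCast]
  rw [one_div, inv_pow]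
  ring

lemma lapC (k : ℕ) {s : ℂ} (hs : 0 < s.re) :
    ∫ r in Ioi (0 : ℝ), (r : ℂ) ^ k * Complex.exp (-(s * r))
      = k.factorial / s ^ (k + 1) := by
  have hsne : s ≠ 0 := fun h => by simp [h] at hs
  induction k with
  | zero =>
      have hderiv : ∀ r ∈ Ioi (0:ℝ), HasDerivAt (fun r : ℝ => -s⁻¹ * Complex.exp (-(s * r)))
          ((r:ℂ) ^ 0 * Complex.exp (-(s * r))) r := by
        intro r _
        have h1 : HasDerivAt (fun z : ℂ => -s⁻¹ * Complex.exp (-(s * z)))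
            (-s⁻¹ * (Complex.exp (-(s * r)) * -(s * 1))) (r : ℂ) :=
          (((hasDerivAt_id (r:ℂ)).const_mul s).neg.cexp).const_mul (-s⁻¹)
        have h2 := h1.comp_ofReal
        convert h2 using 1
        field_simp
      have htend : Tendsto (fun r : ℝ => -s⁻¹ * Complex.exp (-(s * r))) atTop (𝓝 0) := by
        rw [tendsto_zero_iff_norm_tendsto_zero]
        have : Tendsto (fun r : ℝ => ‖-s⁻¹‖ * ((r:ℝ) ^ (0:ℝ) * Real.exp (-s.re * r))) atTop
            (𝓝 (‖-s⁻¹‖ * 0)) :=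
          (tendsto_rpow_mul_exp_neg_mul_atTop_nhds_zero 0 s.re hs).const_mul _
        rw [mul_zero] at this
        refine this.congr' ?_
        filter_upwards [eventually_gt_atTop (0:ℝ)] with r hr
        rw [Real.rpow_zero, one_mul, norm_mul,
          Complex.norm_exp]
        congr 2
        simp [Complex.mul_re]
      have := integral_Ioi_of_hasDerivAt_of_tendsto
        (Continuous.continuousWithinAt (by continuity)) hderiv
        (lapC_integrable 0 hs) htend
      rw [this]
      simp [hsne]
  | succ k ih =>
      set φ : ℝ → ℂ := fun r => -s⁻¹ * ((r : ℂ) ^ (k+1) * Complex.exp (-(s * r))) with hφ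
      set ψ : ℝ → ℂ := fun r => (r : ℂ) ^ (k+1) * Complex.exp (-(s * r))
        - (s⁻¹ * (k+1)) * ((r : ℂ) ^ k * Complex.exp (-(s * r))) with hψ
      have hderiv : ∀ r ∈ Ioi (0:ℝ), HasDerivAt φ (ψ r) r := by
        intro r _
        have h1 : HasDerivAt (fun z : ℂ => -s⁻¹ * (z ^ (k+1) * Complex.exp (-(s * z))))
            (-s⁻¹ * (((k+1) * (r:ℂ) ^ k) * Complex.exp (-(s * r))
              + (r:ℂ) ^ (k+1) * (Complex.exp (-(s * r)) * -(s * 1)))) (r : ℂ) := by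
          have := ((hasDerivAt_pow (k+1) (r:ℂ)).mul
            (((hasDerivAt_id (r:ℂ)).const_mul s).neg.cexp)).const_mul (-s⁻¹)
          refine this.congr_deriv ?_
          simp only [id_eq, Nat.add_sub_cancel, Pi.neg_apply]
          push_cast
          ring
        have h2 := h1.comp_ofReal
        convert h2 using 1
        rw [hψ]
        simp only [id_eq]
        field_simp
        ring
      have htend : Tendsto φ atTop (𝓝 0) := by
        rw [tendsto_zero_iff_norm_tendsto_zero]
        have : Tendsto (fun r : ℝ => ‖-s⁻¹‖ * ((r:ℝ) ^ ((k:ℝ)+1) * Real.exp (-s.re * r))) atTop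
            (𝓝 (‖-s⁻¹‖ * 0)) :=
          (tendsto_rpow_mul_exp_neg_mul_atTop_nhds_zero _ s.re hs).const_mul _
        rw [mul_zero] at this
        refine this.congr' ?_
        filter_upwards [eventually_gt_atTop (0:ℝ)] with r hr
        rw [hφ, norm_mul, norm_mul]
        congr 1
        rw [show ((k:ℝ)+1) = ((k+1 : ℕ) : ℝ) by push_cast; ring, Real.rpow_natCast,
          norm_pow, Complex.norm_real, Real.norm_eq_abs, abs_of_pos hr,
          Complex.norm_exp]
        congr 2
        simp [Complex.mul_re]
      have hint : IntegrableOn ψ (Ioi 0) :=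
        (lapC_integrable (k+1) hs).sub ((lapC_integrable k hs).const_mul _)
      have key := integral_Ioi_of_hasDerivAt_of_tendsto
        (Continuous.continuousWithinAt (by continuity)) hderiv hint htend
      have hφ0 : φ 0 = 0 := by simp [hφ]
      rw [hφ0, sub_zero] at key
      have hsplit : ∫ r in Ioi (0:ℝ), ψ r
          = (∫ r in Ioi (0:ℝ), (r : ℂ) ^ (k+1) * Complex.exp (-(s * r)))
            - (s⁻¹ * (k+1)) * ∫ r in Ioi (0:ℝ), (r : ℂ) ^ k * Complex.exp (-(s * r)) := by
        rw [hψ]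
        rw [integral_sub (lapC_integrable (k+1) hs) ((lapC_integrable k hs).const_mul _),
          integral_const_mul]
      rw [key] at hsplit
      have : (∫ r in Ioi (0:ℝ), (r : ℂ) ^ (k+1) * Complex.exp (-(s * r)))
          = (s⁻¹ * (k+1)) * (k.factorial / s ^ (k+1)) := by
        rw [← ih]; linear_combination -hsplit
      rw [this, Nat.factorial_succ]
      push_cast
      simp only [div_eq_mul_inv, pow_succ, mul_inv]
      ring


open ENNReal in

lemma integrable_tsum_norm {α : Type*} [MeasurableSpace α] {μ : Measure α} {f : ℕ → α → ℂ}
    (hf : ∀ i, Integrable (f i) μ) (hs : Summable fun i => ∫ a, ‖f i a‖ ∂μ) :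
    Integrable (fun a => ∑' i, f i a) μ := by
  have hm : ∀ i, AEMeasurable (fun x => (‖f i x‖₊ : ℝ≥0∞)) μ := fun i =>
    (hf i).aestronglyMeasurable.enorm
  have hf' : ∑' i, ∫⁻ a, ‖f i a‖₊ ∂μ ≠ ∞ := by
    have h1 : ∀ i, ∫⁻ a, ‖f i a‖₊ ∂μ = (‖∫ a, ‖f i a‖ ∂μ‖₊ : ℝ≥0∞) := fun i => by
      rw [lintegral_coe_eq_integral (fun a => ‖f i a‖₊) (hf i).norm, coe_nnreal_eq, coe_nnnorm,
        Real.norm_of_nonneg (integral_nonneg fun a => norm_nonneg (f i a))]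
      simp only [coe_nnnorm]
    rw [funext h1, ← ENNReal.coe_tsum]
    · exact ENNReal.coe_ne_top
    · simp_rw [← NNReal.summable_coe, coe_nnnorm]
      exact hs.abs
  have hhh : ∀ᵐ a ∂μ, Summable fun n => (‖f n a‖₊ : ℝ) := by
    rw [← lintegral_tsum hm] at hf'
    refine (ae_lt_top' (AEMeasurable.ennreal_tsum hm) hf').mono fun x hx => ?_
    rw [← ENNReal.tsum_coe_ne_top_iff_summable_coe]
    exact hx.ne
  constructor
  · refine aestronglyMeasurable_of_tendsto_ae (u := (atTop : Filter ℕ))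
      (f := fun N a => ∑ i ∈ Finset.range N, f i a) (fun N => ?_) ?_
    · exact Finset.aestronglyMeasurable_fun_sum _ fun i _ => (hf i).aestronglyMeasurable
    · filter_upwards [hhh] with a ha
      exact (ha.of_norm.hasSum.tendsto_sum_nat)
  · show (∫⁻ a, (‖∑' i, f i a‖₊ : ℝ≥0∞) ∂μ) < ∞
    calc ∫⁻ a, (‖∑' i, f i a‖₊ : ℝ≥0∞) ∂μ
        ≤ ∫⁻ a, ∑' i, (‖f i a‖₊ : ℝ≥0∞) ∂μ := by
          refine lintegral_mono_ae ?_
          filter_upwards [hhh] with a ha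
          have h2 : Summable fun i => ‖f i a‖₊ := by
            rwa [← NNReal.summable_coe]
          calc (‖∑' i, f i a‖₊ : ℝ≥0∞) ≤ (↑(∑' i, ‖f i a‖₊) : ℝ≥0∞) :=
                ENNReal.coe_le_coe.2 (nnnorm_tsum_le h2)
            _ = ∑' i, (‖f i a‖₊ : ℝ≥0∞) := ENNReal.coe_tsum h2
      _ = ∑' i, ∫⁻ a, ‖f i a‖₊ ∂μ := lintegral_tsum hm
      _ < ∞ := hf'.lt_top


lemma summable_sqrt_pow_inv {d : ℕ} (hd : 0 < d) {lam : ℕ → ℝ} {L : ℝ} (hL : 0 < L)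
    (hweyl : Tendsto (fun n : ℕ => lam n / (((n : ℝ) + 1) ^ ((2 : ℝ) / (d : ℝ))))
      atTop (𝓝 L)) {m : ℕ} (hm : d + 1 ≤ m) :
    Summable (fun n : ℕ => (Real.sqrt (lam n) ^ m)⁻¹) := by
  have hdR : (0 : ℝ) < d := by exact_mod_cast hd
  set p : ℝ := (m : ℝ) / d with hp_def
  have hp : 1 < p := by
    rw [lt_div_iff₀ hdR, one_mul]
    exact_mod_cast Nat.lt_of_lt_of_le (Nat.lt_succ_self d) hm
  have hbase : Summable (fun n : ℕ => (((n : ℝ) + 1) ^ p)⁻¹) := by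
    have h0 := (Real.summable_nat_rpow_inv (p := p)).2 hp
    have h' := (summable_nat_add_iff 1).2 h0
    refine h'.congr fun n => ?_
    push_cast
    rfl
  obtain ⟨N, hN⟩ := eventually_atTop.1
    (hweyl.eventually (eventually_gt_nhds (show L / 2 < L by linarith)))
  rw [← summable_nat_add_iff N]
  set C : ℝ := Real.sqrt (L / 2) ^ m with hC_def
  have hC : 0 < C := pow_pos (Real.sqrt_pos.2 (by linarith)) m
  have hbnd : Summable (fun n : ℕ => C⁻¹ * ((((n + N : ℕ) : ℝ) + 1) ^ p)⁻¹) :=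
    (summable_nat_add_iff N).2 (hbase.mul_left C⁻¹)
  refine Summable.of_nonneg_of_le (fun n => inv_nonneg.2 (pow_nonneg (Real.sqrt_nonneg _) m))
    (fun n => ?_) hbnd
  set j := n + N with hj
  have hjN : N ≤ j := Nat.le_add_left N n
  have hj1 : (0 : ℝ) < (j : ℝ) + 1 := by positivity
  have h1 := hN j hjN
  have hpow_pos : (0 : ℝ) < ((j : ℝ) + 1) ^ ((2 : ℝ) / d) := Real.rpow_pos_of_pos hj1 _
  have h2 : L / 2 * ((j : ℝ) + 1) ^ ((2 : ℝ) / d) < lam j := (lt_div_iff₀ hpow_pos).1 h1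
  have h4 : Real.sqrt (L / 2 * ((j : ℝ) + 1) ^ ((2 : ℝ) / d))
      = Real.sqrt (L / 2) * ((j : ℝ) + 1) ^ ((1 : ℝ) / d) := by
    rw [Real.sqrt_mul (by linarith), Real.sqrt_eq_rpow (((j : ℝ) + 1) ^ ((2 : ℝ) / d)),
      ← Real.rpow_mul hj1.le]
    congr 1
    ring
  have h3 : Real.sqrt (L / 2) * ((j : ℝ) + 1) ^ ((1 : ℝ) / d) ≤ Real.sqrt (lam j) := by
    rw [← h4]; exact Real.sqrt_le_sqrt h2.le
  have h5 : (((j : ℝ) + 1) ^ ((1 : ℝ) / d)) ^ m = ((j : ℝ) + 1) ^ p := by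
    rw [← Real.rpow_natCast (((j : ℝ) + 1) ^ ((1 : ℝ) / d)) m, ← Real.rpow_mul hj1.le]
    congr 1
    rw [hp_def]; ring
  have h6 : C * ((j : ℝ) + 1) ^ p ≤ Real.sqrt (lam j) ^ m := by
    rw [hC_def, ← h5, ← mul_pow]
    exact pow_le_pow_left₀ (by positivity) h3 m
  have h7 : (0 : ℝ) < C * ((j : ℝ) + 1) ^ p := by positivity
  calc (Real.sqrt (lam j) ^ m)⁻¹ ≤ (C * ((j : ℝ) + 1) ^ p)⁻¹ := by
        apply inv_anti₀ h7 h6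
    _ = C⁻¹ * (((j : ℝ) + 1) ^ p)⁻¹ := by rw [mul_inv]

end Aux

/-- With `ρ_n = √λ_n`, for `m ≥ d + 1`, `θ ∈ (-π/2, π/2)` and
`Re(ρ e^{iθ}) > 0`, the Laplace integral of `(-t)^{m-1} Θ_D(t)` along the ray of
direction `θ` converges absolutely and equals
`Σ_{n≥1} (-1)^{m-1} (m-1)! / (ρ + ρ_n)^m`, the series converging absolutely. -/
theorem stmt_5 (d : ℕ) (hd : 0 < d) (lam : ℕ → ℝ) (hpos : ∀ n, 0 < lam n)
    (hmono : Monotone lam) (L : ℝ) (hL : 0 < L)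
    (hweyl : Tendsto (fun n : ℕ => lam n / (((n : ℝ) + 1) ^ ((2 : ℝ) / (d : ℝ))))
      atTop (𝓝 L))
    (m : ℕ) (hm : d + 1 ≤ m)
    (θ : ℝ) (hθ : θ ∈ Set.Ioo (-(π / 2)) (π / 2))
    (ρ : ℂ) (hρ : 0 < (ρ * rayDir θ).re) :
    IntegrableOn
      (fun r : ℝ =>
        (-(rayPt θ r)) ^ (m - 1) *
          (∑' n : ℕ, Complex.exp (-(Real.sqrt (lam n) : ℂ) * rayPt θ r)) *
          Complex.exp (-ρ * rayPt θ r) * rayDir θ)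
      (Set.Ioi 0) ∧
    Summable (fun n : ℕ =>
      ‖(-1 : ℂ) ^ (m - 1) * (Nat.factorial (m - 1) : ℂ) /
        (ρ + (Real.sqrt (lam n) : ℂ)) ^ m‖) ∧
    (∫ r in Set.Ioi (0 : ℝ),
        (-(rayPt θ r)) ^ (m - 1) *
          (∑' n : ℕ, Complex.exp (-(Real.sqrt (lam n) : ℂ) * rayPt θ r)) *
          Complex.exp (-ρ * rayPt θ r) * rayDir θ)
      = ∑' n : ℕ,
          (-1 : ℂ) ^ (m - 1) * (Nat.factorial (m - 1) : ℂ) /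
            (ρ + (Real.sqrt (lam n) : ℂ)) ^ m := by
  obtain ⟨k, rfl⟩ : ∃ k, m = k + 1 := ⟨m - 1, by omega⟩
  simp only [Nat.add_sub_cancel]
  obtain ⟨hθ1, hθ2⟩ := hθ
  have hc : 0 < Real.cos θ := Real.cos_pos_of_mem_Ioo ⟨hθ1, hθ2⟩
  set E : ℂ := rayDir θ with hE_def
  have hEne : E ≠ 0 := Complex.exp_ne_zero _
  have hEnorm : ‖E‖ = 1 := by
    rw [hE_def, rayDir, Complex.norm_exp]
    simp
  have hEre : E.re = Real.cos θ := by
    rw [hE_def, rayDir]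
    simpa using Complex.exp_ofReal_mul_I_re θ
  set a : ℝ := (ρ * E).re with ha_def
  have ha : 0 < a := hρ
  have hρn : ∀ n, 0 < Real.sqrt (lam n) := fun n => Real.sqrt_pos.2 (hpos n)
  set s : ℕ → ℂ := fun n => (ρ + (Real.sqrt (lam n) : ℂ)) * E with hs_def
  have hsre : ∀ n, (s n).re = a + Real.sqrt (lam n) * Real.cos θ := by
    intro n
    rw [hs_def]
    simp only [add_mul, Complex.add_re]
    congr 1
    rw [Complex.re_ofReal_mul, hEre]
  have hsre_pos : ∀ n, 0 < (s n).re := fun n => by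
    rw [hsre n]
    have := hρn n
    positivity
  set f : ℕ → ℝ → ℂ := fun n r =>
    (-(rayPt θ r)) ^ k * Complex.exp (-(Real.sqrt (lam n) : ℂ) * rayPt θ r) *
      Complex.exp (-ρ * rayPt θ r) * E with hf_def
  set Cst : ℂ := (-1) ^ k * E ^ (k + 1) with hCst_def
  have hCnorm : ‖Cst‖ = 1 := by
    rw [hCst_def, norm_mul, norm_pow, norm_pow, norm_neg, norm_one, hEnorm]
    simp
  have hfeq : ∀ n r, f n r = Cst * ((r : ℂ) ^ k * Complex.exp (-(s n * r))) := by
    intro n r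
    simp only [hf_def, hCst_def, hs_def, rayPt, ← hE_def]
    have hexp : Complex.exp (-(Real.sqrt (lam n) : ℂ) * ((r : ℂ) * E)) *
        Complex.exp (-ρ * ((r : ℂ) * E))
        = Complex.exp (-((ρ + (Real.sqrt (lam n) : ℂ)) * E * r)) := by
      rw [← Complex.exp_add]
      congr 1
      ring
    calc (-((r : ℂ) * E)) ^ k * Complex.exp (-(Real.sqrt (lam n) : ℂ) * ((r : ℂ) * E)) *
          Complex.exp (-ρ * ((r : ℂ) * E)) * E
        = (-((r : ℂ) * E)) ^ k *
            (Complex.exp (-(Real.sqrt (lam n) : ℂ) * ((r : ℂ) * E)) *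
              Complex.exp (-ρ * ((r : ℂ) * E))) * E := by ring
      _ = (-((r : ℂ) * E)) ^ k *
            Complex.exp (-((ρ + (Real.sqrt (lam n) : ℂ)) * E * r)) * E := by rw [hexp]
      _ = (-1) ^ k * E ^ (k + 1) *
            ((r : ℂ) ^ k * Complex.exp (-((ρ + (Real.sqrt (lam n) : ℂ)) * E * r))) := by
          ring
  have hint : ∀ n, IntegrableOn (f n) (Ioi 0) := fun n => by
    have h := (lapC_integrable k (hsre_pos n)).const_mul Cst
    exact IntegrableOn.congr_fun h (fun r _ => (hfeq n r).symm) measurableSet_Ioi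
  have hnormint : ∀ n, (∫ r in Ioi (0 : ℝ), ‖f n r‖)
      = (k.factorial : ℝ) / ((s n).re) ^ (k + 1) := fun n => by
    have heq : ∀ r ∈ Ioi (0 : ℝ), ‖f n r‖ = r ^ k * Real.exp (-((s n).re * r)) := fun r hr => by
      rw [hfeq n r, norm_mul, hCnorm, one_mul, norm_aux k (s n) (le_of_lt hr)]
    rw [setIntegral_congr_fun measurableSet_Ioi heq, lapR k (hsre_pos n)]
  have hS := summable_sqrt_pow_inv hd hL hweyl (m := k + 1) hm
  have hsum_norm : Summable (fun n => ∫ r in Ioi (0 : ℝ), ‖f n r‖) := by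
    refine Summable.congr ?_ (fun n => (hnormint n).symm)
    refine Summable.of_nonneg_of_le (fun n => by have := hsre_pos n; positivity) (fun n => ?_)
      (hS.mul_left ((k.factorial : ℝ) / Real.cos θ ^ (k + 1)))
    rw [hsre n]
    have h0 : 0 < Real.sqrt (lam n) * Real.cos θ := by
      have := hρn n; positivity
    calc (k.factorial : ℝ) / (a + Real.sqrt (lam n) * Real.cos θ) ^ (k + 1)
        ≤ (k.factorial : ℝ) / (Real.sqrt (lam n) * Real.cos θ) ^ (k + 1) := by
          gcongr
          linarith
      _ = (k.factorial : ℝ) / Real.cos θ ^ (k + 1) * (Real.sqrt (lam n) ^ (k + 1))⁻¹ := by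
          rw [mul_pow, div_eq_mul_inv, mul_inv, div_eq_mul_inv]
          ring
  have hlow : ∀ n, Real.sqrt (lam n) * Real.cos θ ≤ ‖ρ + (Real.sqrt (lam n) : ℂ)‖ := fun n => by
    have h1 : (s n).re ≤ ‖s n‖ := by
      exact Complex.re_le_norm (s n)
    have h2 : ‖s n‖ = ‖ρ + (Real.sqrt (lam n) : ℂ)‖ := by
      rw [hs_def, norm_mul, hEnorm, mul_one]
    rw [← h2]
    have h3 := hsre n
    linarith [h1, ha]
  have hsum2 : Summable (fun n : ℕ =>
      ‖(-1 : ℂ) ^ k * (Nat.factorial k : ℂ) / (ρ + (Real.sqrt (lam n) : ℂ)) ^ (k + 1)‖) := by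
    refine Summable.of_nonneg_of_le (fun n => norm_nonneg _) (fun n => ?_)
      (hS.mul_left ((k.factorial : ℝ) / Real.cos θ ^ (k + 1)))
    have h0 : 0 < Real.sqrt (lam n) * Real.cos θ := by
      have := hρn n; positivity
    rw [norm_div, norm_mul, norm_pow, norm_neg, norm_one, one_pow, one_mul, norm_pow,
      Complex.norm_natCast]
    calc (k.factorial : ℝ) / ‖ρ + (Real.sqrt (lam n) : ℂ)‖ ^ (k + 1)
        ≤ (k.factorial : ℝ) / (Real.sqrt (lam n) * Real.cos θ) ^ (k + 1) := by
          gcongr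
          exact hlow n
      _ = (k.factorial : ℝ) / Real.cos θ ^ (k + 1) * (Real.sqrt (lam n) ^ (k + 1))⁻¹ := by
          rw [mul_pow, div_eq_mul_inv, mul_inv, div_eq_mul_inv]
          ring
  have hρρn : ∀ n, (ρ + (Real.sqrt (lam n) : ℂ)) ≠ 0 := fun n h => by
    have h2 : s n = 0 := by rw [hs_def]; simp only; rw [h, zero_mul]
    have := hsre_pos n
    rw [h2] at this
    simp at this
  have hvals : ∀ n, (∫ r in Ioi (0 : ℝ), f n r)
      = (-1 : ℂ) ^ k * (Nat.factorial k : ℂ) / (ρ + (Real.sqrt (lam n) : ℂ)) ^ (k + 1) :=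
    fun n => by
    rw [setIntegral_congr_fun measurableSet_Ioi (fun r _ => hfeq n r), integral_const_mul,
      lapC k (hsre_pos n), hCst_def, hs_def]
    simp only
    rw [mul_pow]
    have h1 : (ρ + (Real.sqrt (lam n) : ℂ)) ^ (k + 1) ≠ 0 := pow_ne_zero _ (hρρn n)
    have h2 : E ^ (k + 1) ≠ 0 := pow_ne_zero _ hEne
    field_simp
  have hFeq : (fun r : ℝ =>
      (-(rayPt θ r)) ^ k * (∑' n : ℕ, Complex.exp (-(Real.sqrt (lam n) : ℂ) * rayPt θ r)) *
        Complex.exp (-ρ * rayPt θ r) * E) = fun r => ∑' n, f n r := by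
    funext r
    have h1 : ∀ n : ℕ, f n r = Complex.exp (-(Real.sqrt (lam n) : ℂ) * rayPt θ r) *
        ((-(rayPt θ r)) ^ k * Complex.exp (-ρ * rayPt θ r) * E) := fun n => by
      simp only [hf_def]
      ring
    rw [tsum_congr h1, tsum_mul_right]
    ring
  refine ⟨?_, hsum2, ?_⟩
  · rw [hFeq]
    exact integrable_tsum_norm hint hsum_norm
  · rw [hFeq, ← integral_tsum_of_summable_integral_norm hint hsum_norm]
    exact tsum_congr hvals
end

section
/- Let I ⊂ ℝ be an open interval of length less than π, let γ : I → ℝ and α : I → ℝ_{>0} be locally bounded, and let φ be holomorphic on the open sector S = {r e^{iθ} : r > 0, θ ∈ I}. Assume: (a) |φ(r e^{iθ})| ≤ α(θ) e^{(γ(θ)+ε) r} for every ε > 0, r > 0, θ ∈ I; (b) φ is integrable near the origin along each ray of S; (c) t·φ(t) → 0 as t → 0 within every closed subsector of S. Then for any θ₁, θ₂ ∈ I and any ρ ∈ ℂ with Re(ρ e^{iθ₁}) > γ(θ₁) and Re(ρ e^{iθ₂}) > γ(θ₂), the improper ray integrals coincide: ∫_0^{e^{iθ₁}∞} φ(t)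 e^{−ρt} dt = ∫_0^{e^{iθ₂}∞} φ(t) e^{−ρt} dt; in other words, the Laplace transform along directions in I is independent of the chosen direction on the common domain. -/
open Filter MeasureTheory Set
open scoped Topology Real

/-- The open sector of directions in the open interval `(a, b)`. -/
def sectorIoo (a b : ℝ) : Set ℂ :=
  {t : ℂ | ∃ r θ : ℝ, 0 < r ∧ θ ∈ Set.Ioo a b ∧ t = (r : ℂ) * Complex.exp ((θ : ℂ) * Complex.I)}

/-- The closed subsector of directions in the closed interval `[a', b']`. -/
def sectorIcc (a' b' : ℝ) : Set ℂ :=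
  {t : ℂ | ∃ r θ : ℝ, 0 < r ∧ θ ∈ Set.Icc a' b' ∧ t = (r : ℂ) * Complex.exp ((θ : ℂ) * Complex.I)}

namespace Stmt7

lemma rayPt_def (θ r : ℝ) : rayPt θ r = (r : ℂ) * rayDir θ := rfl

lemma norm_rayDir (θ : ℝ) : ‖rayDir θ‖ = 1 := by
  simp [rayDir, Complex.norm_exp]

lemma norm_rayPt (θ : ℝ) {r : ℝ} (hr : 0 ≤ r) : ‖rayPt θ r‖ = r := by
  rw [rayPt_def, norm_mul, norm_rayDir, mul_one, Complex.norm_real, Real.norm_of_nonneg hr]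

lemma re_mul_rayPt (ρ : ℂ) (θ r : ℝ) : (ρ * rayPt θ r).re = r * (ρ * rayDir θ).re := by
  rw [rayPt_def, show ρ * ((r:ℂ) * rayDir θ) = (r:ℂ) * (ρ * rayDir θ) by ring,
    Complex.re_ofReal_mul]

lemma norm_cexp_neg_mul_rayPt (ρ : ℂ) (θ r : ℝ) :
    ‖Complex.exp (-ρ * rayPt θ r)‖ = Real.exp (-((ρ * rayDir θ).re * r)) := by
  rw [Complex.norm_exp]
  congr 1
  rw [show -ρ * rayPt θ r = -(ρ * rayPt θ r) by ring, Complex.neg_re, re_mul_rayPt]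
  ring

lemma exp_eq_rayPt (z : ℂ) : Complex.exp z = rayPt z.im (Real.exp z.re) := by
  rw [rayPt, Complex.ofReal_exp, ← Complex.exp_add, Complex.re_add_im]

lemma sectorIoo_eq (a b : ℝ) : sectorIoo a b = Complex.exp '' (Complex.im ⁻¹' Set.Ioo a b) := by
  ext t
  constructor
  · rintro ⟨r, θ, hr, hθ, rfl⟩
    refine ⟨(Real.log r : ℂ) + (θ : ℂ) * Complex.I, by simpa using hθ, ?_⟩
    rw [exp_eq_rayPt]
    simp [rayPt, Real.exp_log hr]
  · rintro ⟨z, hz, rfl⟩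
    exact ⟨Real.exp z.re, z.im, Real.exp_pos _, hz, by rw [exp_eq_rayPt z]; rfl⟩

lemma isOpen_sectorIoo (a b : ℝ) : IsOpen (sectorIoo a b) := by
  rw [sectorIoo_eq]
  exact Complex.isOpenMap_exp _ (isOpen_Ioo.preimage Complex.continuous_im)

lemma rayPt_mem_sectorIoo {a b θ : ℝ} (hθ : θ ∈ Set.Ioo a b) {r : ℝ} (hr : 0 < r) :
    rayPt θ r ∈ sectorIoo a b := ⟨r, θ, hr, hθ, rfl⟩

lemma rayPt_mem_sectorIcc {a b θ : ℝ} (hθ : θ ∈ Set.Icc a b) {r : ℝ} (hr : 0 < r) :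
    rayPt θ r ∈ sectorIcc a b := ⟨r, θ, hr, hθ, rfl⟩

variable {a b : ℝ} {φ : ℂ → ℂ}

lemma diffAt (hhol : DifferentiableOn ℂ φ (sectorIoo a b)) {t : ℂ} (ht : t ∈ sectorIoo a b) :
    DifferentiableAt ℂ φ t :=
  hhol.differentiableAt ((isOpen_sectorIoo a b).mem_nhds ht)

lemma contOn_ray (hhol : DifferentiableOn ℂ φ (sectorIoo a b)) {θ : ℝ} (hθ : θ ∈ Set.Ioo a b) :
    ContinuousOn (fun r : ℝ => φ (rayPt θ r)) (Set.Ioi 0) := by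
  intro r hr
  exact ((diffAt hhol (rayPt_mem_sectorIoo hθ hr)).continuousAt.comp
    (by unfold rayPt; fun_prop : ContinuousAt (fun r : ℝ => rayPt θ r) r)).continuousWithinAt

lemma aesm_ray (hhol : DifferentiableOn ℂ φ (sectorIoo a b)) {θ : ℝ} (hθ : θ ∈ Set.Ioo a b) :
    AEStronglyMeasurable (fun r : ℝ => φ (rayPt θ r)) (volume.restrict (Set.Ioi 0)) :=
  (contOn_ray hhol hθ).aestronglyMeasurable measurableSet_Ioi

variable {γ α : ℝ → ℝ}

lemma key_int (hhol : DifferentiableOn ℂ φ (sectorIoo a b))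
    (hbound : ∀ ε : ℝ, 0 < ε → ∀ r : ℝ, 0 < r → ∀ θ ∈ Set.Ioo a b,
      ‖φ (rayPt θ r)‖ ≤ α θ * Real.exp ((γ θ + ε) * r))
    (hint : ∀ θ ∈ Set.Ioo a b, IntegrableOn (fun r : ℝ => φ (rayPt θ r)) (Set.Ioc 0 1))
    {θ : ℝ} (hθ : θ ∈ Set.Ioo a b) {c : ℝ} (hc : γ θ < c) (n : ℕ) :
    IntegrableOn (fun r : ℝ => ‖φ (rayPt θ r)‖ * (r ^ n * Real.exp (-(c * r))))
      (Set.Ioi 0) := by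
  have hcont : ContinuousOn (fun r : ℝ => ‖φ (rayPt θ r)‖ * (r ^ n * Real.exp (-(c * r))))
      (Set.Ioi 0) := by
    exact (contOn_ray hhol hθ).norm.mul (by fun_prop)
  rw [← Set.Ioc_union_Ioi_eq_Ioi (zero_le_one (α := ℝ))]
  apply IntegrableOn.union
  · -- near zero
    apply Integrable.mono' (((hint θ hθ).norm).mul_const (Real.exp |c|))
    · exact (hcont.mono Set.Ioc_subset_Ioi_self).aestronglyMeasurable measurableSet_Ioc
    · rw [ae_restrict_iff' measurableSet_Ioc]
      filter_upwards with r hr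
      have hr0 : 0 < r := hr.1
      have hr1 : r ≤ 1 := hr.2
      rw [Real.norm_of_nonneg (by positivity)]
      apply mul_le_mul_of_nonneg_left _ (norm_nonneg _)
      have h1 : r ^ n ≤ 1 := pow_le_one₀ hr0.le hr1
      have h2 : Real.exp (-(c * r)) ≤ Real.exp |c| := by
        apply Real.exp_le_exp.2
        calc -(c * r) ≤ |c * r| := neg_le_abs _
          _ = |c| * r := by rw [abs_mul, abs_of_nonneg hr0.le]
          _ ≤ |c| * 1 := by nlinarith [abs_nonneg c]
          _ = |c| := mul_one _
      calc r ^ n * Real.exp (-(c * r)) ≤ 1 * Real.exp |c| := by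
            apply mul_le_mul h1 h2 (Real.exp_pos _).le zero_le_one
        _ = Real.exp |c| := one_mul _
  · -- at infinity
    set ε := (c - γ θ) / 2 with hε
    have hεpos : 0 < ε := by simp [hε]; linarith
    have hgint : IntegrableOn (fun r : ℝ => α θ * (r ^ n * Real.exp (-(ε * r))))
        (Set.Ioi 0) := by
      apply Integrable.const_mul
      have := integrableOn_rpow_mul_exp_neg_mul_rpow (p := 1) (s := (n : ℝ)) (b := ε)
        (lt_of_lt_of_le neg_one_lt_zero (Nat.cast_nonneg n)) zero_lt_one hεpos
      apply this.congr_fun _ measurableSet_Ioi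
      intro x hx
      simp only [Real.rpow_one, Real.rpow_natCast, neg_mul]
    apply Integrable.mono' (hgint.mono_set (Set.Ioi_subset_Ioi zero_le_one))
    · exact (hcont.mono (Set.Ioi_subset_Ioi zero_le_one)).aestronglyMeasurable measurableSet_Ioi
    · rw [ae_restrict_iff' measurableSet_Ioi]
      filter_upwards with r hr
      have hr0 : (0:ℝ) < r := lt_trans zero_lt_one hr
      rw [Real.norm_of_nonneg (by positivity)]
      have hb := hbound ε hεpos r hr0 θ hθ
      calc ‖φ (rayPt θ r)‖ * (r ^ n * Real.exp (-(c * r)))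
          ≤ (α θ * Real.exp ((γ θ + ε) * r)) * (r ^ n * Real.exp (-(c * r))) := by
            apply mul_le_mul_of_nonneg_right hb (by positivity)
        _ = α θ * (r ^ n * Real.exp (-(ε * r))) := by
            rw [show -(ε * r) = (γ θ + ε) * r + -(c * r) by rw [hε]; ring, Real.exp_add]
            ring

lemma integrable_f (hhol : DifferentiableOn ℂ φ (sectorIoo a b))
    (hbound : ∀ ε : ℝ, 0 < ε → ∀ r : ℝ, 0 < r → ∀ θ ∈ Set.Ioo a b,
      ‖φ (rayPt θ r)‖ ≤ α θ * Real.exp ((γ θ + ε) * r))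
    (hint : ∀ θ ∈ Set.Ioo a b, IntegrableOn (fun r : ℝ => φ (rayPt θ r)) (Set.Ioc 0 1))
    {θ : ℝ} (hθ : θ ∈ Set.Ioo a b) {ρ : ℂ} (hρ : γ θ < (ρ * rayDir θ).re) :
    IntegrableOn (fun r : ℝ =>
      φ (rayPt θ r) * Complex.exp (-ρ * rayPt θ r) * rayDir θ) (Set.Ioi 0) := by
  apply Integrable.mono' (key_int hhol hbound hint hθ hρ 0)
  · apply AEStronglyMeasurable.mul_const _ (rayDir θ)
    apply (aesm_ray hhol hθ).mul
    apply Continuous.aestronglyMeasurable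
    unfold rayPt; fun_prop
  · rw [ae_restrict_iff' measurableSet_Ioi]
    filter_upwards with r hr
    rw [norm_mul, norm_mul, norm_rayDir, mul_one, norm_cexp_neg_mul_rayPt]
    simp

noncomputable def lap (φ : ℂ → ℂ) (θ : ℝ) (ρ : ℂ) : ℂ :=
  ∫ r in Set.Ioi (0:ℝ), φ (rayPt θ r) * Complex.exp (-ρ * rayPt θ r) * rayDir θ

lemma lap_diffAt (hhol : DifferentiableOn ℂ φ (sectorIoo a b))
    (hbound : ∀ ε : ℝ, 0 < ε → ∀ r : ℝ, 0 < r → ∀ θ ∈ Set.Ioo a b,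
      ‖φ (rayPt θ r)‖ ≤ α θ * Real.exp ((γ θ + ε) * r))
    (hint : ∀ θ ∈ Set.Ioo a b, IntegrableOn (fun r : ℝ => φ (rayPt θ r)) (Set.Ioc 0 1))
    {θ : ℝ} (hθ : θ ∈ Set.Ioo a b) {ρ₀ : ℂ} (hρ : γ θ < (ρ₀ * rayDir θ).re) :
    DifferentiableAt ℂ (lap φ θ) ρ₀ := by
  set c₀ := (ρ₀ * rayDir θ).re with hc₀
  set δ := (c₀ - γ θ) / 2 with hδ
  have hδpos : 0 < δ := by rw [hδ]; linarith
  set c := c₀ - δ with hc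
  have hcγ : γ θ < c := by rw [hc, hδ]; linarith
  have hmeas : ∀ ρ : ℂ, AEStronglyMeasurable
      (fun r : ℝ => φ (rayPt θ r) * Complex.exp (-ρ * rayPt θ r) * rayDir θ)
      (volume.restrict (Set.Ioi 0)) := by
    intro ρ
    apply AEStronglyMeasurable.mul_const _ (rayDir θ)
    apply (aesm_ray hhol hθ).mul
    apply Continuous.aestronglyMeasurable
    unfold rayPt; fun_prop
  have key := hasDerivAt_integral_of_dominated_loc_of_deriv_le (μ := volume.restrict (Set.Ioi 0))
    (F := fun ρ (r : ℝ) => φ (rayPt θ r) * Complex.exp (-ρ * rayPt θ r) * rayDir θ)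
    (F' := fun ρ (r : ℝ) =>
      φ (rayPt θ r) * (-(rayPt θ r) * Complex.exp (-ρ * rayPt θ r)) * rayDir θ)
    (x₀ := ρ₀)
    (bound := fun r : ℝ => ‖φ (rayPt θ r)‖ * (r ^ 1 * Real.exp (-(c * r))))
    (Metric.ball_mem_nhds ρ₀ hδpos) (Eventually.of_forall hmeas) (integrable_f hhol hbound hint hθ hρ)
    ?_ ?_ (key_int hhol hbound hint hθ hcγ 1) ?_
  · exact ⟨_, key.2⟩
  · -- measurability of F' ρ₀
    apply AEStronglyMeasurable.mul_const _ (rayDir θ)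
    apply (aesm_ray hhol hθ).mul
    apply Continuous.aestronglyMeasurable
    unfold rayPt; fun_prop
  · -- bound
    rw [ae_restrict_iff' measurableSet_Ioi]
    filter_upwards with r hr
    intro ρ hρball
    have hrpos : (0:ℝ) < r := hr
    have hre : c ≤ (ρ * rayDir θ).re := by
      have h1 : |((ρ - ρ₀) * rayDir θ).re| ≤ ‖(ρ - ρ₀) * rayDir θ‖ := Complex.abs_re_le_norm _
      have h2 : ‖(ρ - ρ₀) * rayDir θ‖ < δ := by
        rw [norm_mul, norm_rayDir, mul_one]
        exact mem_ball_iff_norm.mp hρball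
      have h3 : ((ρ - ρ₀) * rayDir θ).re = (ρ * rayDir θ).re - c₀ := by
        rw [sub_mul, Complex.sub_re, hc₀]
      rw [h3] at h1
      have := (abs_lt.mp (lt_of_le_of_lt h1 h2)).1
      rw [hc]; linarith
    rw [norm_mul, norm_mul, norm_rayDir, mul_one, norm_mul, norm_neg,
      norm_rayPt θ hrpos.le, norm_cexp_neg_mul_rayPt, pow_one]
    rw [show ‖φ (rayPt θ r)‖ * (r * Real.exp (-((ρ * rayDir θ).re * r)))
        = ‖φ (rayPt θ r)‖ * r * Real.exp (-((ρ * rayDir θ).re * r)) by ring,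
      show ‖φ (rayPt θ r)‖ * (r * Real.exp (-(c * r)))
        = ‖φ (rayPt θ r)‖ * r * Real.exp (-(c * r)) by ring]
    apply mul_le_mul_of_nonneg_left _ (by positivity)
    apply Real.exp_le_exp.2
    have := mul_le_mul_of_nonneg_right hre hrpos.le
    linarith
  · -- differentiability in ρ
    rw [ae_restrict_iff' measurableSet_Ioi]
    filter_upwards with r hr
    intro ρ hρball
    have h1 : HasDerivAt (fun ρ : ℂ => -ρ * rayPt θ r) (-(rayPt θ r)) ρ := by
      simpa using ((hasDerivAt_id ρ).neg.mul_const (rayPt θ r))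
    have h2 := h1.cexp
    have h3 := (h2.const_mul (φ (rayPt θ r))).mul_const (rayDir θ)
    convert h3 using 1
    · rfl
    ring

lemma lap_eq_strong (hab : a < b)
    (hαpos : ∀ θ ∈ Set.Ioo a b, 0 < α θ)
    (hhol : DifferentiableOn ℂ φ (sectorIoo a b))
    (hbound : ∀ ε : ℝ, 0 < ε → ∀ r : ℝ, 0 < r → ∀ θ ∈ Set.Ioo a b,
      ‖φ (rayPt θ r)‖ ≤ α θ * Real.exp ((γ θ + ε) * r))
    (hint : ∀ θ ∈ Set.Ioo a b, IntegrableOn (fun r : ℝ => φ (rayPt θ r)) (Set.Ioc 0 1))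
    (hαloc : ∀ K : Set ℝ, K ⊆ Set.Ioo a b → IsCompact K → ∃ M : ℝ, ∀ θ ∈ K, |α θ| ≤ M)
    (hzero : ∀ a' b' : ℝ, a < a' → a' ≤ b' → b' < b →
      Tendsto (fun t : ℂ => t * φ t) (𝓝[sectorIcc a' b'] 0) (𝓝 0))
    {θ₁ θ₂ : ℝ} (hθ₁ : θ₁ ∈ Set.Ioo a b) (hθ₂ : θ₂ ∈ Set.Ioo a b) (h12 : θ₁ ≤ θ₂)
    {ρ : ℂ} (hstrong : ∀ θ ∈ Set.Icc θ₁ θ₂, γ θ + 1 ≤ (ρ * rayDir θ).re) :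
    lap φ θ₁ ρ = lap φ θ₂ ρ := by
  have hIcc : Set.Icc θ₁ θ₂ ⊆ Set.Ioo a b := fun θ hθ =>
    ⟨lt_of_lt_of_le hθ₁.1 hθ.1, lt_of_le_of_lt hθ.2 hθ₂.2⟩
  set g : ℂ → ℂ := fun z => φ (Complex.exp z) * Complex.exp (-ρ * Complex.exp z) * Complex.exp z
    with hg
  -- differentiability of g on the strip
  have gdiff : ∀ z : ℂ, z.im ∈ Set.Ioo a b → DifferentiableAt ℂ g z := by
    intro z hz
    have hmem : Complex.exp z ∈ sectorIoo a b := by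
      rw [sectorIoo_eq]; exact ⟨z, hz, rfl⟩
    have d1 : DifferentiableAt ℂ (fun z : ℂ => φ (Complex.exp z)) z :=
      (diffAt hhol hmem).comp z (Complex.differentiable_exp z)
    have d2 : DifferentiableAt ℂ (fun z : ℂ => Complex.exp (-ρ * Complex.exp z)) z := by
      apply DifferentiableAt.cexp
      exact ((Complex.differentiable_exp z).const_mul (-ρ))
    exact (d1.mul d2).mul (Complex.differentiable_exp z)
  -- the value of g on horizontal lines
  have gval : ∀ (θ x : ℝ), g ((x:ℂ) + (θ:ℂ) * Complex.I)
      = Real.exp x • (φ (rayPt θ (Real.exp x)) *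
          Complex.exp (-ρ * rayPt θ (Real.exp x)) * rayDir θ) := by
    intro θ x
    have hexp : Complex.exp ((x:ℂ) + (θ:ℂ) * Complex.I) = rayPt θ (Real.exp x) := by
      rw [exp_eq_rayPt]
      congr 1 <;> simp
    rw [hg]
    simp only [hexp]
    rw [rayPt_def θ (Real.exp x), Complex.real_smul]
    ring
  -- rectangle identity
  have rect : ∀ n : ℕ,
      ((∫ x in (-(n:ℝ))..(n:ℝ), g ((x:ℂ) + (θ₁:ℂ) * Complex.I))
        - ∫ x in (-(n:ℝ))..(n:ℝ), g ((x:ℂ) + (θ₂:ℂ) * Complex.I))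
      = Complex.I • (∫ y in θ₁..θ₂, g (-((n:ℝ) : ℂ) + (y:ℂ) * Complex.I))
        - Complex.I • (∫ y in θ₁..θ₂, g (((n:ℝ) : ℂ) + (y:ℂ) * Complex.I)) := by
    intro n
    have e1 : (Complex.mk (-(n:ℝ)) θ₁).re = -(n:ℝ) := rfl
    have e2 : (Complex.mk ((n:ℝ)) θ₂).re = (n:ℝ) := rfl
    have e3 : (Complex.mk (-(n:ℝ)) θ₁).im = θ₁ := rfl
    have e4 : (Complex.mk ((n:ℝ)) θ₂).im = θ₂ := rfl
    have hd : DifferentiableOn ℂ g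
        (Set.uIcc (Complex.mk (-(n:ℝ)) θ₁).re (Complex.mk ((n:ℝ)) θ₂).re ×ℂ
         Set.uIcc (Complex.mk (-(n:ℝ)) θ₁).im (Complex.mk ((n:ℝ)) θ₂).im) := by
      intro z hz
      rw [Complex.mem_reProdIm] at hz
      have : z.im ∈ Set.Ioo a b := by
        apply hIcc
        have h5 := hz.2
        rwa [e3, e4, Set.uIcc_of_le h12] at h5
      exact (gdiff z this).differentiableWithinAt
    have key := Complex.integral_boundary_rect_eq_zero_of_differentiableOn g
      (Complex.mk (-(n:ℝ)) θ₁) (Complex.mk ((n:ℝ)) θ₂) hd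
    rw [e1, e2, e3, e4] at key
    have hofr : ((-(n:ℝ) : ℝ) : ℂ) = -((n:ℝ) : ℂ) := by push_cast; ring
    rw [hofr] at key
    simp only [smul_eq_mul] at key ⊢
    clear_value g
    linear_combination key
  -- continuity of the ray integrand
  have fcont : ∀ θ ∈ Set.Icc θ₁ θ₂, ContinuousOn
      (fun r : ℝ => φ (rayPt θ r) * Complex.exp (-ρ * rayPt θ r) * rayDir θ) (Set.Ioi 0) := by
    intro θ hθ
    apply ContinuousOn.mul _ continuousOn_const
    apply (contOn_ray hhol (hIcc hθ)).mul
    apply Continuous.continuousOn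
    unfold rayPt; fun_prop
  -- horizontal side conversion
  have Hconv : ∀ θ ∈ Set.Icc θ₁ θ₂, ∀ n : ℕ,
      (∫ x in (-(n:ℝ))..(n:ℝ), g ((x:ℂ) + (θ:ℂ) * Complex.I))
        = ∫ r in Real.exp (-(n:ℝ))..Real.exp (n:ℝ),
            φ (rayPt θ r) * Complex.exp (-ρ * rayPt θ r) * rayDir θ := by
    intro θ hθ n
    have hsub : Real.exp '' (Set.uIcc (-(n:ℝ)) (n:ℝ)) ⊆ Set.Ioi 0 := by
      rintro r ⟨x, _, rfl⟩
      exact Real.exp_pos x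
    have hcv := intervalIntegral.integral_comp_smul_deriv' (a := -(n:ℝ)) (b := (n:ℝ))
      (f := Real.exp) (f' := Real.exp)
      (g := fun r : ℝ => φ (rayPt θ r) * Complex.exp (-ρ * rayPt θ r) * rayDir θ)
      (fun x _ => Real.hasDerivAt_exp x) Real.continuous_exp.continuousOn
      ((fcont θ hθ).mono hsub)
    rw [← hcv]
    apply intervalIntegral.integral_congr
    intro x _
    exact gval θ x
  -- limits of horizontal integrals
  have hunion : (⋃ n : ℕ, Set.Ioc (Real.exp (-(n:ℝ))) (Real.exp (n:ℝ))) = Set.Ioi (0:ℝ) := by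
    ext x
    simp only [Set.mem_iUnion, Set.mem_Ioc, Set.mem_Ioi]
    constructor
    · rintro ⟨n, h1, _⟩
      exact lt_trans (Real.exp_pos _) h1
    · intro hx
      obtain ⟨n, hn⟩ := exists_nat_gt |Real.log x|
      have habs := abs_lt.mp hn
      refine ⟨n, ?_, ?_⟩
      · rw [← Real.exp_log hx]
        exact Real.exp_lt_exp.2 (by linarith [habs.1])
      · rw [← Real.exp_log hx]
        exact (Real.exp_le_exp.2 (by linarith [habs.2]))
  have hmono : Monotone (fun n : ℕ => Set.Ioc (Real.exp (-(n:ℝ))) (Real.exp (n:ℝ))) := by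
    intro m n hmn
    have h1 : ((m:ℝ)) ≤ (n:ℝ) := Nat.cast_le.2 hmn
    exact Set.Ioc_subset_Ioc (Real.exp_le_exp.2 (by linarith)) (Real.exp_le_exp.2 h1)
  have Hlim : ∀ θ ∈ Set.Icc θ₁ θ₂, Tendsto (fun n : ℕ =>
      ∫ r in Real.exp (-(n:ℝ))..Real.exp (n:ℝ),
        φ (rayPt θ r) * Complex.exp (-ρ * rayPt θ r) * rayDir θ) atTop (𝓝 (lap φ θ ρ)) := by
    intro θ hθ
    have hfint : IntegrableOn (fun r : ℝ =>
        φ (rayPt θ r) * Complex.exp (-ρ * rayPt θ r) * rayDir θ) (Set.Ioi 0) :=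
      integrable_f hhol hbound hint (hIcc hθ) (by linarith [hstrong θ hθ])
    have hfint' : IntegrableOn (fun r : ℝ =>
        φ (rayPt θ r) * Complex.exp (-ρ * rayPt θ r) * rayDir θ)
        (⋃ n : ℕ, Set.Ioc (Real.exp (-(n:ℝ))) (Real.exp (n:ℝ))) := by rwa [hunion]
    have hten := MeasureTheory.tendsto_setIntegral_of_monotone
      (fun n : ℕ => measurableSet_Ioc) hmono hfint'
    rw [hunion] at hten
    have heq : ∀ n : ℕ, (∫ r in Real.exp (-(n:ℝ))..Real.exp (n:ℝ),
        φ (rayPt θ r) * Complex.exp (-ρ * rayPt θ r) * rayDir θ)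
        = ∫ r in Set.Ioc (Real.exp (-(n:ℝ))) (Real.exp (n:ℝ)),
            φ (rayPt θ r) * Complex.exp (-ρ * rayPt θ r) * rayDir θ := by
      intro n
      apply intervalIntegral.integral_of_le
      exact Real.exp_le_exp.2 (by push_cast; linarith [Nat.cast_nonneg (α := ℝ) n])
    rw [show lap φ θ ρ = ∫ r in Set.Ioi (0:ℝ),
        φ (rayPt θ r) * Complex.exp (-ρ * rayPt θ r) * rayDir θ from rfl]
    simp only [heq]
    exact hten
  -- vertical side at +∞ tends to 0
  obtain ⟨Mα, hMα⟩ := hαloc (Set.Icc θ₁ θ₂) hIcc isCompact_Icc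
  have hMα0 : 0 ≤ Mα := le_trans (abs_nonneg _) (hMα θ₁ (Set.left_mem_Icc.2 h12))
  have VRlim : Tendsto (fun n : ℕ =>
      ∫ y in θ₁..θ₂, g (((n:ℝ) : ℂ) + (y:ℂ) * Complex.I)) atTop (𝓝 0) := by
    rw [tendsto_zero_iff_norm_tendsto_zero]
    have hb : ∀ n : ℕ, ‖∫ y in θ₁..θ₂, g (((n:ℝ) : ℂ) + (y:ℂ) * Complex.I)‖
        ≤ (Mα * (Real.exp (n:ℝ) * Real.exp (-(Real.exp (n:ℝ)) / 2))) * |θ₂ - θ₁| := by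
      intro n
      apply intervalIntegral.norm_integral_le_of_norm_le_const
      intro y hy
      have hy' : y ∈ Set.Icc θ₁ θ₂ := by
        rw [Set.uIoc_of_le h12] at hy
        exact ⟨hy.1.le, hy.2⟩
      have hyab : y ∈ Set.Ioo a b := hIcc hy'
      rw [gval y (n:ℝ)]
      rw [norm_smul, Real.norm_of_nonneg (Real.exp_pos _).le, norm_mul, norm_mul,
        norm_rayDir, mul_one, norm_cexp_neg_mul_rayPt]
      have h1 : ‖φ (rayPt y (Real.exp (n:ℝ)))‖
          ≤ α y * Real.exp ((γ y + 1/2) * Real.exp (n:ℝ)) :=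
        hbound (1/2) (by norm_num) _ (Real.exp_pos _) y hyab
      have h2 : γ y + 1 ≤ (ρ * rayDir y).re := hstrong y hy'
      calc Real.exp (n:ℝ) * (‖φ (rayPt y (Real.exp (n:ℝ)))‖ *
              Real.exp (-((ρ * rayDir y).re * Real.exp (n:ℝ))))
          ≤ Real.exp (n:ℝ) * ((α y * Real.exp ((γ y + 1/2) * Real.exp (n:ℝ))) *
              Real.exp (-((γ y + 1) * Real.exp (n:ℝ)))) := by
            apply mul_le_mul_of_nonneg_left _ (Real.exp_pos _).le
            apply mul_le_mul h1 (Real.exp_le_exp.2 _) (Real.exp_pos _).le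
              (mul_nonneg (hαpos y hyab).le (Real.exp_pos _).le)
            have := mul_le_mul_of_nonneg_right h2 (Real.exp_pos (n:ℝ)).le
            linarith
        _ = α y * (Real.exp (n:ℝ) * Real.exp (-(Real.exp (n:ℝ)) / 2)) := by
            have hE : Real.exp ((γ y + 1/2) * Real.exp (n:ℝ)) *
                Real.exp (-((γ y + 1) * Real.exp (n:ℝ)))
                = Real.exp (-(Real.exp (n:ℝ)) / 2) := by
              rw [← Real.exp_add]; congr 1; ring
            calc Real.exp (n:ℝ) * ((α y * Real.exp ((γ y + 1/2) * Real.exp (n:ℝ))) *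
                Real.exp (-((γ y + 1) * Real.exp (n:ℝ))))
                = α y * (Real.exp (n:ℝ) * (Real.exp ((γ y + 1/2) * Real.exp (n:ℝ)) *
                    Real.exp (-((γ y + 1) * Real.exp (n:ℝ))))) := by ring
              _ = _ := by rw [hE]
        _ ≤ Mα * (Real.exp (n:ℝ) * Real.exp (-(Real.exp (n:ℝ)) / 2)) := by
            apply mul_le_mul_of_nonneg_right _ (by positivity)
            exact (le_abs_self _).trans (hMα y hy')
    have hlim0 : Tendsto (fun n : ℕ =>
        (Mα * (Real.exp (n:ℝ) * Real.exp (-(Real.exp (n:ℝ)) / 2))) * |θ₂ - θ₁|)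
        atTop (𝓝 0) := by
      have base : Tendsto (fun t : ℝ => t * Real.exp (-t)) atTop (𝓝 0) := by
        simpa using Real.tendsto_pow_mul_exp_neg_atTop_nhds_zero 1
      have half : Tendsto (fun t : ℝ => t / 2) atTop atTop :=
        tendsto_id.atTop_div_const (by norm_num)
      have comp1 : Tendsto (fun t : ℝ => (t/2) * Real.exp (-(t/2))) atTop (𝓝 0) :=
        base.comp half
      have comp2 : Tendsto (fun t : ℝ => t * Real.exp (-t / 2)) atTop (𝓝 0) := by
        have := comp1.const_mul (2:ℝ)
        simp only [mul_zero] at this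
        apply this.congr
        intro t
        rw [show -(t/2) = -t/2 by ring]
        ring
      have comp3 : Tendsto (fun n : ℕ => Real.exp (n:ℝ)) atTop atTop :=
        Real.tendsto_exp_atTop.comp tendsto_natCast_atTop_atTop
      have comp4 : Tendsto (fun n : ℕ =>
          Real.exp (n:ℝ) * Real.exp (-(Real.exp (n:ℝ)) / 2)) atTop (𝓝 0) := comp2.comp comp3
      have := (comp4.const_mul Mα).mul_const |θ₂ - θ₁|
      simpa using this
    exact squeeze_zero (fun n => norm_nonneg _) hb hlim0
  -- vertical side at -∞ tends to 0
  have VLlim : Tendsto (fun n : ℕ =>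
      ∫ y in θ₁..θ₂, g (-((n:ℝ) : ℂ) + (y:ℂ) * Complex.I)) atTop (𝓝 0) := by
    rw [Metric.tendsto_atTop]
    intro ε hε
    set ε' := ε / (Real.exp ‖ρ‖ * (|θ₂ - θ₁| + 1)) with hε'
    have hε'pos : 0 < ε' := by
      apply div_pos hε
      positivity
    have htend := hzero θ₁ θ₂ hθ₁.1 h12 hθ₂.2
    rw [Metric.tendsto_nhdsWithin_nhds] at htend
    obtain ⟨δ, hδpos, hδ⟩ := htend ε' hε'pos
    have hto0 : Tendsto (fun n : ℕ => Real.exp (-(n:ℝ))) atTop (𝓝 0) := by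
      apply Real.tendsto_exp_atBot.comp
      exact tendsto_neg_atTop_atBot.comp tendsto_natCast_atTop_atTop
    obtain ⟨N, hN⟩ := eventually_atTop.mp (hto0.eventually (gt_mem_nhds (lt_min hδpos one_pos)))
    refine ⟨N, fun n hn => ?_⟩
    rw [dist_zero_right]
    have hEn := hN n hn
    have hlt1 : Real.exp (-(n:ℝ)) < 1 := lt_of_lt_of_le hEn (min_le_right _ _)
    have hltδ : Real.exp (-(n:ℝ)) < δ := lt_of_lt_of_le hEn (min_le_left _ _)
    have hb : ∀ y ∈ Set.uIoc θ₁ θ₂,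
        ‖g (-((n:ℝ):ℂ) + (y:ℂ) * Complex.I)‖ ≤ ε' * Real.exp ‖ρ‖ := by
      intro y hy
      have hy' : y ∈ Set.Icc θ₁ θ₂ := by
        rw [Set.uIoc_of_le h12] at hy; exact ⟨hy.1.le, hy.2⟩
      have hcast : -((n:ℝ):ℂ) = ((-(n:ℝ) : ℝ) : ℂ) := by push_cast; ring
      rw [hcast, gval y (-(n:ℝ))]
      set E := Real.exp (-(n:ℝ)) with hE
      have hEpos : 0 < E := Real.exp_pos _
      rw [norm_smul, Real.norm_of_nonneg hEpos.le, norm_mul, norm_mul, norm_rayDir, mul_one]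
      have hptnorm : ‖rayPt y E‖ = E := norm_rayPt y hEpos.le
      have hmem : rayPt y E ∈ sectorIcc θ₁ θ₂ := rayPt_mem_sectorIcc hy' hEpos
      have hsmall : dist (rayPt y E) 0 < δ := by rw [dist_zero_right, hptnorm]; exact hltδ
      have hzφ := hδ hmem hsmall
      rw [dist_zero_right] at hzφ
      have h1 : E * ‖φ (rayPt y E)‖ = ‖rayPt y E * φ (rayPt y E)‖ := by
        rw [norm_mul, hptnorm]
      have h2 : ‖Complex.exp (-ρ * rayPt y E)‖ ≤ Real.exp ‖ρ‖ := by
        rw [Complex.norm_exp]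
        apply Real.exp_le_exp.2
        calc (-ρ * rayPt y E).re ≤ |(-ρ * rayPt y E).re| := le_abs_self _
          _ ≤ ‖-ρ * rayPt y E‖ := Complex.abs_re_le_norm _
          _ = ‖ρ‖ * E := by rw [norm_mul, norm_neg, hptnorm]
          _ ≤ ‖ρ‖ * 1 := mul_le_mul_of_nonneg_left hlt1.le (norm_nonneg _)
          _ = ‖ρ‖ := mul_one _
      calc E * (‖φ (rayPt y E)‖ * ‖Complex.exp (-ρ * rayPt y E)‖)
          = (E * ‖φ (rayPt y E)‖) * ‖Complex.exp (-ρ * rayPt y E)‖ := by ring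
        _ ≤ ε' * Real.exp ‖ρ‖ :=
            mul_le_mul (h1 ▸ hzφ.le) h2 (norm_nonneg _) hε'pos.le
    have hnorm := intervalIntegral.norm_integral_le_of_norm_le_const hb
    calc ‖∫ y in θ₁..θ₂, g (-((n:ℝ):ℂ) + (y:ℂ) * Complex.I)‖
        ≤ ε' * Real.exp ‖ρ‖ * |θ₂ - θ₁| := hnorm
      _ < ε := by
          rw [hε', div_mul_eq_mul_div, div_mul_eq_mul_div, div_lt_iff₀ (by positivity)]
          nlinarith [Real.exp_pos ‖ρ‖, abs_nonneg (θ₂ - θ₁), hε]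
  -- assemble everything
  have hm1 : θ₁ ∈ Set.Icc θ₁ θ₂ := Set.left_mem_Icc.2 h12
  have hm2 : θ₂ ∈ Set.Icc θ₁ θ₂ := Set.right_mem_Icc.2 h12
  have lhsTendsto : Tendsto (fun n : ℕ =>
      (∫ x in (-(n:ℝ))..(n:ℝ), g ((x:ℂ) + (θ₁:ℂ) * Complex.I))
        - ∫ x in (-(n:ℝ))..(n:ℝ), g ((x:ℂ) + (θ₂:ℂ) * Complex.I)) atTop
      (𝓝 (lap φ θ₁ ρ - lap φ θ₂ ρ)) := by
    apply ((Hlim θ₁ hm1).sub (Hlim θ₂ hm2)).congr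
    intro n
    rw [Hconv θ₁ hm1 n, Hconv θ₂ hm2 n]
  have rhsTendsto : Tendsto (fun n : ℕ =>
      Complex.I • (∫ y in θ₁..θ₂, g (-((n:ℝ):ℂ) + (y:ℂ) * Complex.I))
        - Complex.I • (∫ y in θ₁..θ₂, g (((n:ℝ):ℂ) + (y:ℂ) * Complex.I))) atTop (𝓝 0) := by
    have := (VLlim.const_smul Complex.I).sub (VRlim.const_smul Complex.I)
    simpa using this
  have final := tendsto_nhds_unique (lhsTendsto.congr (fun n => rect n)) rhsTendsto
  exact sub_eq_zero.mp final

lemma lap_eq (hab : a < b) (hlen : b - a < π)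
    (hγloc : ∀ K : Set ℝ, K ⊆ Set.Ioo a b → IsCompact K → ∃ M : ℝ, ∀ θ ∈ K, |γ θ| ≤ M)
    (hαloc : ∀ K : Set ℝ, K ⊆ Set.Ioo a b → IsCompact K → ∃ M : ℝ, ∀ θ ∈ K, |α θ| ≤ M)
    (hαpos : ∀ θ ∈ Set.Ioo a b, 0 < α θ)
    (hhol : DifferentiableOn ℂ φ (sectorIoo a b))
    (hbound : ∀ ε : ℝ, 0 < ε → ∀ r : ℝ, 0 < r → ∀ θ ∈ Set.Ioo a b,
      ‖φ (rayPt θ r)‖ ≤ α θ * Real.exp ((γ θ + ε) * r))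
    (hint : ∀ θ ∈ Set.Ioo a b, IntegrableOn (fun r : ℝ => φ (rayPt θ r)) (Set.Ioc 0 1))
    (hzero : ∀ a' b' : ℝ, a < a' → a' ≤ b' → b' < b →
      Tendsto (fun t : ℂ => t * φ t) (𝓝[sectorIcc a' b'] 0) (𝓝 0))
    {θ₁ θ₂ : ℝ} (hθ₁ : θ₁ ∈ Set.Ioo a b) (hθ₂ : θ₂ ∈ Set.Ioo a b) (h12 : θ₁ ≤ θ₂)
    {ρ : ℂ} (h1 : γ θ₁ < (ρ * rayDir θ₁).re) (h2 : γ θ₂ < (ρ * rayDir θ₂).re) :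
    lap φ θ₁ ρ = lap φ θ₂ ρ := by
  have hIcc : Set.Icc θ₁ θ₂ ⊆ Set.Ioo a b := fun θ hθ =>
    ⟨lt_of_lt_of_le hθ₁.1 hθ.1, lt_of_le_of_lt hθ.2 hθ₂.2⟩
  set v : ℂ := (starRingEnd ℂ) (rayDir θ₁) + (starRingEnd ℂ) (rayDir θ₂) with hv
  -- computation of Re(conj(e^{iθ'}) e^{iθ})
  have hconj : ∀ θ' θ : ℝ, ((starRingEnd ℂ) (rayDir θ') * rayDir θ).re
      = Real.cos (θ - θ') := by
    intro θ' θ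
    rw [rayDir, rayDir, ← Complex.exp_conj]
    rw [show (starRingEnd ℂ) ((θ':ℂ) * Complex.I) = -((θ':ℂ) * Complex.I) by
      rw [map_mul, Complex.conj_I, Complex.conj_ofReal]; ring]
    rw [← Complex.exp_add]
    rw [show -((θ':ℂ) * Complex.I) + (θ:ℂ) * Complex.I = ((θ - θ' : ℝ) : ℂ) * Complex.I by
      push_cast; ring]
    exact Complex.exp_ofReal_mul_I_re _
  have hvre : ∀ θ : ℝ, (v * rayDir θ).re = Real.cos (θ - θ₁) + Real.cos (θ - θ₂) := by
    intro θ
    rw [hv, add_mul, Complex.add_re, hconj, hconj]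
  set κ : ℝ := 2 * Real.cos ((θ₂ - θ₁) / 2) ^ 2 with hκ
  have hhalf : (θ₂ - θ₁) / 2 < π / 2 := by
    have : θ₂ - θ₁ < b - a := by
      cases hθ₁ with | intro l r => cases hθ₂ with | intro l2 r2 => linarith
    linarith
  have hcoshalf : 0 < Real.cos ((θ₂ - θ₁) / 2) := by
    apply Real.cos_pos_of_mem_Ioo
    exact ⟨by have := Real.pi_pos; linarith, hhalf⟩
  have hκpos : 0 < κ := by rw [hκ]; positivity
  -- lower bound for Re(v e^{iθ}) on the closed subsector
  have hvκ : ∀ θ ∈ Set.Icc θ₁ θ₂, κ ≤ (v * rayDir θ).re := by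
    intro θ hθ
    rw [hvre θ]
    rw [Real.cos_add_cos]
    have e1 : (θ - θ₁ + (θ - θ₂)) / 2 = θ - (θ₁ + θ₂) / 2 := by ring
    have e2 : (θ - θ₁ - (θ - θ₂)) / 2 = (θ₂ - θ₁) / 2 := by ring
    rw [e1, e2]
    have habs : |θ - (θ₁ + θ₂) / 2| ≤ (θ₂ - θ₁) / 2 := by
      rw [abs_le]
      cases hθ with | intro l r => constructor <;> linarith
    have hmono : Real.cos ((θ₂ - θ₁) / 2) ≤ Real.cos |θ - (θ₁ + θ₂) / 2| := by
      apply Real.cos_le_cos_of_nonneg_of_le_pi (abs_nonneg _) _ habs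
      have := Real.pi_pos
      linarith
    rw [Real.cos_abs] at hmono
    have hcosθ : 0 < Real.cos (θ - (θ₁ + θ₂) / 2) := lt_of_lt_of_le hcoshalf hmono
    rw [hκ]
    calc 2 * Real.cos ((θ₂ - θ₁) / 2) ^ 2
        = 2 * Real.cos ((θ₂ - θ₁) / 2) * Real.cos ((θ₂ - θ₁) / 2) := by ring
      _ ≤ 2 * Real.cos (θ - (θ₁ + θ₂) / 2) * Real.cos ((θ₂ - θ₁) / 2) := by
          apply mul_le_mul_of_nonneg_right _ hcoshalf.le
          linarith
  -- local bound for γ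
  obtain ⟨M, hM⟩ := hγloc (Set.Icc θ₁ θ₂) hIcc isCompact_Icc
  set s₀ : ℝ := max 1 ((M + 1 + ‖ρ‖) / κ) with hs₀
  have hs₀pos : (0:ℝ) < s₀ := lt_of_lt_of_le zero_lt_one (le_max_left _ _)
  -- expansion of the real part
  have hre_expand : ∀ (s w : ℂ), ((ρ + s * v) * w).re = (ρ * w).re + (s * (v * w)).re := by
    intro s w
    rw [show (ρ + s * v) * w = ρ * w + s * (v * w) by ring, Complex.add_re]
  have hre_real : ∀ (t : ℝ) (w : ℂ),
      (((t:ℝ):ℂ) * (v * w)).re = t * (v * w).re := fun t w => Complex.re_ofReal_mul t _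
  -- the domain U
  set U : Set ℂ := {s : ℂ | γ θ₁ < ((ρ + s * v) * rayDir θ₁).re}
      ∩ {s : ℂ | γ θ₂ < ((ρ + s * v) * rayDir θ₂).re} with hU
  have hUopen : IsOpen U := by
    apply IsOpen.inter <;>
    · apply isOpen_lt continuous_const
      apply Complex.continuous_re.comp
      fun_prop
  have hUconvex : Convex ℝ U := by
    have hpiece : ∀ (w : ℂ) (c : ℝ), Convex ℝ {s : ℂ | c < ((ρ + s * v) * w).re} := by
      intro w c
      have hlin : IsLinearMap ℝ (fun s : ℂ => (s * (v * w)).re) := by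
        constructor
        · intro x y; rw [add_mul, Complex.add_re]
        · intro cc x
          rw [show cc • x * (v * w) = cc • (x * (v * w)) by rw [smul_mul_assoc],
            Complex.real_smul, Complex.re_ofReal_mul, smul_eq_mul]
      have heq : {s : ℂ | c < ((ρ + s * v) * w).re}
          = (fun s : ℂ => (s * (v * w)).re) ⁻¹' (Set.Ioi (c - (ρ * w).re)) := by
        ext s
        simp only [Set.mem_setOf_eq, Set.mem_preimage, Set.mem_Ioi]
        rw [hre_expand s w]
        constructor <;> intro h <;> linarith
      rw [heq]
      exact (convex_Ioi _).is_linear_preimage hlin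
    exact (hpiece (rayDir θ₁) (γ θ₁)).inter (hpiece (rayDir θ₂) (γ θ₂))
  have hU0 : (0:ℂ) ∈ U := by
    constructor <;> simp only [Set.mem_setOf_eq, zero_mul, add_zero] <;> assumption
  have hUreal : ∀ t : ℝ, 0 ≤ t → ((t:ℝ):ℂ) ∈ U := by
    intro t ht
    have haux : ∀ θ, θ ∈ Set.Icc θ₁ θ₂ → γ θ < (ρ * rayDir θ).re →
        γ θ < ((ρ + ((t:ℝ):ℂ) * v) * rayDir θ).re := by
      intro θ hθ hγθ
      rw [hre_expand, hre_real]
      have h3 := hvκ θ hθ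
      nlinarith [hκpos]
    exact ⟨haux θ₁ (Set.left_mem_Icc.2 h12) h1, haux θ₂ (Set.right_mem_Icc.2 h12) h2⟩
  -- strong domination for t ≥ s₀
  have hstrongt : ∀ t : ℝ, s₀ ≤ t → ∀ θ ∈ Set.Icc θ₁ θ₂,
      γ θ + 1 ≤ ((ρ + ((t:ℝ):ℂ) * v) * rayDir θ).re := by
    intro t ht θ hθ
    rw [hre_expand, hre_real]
    have hρre : -‖ρ‖ ≤ (ρ * rayDir θ).re := by
      have := Complex.abs_re_le_norm (ρ * rayDir θ)
      have hn : ‖ρ * rayDir θ‖ = ‖ρ‖ := by rw [norm_mul, norm_rayDir, mul_one]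
      rw [hn] at this
      linarith [(abs_le.mp (le_refl |(ρ * rayDir θ).re|)), neg_abs_le (ρ * rayDir θ).re,
        (abs_le.mp this).1]
    have ht0 : 0 < t := lt_of_lt_of_le hs₀pos ht
    have hκθ := hvκ θ hθ
    have htκ : M + 1 + ‖ρ‖ ≤ t * (v * rayDir θ).re := by
      have h4 : (M + 1 + ‖ρ‖) / κ ≤ t := le_trans (le_max_right _ _) ht
      have h5 : (M + 1 + ‖ρ‖) / κ * κ ≤ t * κ := mul_le_mul_of_nonneg_right h4 hκpos.le
      rw [div_mul_cancel₀ _ (ne_of_gt hκpos)] at h5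
      calc M + 1 + ‖ρ‖ ≤ t * κ := h5
        _ ≤ t * (v * rayDir θ).re := mul_le_mul_of_nonneg_left hκθ ht0.le
    have hγθ := hM θ hθ
    have := (abs_le.mp hγθ).2
    linarith
  -- the function G
  set G : ℂ → ℂ := fun s => lap φ θ₁ (ρ + s * v) - lap φ θ₂ (ρ + s * v) with hG
  have hGdiff : DifferentiableOn ℂ G U := by
    intro s hs
    have hinner : DifferentiableAt ℂ (fun s : ℂ => ρ + s * v) s := by fun_prop
    have hd1 : DifferentiableAt ℂ (fun s : ℂ => lap φ θ₁ (ρ + s * v)) s :=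
      DifferentiableAt.comp (g := lap φ θ₁) (f := fun s : ℂ => ρ + s * v) s (lap_diffAt hhol hbound hint hθ₁ hs.1) hinner
    have hd2 : DifferentiableAt ℂ (fun s : ℂ => lap φ θ₂ (ρ + s * v)) s :=
      DifferentiableAt.comp (g := lap φ θ₂) (f := fun s : ℂ => ρ + s * v) s (lap_diffAt hhol hbound hint hθ₂ hs.2) hinner
    exact (hd1.sub hd2).differentiableWithinAt
  have hGanalytic : AnalyticOnNhd ℂ G U := hGdiff.analyticOnNhd hUopen
  -- G vanishes on the real ray t ≥ s₀
  have hGzero : ∀ t : ℝ, s₀ ≤ t → G ((t:ℝ):ℂ) = 0 := by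
    intro t ht
    rw [hG]
    simp only
    rw [sub_eq_zero]
    exact lap_eq_strong hab hαpos hhol hbound hint hαloc hzero hθ₁ hθ₂ h12 (hstrongt t ht)
  -- frequently zero near x₀
  set x₀ : ℂ := ((s₀ + 1 : ℝ) : ℂ) with hx₀
  have hx₀U : x₀ ∈ U := hUreal (s₀ + 1) (by linarith)
  have hfreq : ∃ᶠ z in 𝓝[≠] x₀, G z = 0 := by
    have hseq : Tendsto (fun k : ℕ => ((s₀ + 1 + 1 / (k + 1) : ℝ) : ℂ)) atTop (𝓝[≠] x₀) := by
      apply tendsto_nhdsWithin_of_tendsto_nhds_of_eventually_within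
      · rw [hx₀]
        have h6 : Tendsto (fun k : ℕ => s₀ + 1 + 1 / ((k:ℝ) + 1)) atTop (𝓝 (s₀ + 1)) := by
          have := (tendsto_const_nhds (x := s₀ + 1) (f := atTop (α := ℕ))).add
            tendsto_one_div_add_atTop_nhds_zero_nat
          simpa using this
        exact (Complex.continuous_ofReal.tendsto _).comp h6
      · apply Eventually.of_forall
        intro k
        simp only [Set.mem_compl_iff, Set.mem_singleton_iff, hx₀]
        intro hcontra
        have := Complex.ofReal_injective hcontra
        have hk : (0:ℝ) < 1 / ((k:ℝ) + 1) := by positivity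
        linarith
    apply hseq.frequently
    apply Frequently.of_forall
    intro k
    apply hGzero
    have hk : (0:ℝ) ≤ 1 / ((k:ℝ) + 1) := by positivity
    linarith
  have hEqOn : Set.EqOn G 0 U :=
    hGanalytic.eqOn_zero_of_preconnected_of_frequently_eq_zero
      hUconvex.isPreconnected hx₀U hfreq
  have hG0 := hEqOn hU0
  rw [hG] at hG0
  simp only [zero_mul, add_zero, Pi.zero_apply] at hG0
  exact sub_eq_zero.mp hG0

end Stmt7

/-- Direction-independence of the Laplace transform: for `φ` holomorphic
on the sector `S` of directions in an open interval `I = (a, b)` of length `< π`,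
satisfying the exponential bound (a), ray-integrability near the origin (b), and
`t φ(t) → 0` as `t → 0` within closed subsectors (c), the Laplace transforms along any
two directions `θ₁, θ₂ ∈ I` agree at every `ρ` with `Re(ρ e^{iθ₁}) > γ(θ₁)` and
`Re(ρ e^{iθ₂}) > γ(θ₂)`. -/
theorem stmt_7 (a b : ℝ) (hab : a < b) (hlen : b - a < π)
    (γ α : ℝ → ℝ)
    (hγloc : ∀ K : Set ℝ, K ⊆ Set.Ioo a b → IsCompact K → ∃ M : ℝ, ∀ θ ∈ K, |γ θ| ≤ M)
    (hαloc : ∀ K : Set ℝ, K ⊆ Set.Ioo a b → IsCompact K → ∃ M : ℝ, ∀ θ ∈ K, |α θ| ≤ M)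
    (hαpos : ∀ θ ∈ Set.Ioo a b, 0 < α θ)
    (φ : ℂ → ℂ)
    (hhol : DifferentiableOn ℂ φ (sectorIoo a b))
    (hbound : ∀ ε : ℝ, 0 < ε → ∀ r : ℝ, 0 < r → ∀ θ ∈ Set.Ioo a b,
      ‖φ (rayPt θ r)‖ ≤ α θ * Real.exp ((γ θ + ε) * r))
    (hint : ∀ θ ∈ Set.Ioo a b,
      IntegrableOn (fun r : ℝ => φ (rayPt θ r)) (Set.Ioc 0 1))
    (hzero : ∀ a' b' : ℝ, a < a' → a' ≤ b' → b' < b →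
      Tendsto (fun t : ℂ => t * φ t) (𝓝[sectorIcc a' b'] 0) (𝓝 0)) :
    ∀ θ₁ ∈ Set.Ioo a b, ∀ θ₂ ∈ Set.Ioo a b, ∀ ρ : ℂ,
      γ θ₁ < (ρ * rayDir θ₁).re → γ θ₂ < (ρ * rayDir θ₂).re →
      (∫ r in Set.Ioi (0 : ℝ),
          φ (rayPt θ₁ r) * Complex.exp (-ρ * rayPt θ₁ r) * rayDir θ₁)
        = ∫ r in Set.Ioi (0 : ℝ),
            φ (rayPt θ₂ r) * Complex.exp (-ρ * rayPt θ₂ r) * rayDir θ₂ := by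
  intro θ₁ hθ₁ θ₂ hθ₂ ρ h1 h2
  show Stmt7.lap φ θ₁ ρ = Stmt7.lap φ θ₂ ρ
  rcases le_total θ₁ θ₂ with h | h
  · exact Stmt7.lap_eq hab hlen hγloc hαloc hαpos hhol hbound hint hzero hθ₁ hθ₂ h h1 h2
  · exact (Stmt7.lap_eq hab hlen hγloc hαloc hαpos hhol hbound hint hzero hθ₂ hθ₁ h h2 h1).symm
end

section
/- Let d be a positive integer, (λ_n)_{n≥1} a nondecreasing sequence of positive real numbers with λ_n/n^{2/d} → L as n → ∞ for some L > 0, and s_0 < 0 real. For each i ≥ 0, the series a_i = Σ_{n≥1} e^{s_0 λ_n} (−λ_n)^i converges absolutely. Let F(λ) = Σ_{n≥1} e^{s_0 λ_n} / (λ + λ_n). Then F admits Σ_{i≥0} a_i λ^{−i−1} as a uniform 1-Gevrey asymptotic expansion on subsectors: for every closed subinterval J ⊂ (−π/2, π/2) there exist constants L₀, M > 0 such that for every integer N ≥ 1 and every λ belonging to ⋃_{θ∈J} {λ ∈ ℂ : Re(λ e^{iθ}) > 0}, one has |F(λ) − Σ_{i=0}^{N−1} a_i λ^{−i−1}| ≤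 L₀ M^N N! |λ|^{−N−1}. -/
open Filter MeasureTheory Set
open scoped Topology Real

lemma key_tel (N : ℕ) (l m : ℂ) (hl : l ≠ 0) (h : l + m ≠ 0) :
    1/(l+m) - ∑ i ∈ Finset.range N, (-m)^i / l^(i+1) = (-m)^N / (l^N * (l+m)) := by
  induction N with
  | zero => simp
  | succ n ih =>
    rw [Finset.sum_range_succ, ← sub_sub, ih]
    have hln : l ^ n ≠ 0 := pow_ne_zero _ hl
    field_simp
    ring

lemma exp_pow_bound {c x : ℝ} (hc : 0 < c) (hx : 0 ≤ x) (N : ℕ) :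
    x ^ N * Real.exp (-(c * x)) ≤ (1/c) ^ N * N.factorial := by
  have h := Real.pow_div_factorial_le_exp (c*x) (mul_nonneg hc.le hx) N
  have hf : (0:ℝ) < N.factorial := by positivity
  have he : (0:ℝ) < Real.exp (c*x) := Real.exp_pos _
  rw [div_le_iff₀ hf] at h
  rw [Real.exp_neg]
  calc x ^ N * (Real.exp (c*x))⁻¹ = ((c*x)^N) * ((Real.exp (c*x))⁻¹ * (1/c)^N) := by
        rw [mul_pow]; field_simp; rw [mul_assoc, ← mul_pow, mul_one_div_cancel hc.ne', one_pow, mul_one]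
    _ ≤ (Real.exp (c*x) * N.factorial) * ((Real.exp (c*x))⁻¹ * (1/c)^N) := by
        apply mul_le_mul_of_nonneg_right h (by positivity)
    _ = (1/c)^N * N.factorial := by field_simp

lemma exp_le_fact_div {x : ℝ} (hx : 0 < x) (m : ℕ) :
    Real.exp (-x) ≤ m.factorial / x ^ m := by
  have h := Real.pow_div_factorial_le_exp x hx.le m
  rw [div_le_iff₀ (by positivity : (0:ℝ) < m.factorial)] at h
  rw [Real.exp_neg, le_div_iff₀ (by positivity)]
  calc (Real.exp x)⁻¹ * x ^ m ≤ (Real.exp x)⁻¹ * (Real.exp x * m.factorial) := by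
        apply mul_le_mul_of_nonneg_left h (by positivity)
    _ = m.factorial := by field_simp

lemma summable_exp_lam (d : ℕ) (hd : 0 < d) (lam : ℕ → ℝ) (hpos : ∀ n, 0 < lam n)
    (L : ℝ) (hL : 0 < L)
    (hweyl : Tendsto (fun n : ℕ => lam n / (((n : ℝ) + 1) ^ ((2 : ℝ) / (d : ℝ))))
      atTop (𝓝 L)) (c : ℝ) (hc : 0 < c) :
    Summable (fun n => Real.exp (-(c * lam n))) := by
  have hdR : (0:ℝ) < (d:ℝ) := by exact_mod_cast hd
  -- eventual lower bound on lam
  have hev : ∀ᶠ n in atTop, L/2 ≤ lam n / (((n : ℝ) + 1) ^ ((2 : ℝ) / (d : ℝ))) :=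
    hweyl.eventually_const_le (by linarith)
  obtain ⟨n0, hn0⟩ := (eventually_atTop.1 hev)
  have hrp : ∀ n : ℕ, (0:ℝ) < (((n : ℝ) + 1) ^ ((2 : ℝ) / (d : ℝ))) := fun n =>
    Real.rpow_pos_of_pos (by positivity) _
  have hlow : ∀ n ≥ n0, (L/2) * (((n : ℝ) + 1) ^ ((2 : ℝ) / (d : ℝ))) ≤ lam n := by
    intro n hn
    have := hn0 n hn
    rw [le_div_iff₀ (hrp n)] at this
    linarith
  -- rpow identity
  have hrid : ∀ n : ℕ, ((((n : ℝ) + 1) ^ ((2 : ℝ) / (d : ℝ)))) ^ d = ((n:ℝ)+1)^2 := by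
    intro n
    rw [← Real.rpow_natCast ((((n : ℝ) + 1) ^ ((2 : ℝ) / (d : ℝ)))) d,
      ← Real.rpow_mul (by positivity)]
    rw [show ((2:ℝ)/(d:ℝ)) * (d:ℝ) = ((2:ℕ):ℝ) by field_simp; norm_num, Real.rpow_natCast]
  set K : ℝ := d.factorial / (c * L/2)^d with hK
  have hKpos : 0 < K := by positivity
  -- majorant summable
  have hmaj : Summable (fun n : ℕ => K * (1/((n:ℝ)+1)^2)) := by
    apply Summable.mul_left
    have := Real.summable_one_div_nat_pow.2 (le_refl 2)
    exact_mod_cast (summable_nat_add_iff 1).2 this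
  rw [← summable_nat_add_iff n0]
  apply Summable.of_nonneg_of_le (fun n => (Real.exp_pos _).le) _ (hmaj.comp_injective (add_left_injective n0))
  intro n
  simp only [Function.comp]
  set m := n + n0 with hm
  have h1 : (L/2) * (((m : ℝ) + 1) ^ ((2 : ℝ) / (d : ℝ))) ≤ lam m := hlow m (Nat.le_add_left _ _)
  have hX := hrp m
  set X := ((m : ℝ) + 1) ^ ((2 : ℝ) / (d : ℝ)) with hXdef
  have h2 : Real.exp (-(c * lam m)) ≤ Real.exp (-((c*L/2) * X)) := by
    apply Real.exp_le_exp.2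
    have : (c*L/2) * X ≤ c * lam m := by
      have := mul_le_mul_of_nonneg_left h1 hc.le
      nlinarith
    linarith
  have h3 := exp_le_fact_div (x := (c*L/2)*X) (by positivity) d
  have h4 : ((c*L/2)*X)^d = (c*L/2)^d * ((m:ℝ)+1)^2 := by rw [mul_pow, hrid m]
  calc Real.exp (-(c * lam m)) ≤ (d.factorial : ℝ) / ((c*L/2)*X)^d := h2.trans h3
    _ = K * (1/((m:ℝ)+1)^2) := by rw [h4, hK]; field_simp

lemma sector_bounds {A B θ : ℝ} (hA : -(π/2) < A) (hAB : A ≤ B) (hB : B < π/2)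
    (hθ : θ ∈ Set.Icc A B) {z : ℂ}
    (hz : 0 < (z * Complex.exp ((θ:ℂ) * Complex.I)).re) (t : ℝ) (ht : 0 < t) :
    Real.cos (max |A| |B|) * t ≤ ‖z + (t:ℂ)‖ ∧
    Real.cos (max |A| |B|) * ‖z‖ ≤ ‖z + (t:ℂ)‖ := by
  set m := max |A| |B| with hmdef
  have hm0 : 0 ≤ m := le_trans (abs_nonneg A) (le_max_left _ _)
  have hm : m < π/2 := by
    have h1 : |A| < π/2 := abs_lt.2 ⟨hA, lt_of_le_of_lt hAB hB⟩
    have h2 : |B| < π/2 := abs_lt.2 ⟨lt_of_lt_of_le hA hAB, hB⟩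
    exact max_lt h1 h2
  have hθm : |θ| ≤ m := by
    rcases hθ with ⟨h1, h2⟩
    rw [abs_le]
    constructor
    · calc -m ≤ -|A| := neg_le_neg (le_max_left _ _)
        _ ≤ A := neg_abs_le A
        _ ≤ θ := h1
    · calc θ ≤ B := h2
        _ ≤ |B| := le_abs_self B
        _ ≤ m := le_max_right _ _
  set c := Real.cos m with hcdef
  have hc : 0 < c := Real.cos_pos_of_mem_Ioo ⟨by linarith, hm⟩
  have hc1 : c ≤ 1 := Real.cos_le_one m
  have hcosθ : c ≤ Real.cos θ := by
    rw [← Real.cos_abs θ]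
    exact Real.cos_le_cos_of_nonneg_of_le_pi (abs_nonneg θ) (by linarith [Real.pi_pos]) hθm
  have hsinm : 0 ≤ Real.sin m := Real.sin_nonneg_of_nonneg_of_le_pi hm0 (by linarith [Real.pi_pos])
  have hsinθ : |Real.sin θ| ≤ Real.sin m := by
    rw [abs_le]
    have hθ1 : -(π/2) ≤ θ := by linarith [abs_le.1 hθm |>.1]
    have hθ2 : θ ≤ π/2 := by linarith [abs_le.1 hθm |>.2]
    constructor
    · have := Real.sin_le_sin_of_le_of_le_pi_div_two (by linarith : -(π/2) ≤ -m) hθ2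
        (by linarith [abs_le.1 hθm |>.1] : -m ≤ θ)
      rw [Real.sin_neg] at this; linarith
    · exact Real.sin_le_sin_of_le_of_le_pi_div_two hθ1 (le_of_lt hm) (abs_le.1 hθm |>.2)
  have hre : (z * Complex.exp ((θ:ℂ) * Complex.I)).re
      = z.re * Real.cos θ - z.im * Real.sin θ := by
    rw [Complex.mul_re, Complex.exp_ofReal_mul_I_re, Complex.exp_ofReal_mul_I_im]
  rw [hre] at hz
  have hz2 : ‖z‖^2 = z.re^2 + z.im^2 := by
    rw [Complex.sq_norm, Complex.normSq_apply]; ring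
  have hzt2 : ‖z + (t:ℂ)‖^2 = (z.re + t)^2 + z.im^2 := by
    rw [Complex.sq_norm, Complex.normSq_apply]
    simp [Complex.add_re, Complex.add_im]
    ring
  constructor
  · -- c * t ≤ ‖z + t‖
    have h1 : ((z + (t:ℂ)) * Complex.exp ((θ:ℂ) * Complex.I)).re
        = (z.re * Real.cos θ - z.im * Real.sin θ) + t * Real.cos θ := by
      rw [Complex.mul_re, Complex.exp_ofReal_mul_I_re, Complex.exp_ofReal_mul_I_im]
      simp [Complex.add_re, Complex.add_im]
      ring
    have h2 : ((z + (t:ℂ)) * Complex.exp ((θ:ℂ) * Complex.I)).re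
        ≤ ‖z + (t:ℂ)‖ := by
      calc ((z + (t:ℂ)) * Complex.exp ((θ:ℂ) * Complex.I)).re
          ≤ ‖(z + (t:ℂ)) * Complex.exp ((θ:ℂ) * Complex.I)‖ := Complex.re_le_norm _
        _ = ‖z + (t:ℂ)‖ := by
            rw [norm_mul, Complex.norm_exp_ofReal_mul_I, mul_one]
    rw [h1] at h2
    nlinarith
  · -- c * ‖z‖ ≤ ‖z + t‖
    have hn1 : 0 ≤ ‖z + (t:ℂ)‖ := norm_nonneg _
    have hn2 : 0 ≤ ‖z‖ := norm_nonneg _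
    rcases le_or_gt 0 z.re with hre0 | hre0
    · have e2 : ‖z‖^2 ≤ ‖z + (t:ℂ)‖^2 := by rw [hz2, hzt2]; nlinarith
      have : ‖z‖ ≤ ‖z + (t:ℂ)‖ :=
        (pow_le_pow_iff_left₀ hn2 hn1 two_ne_zero).1 e2
      nlinarith
    · -- z.re < 0
      have key : (-z.re) * c ≤ |z.im| * Real.sin m := by
        have h1 : (-z.re) * Real.cos θ < (-z.im) * Real.sin θ := by nlinarith
        have h2 : (-z.im) * Real.sin θ ≤ |z.im| * Real.sin m := by
          calc (-z.im) * Real.sin θ ≤ |(-z.im) * Real.sin θ| := le_abs_self _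
            _ = |z.im| * |Real.sin θ| := by rw [abs_mul, abs_neg]
            _ ≤ |z.im| * Real.sin m := by
                exact mul_le_mul_of_nonneg_left hsinθ (abs_nonneg _)
        have h3 : (-z.re) * c ≤ (-z.re) * Real.cos θ :=
          mul_le_mul_of_nonneg_left hcosθ (by linarith)
        linarith
      have hsq : ((-z.re) * c)^2 ≤ (|z.im| * Real.sin m)^2 :=
        pow_le_pow_left₀ (mul_nonneg (by linarith) hc.le) key 2
      have hsc : Real.sin m ^ 2 + c ^ 2 = 1 := Real.sin_sq_add_cos_sq m
      have him : |z.im|^2 = z.im^2 := sq_abs _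
      have e1 : c^2 * z.re^2 ≤ z.im^2 * Real.sin m ^ 2 := by
        rw [mul_pow, mul_pow, neg_sq, him] at hsq
        linarith
      have e15 : z.im^2 * Real.sin m ^ 2 + c^2 * z.im^2 = z.im^2 := by
        linear_combination z.im^2 * hsc
      have e2 : (c * ‖z‖)^2 ≤ ‖z + (t:ℂ)‖^2 := by
        rw [mul_pow, hz2, hzt2]
        have h0 : 0 ≤ (z.re + t)^2 := sq_nonneg _
        linarith [e1, e15, h0]
      exact (pow_le_pow_iff_left₀ (mul_nonneg hc.le hn2) hn1 two_ne_zero).1 e2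


/-- For `s₀ < 0`, each `a_i = Σ_{n≥1} e^{s₀ λ_n} (-λ_n)^i` converges
absolutely, and `F(λ) = Σ_{n≥1} e^{s₀ λ_n}/(λ + λ_n)` admits `Σ_{i≥0} a_i λ^{-i-1}` as
a uniform 1-Gevrey asymptotic expansion on the subsectors attached to each closed
subinterval `J = [A, B] ⊂ (-π/2, π/2)`: there are `L₀, M > 0` with
`|F(λ) - Σ_{i<N} a_i λ^{-i-1}| ≤ L₀ M^N N! |λ|^{-N-1}` for all `N ≥ 1` and all `λ`
in `⋃_{θ∈J} {Re(λ e^{iθ}) > 0}`. -/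
theorem stmt_10 (d : ℕ) (hd : 0 < d) (lam : ℕ → ℝ) (hpos : ∀ n, 0 < lam n)
    (hmono : Monotone lam) (L : ℝ) (hL : 0 < L)
    (hweyl : Tendsto (fun n : ℕ => lam n / (((n : ℝ) + 1) ^ ((2 : ℝ) / (d : ℝ))))
      atTop (𝓝 L))
    (s0 : ℝ) (hs0 : s0 < 0) :
    (∀ i : ℕ, Summable fun n : ℕ =>
      ‖Complex.exp ((s0 : ℂ) * (lam n : ℂ)) * (-(lam n : ℂ)) ^ i‖) ∧
    ∀ A B : ℝ, -(π / 2) < A → A ≤ B → B < π / 2 →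
      ∃ L₀ M : ℝ, 0 < L₀ ∧ 0 < M ∧
        ∀ N : ℕ, 1 ≤ N → ∀ lambda : ℂ,
          (∃ θ ∈ Set.Icc A B, 0 < (lambda * Complex.exp ((θ : ℂ) * Complex.I)).re) →
          ‖(∑' n : ℕ, Complex.exp ((s0 : ℂ) * (lam n : ℂ)) / (lambda + (lam n : ℂ))) -
              ∑ i ∈ Finset.range N,
                (∑' n : ℕ, Complex.exp ((s0 : ℂ) * (lam n : ℂ)) * (-(lam n : ℂ)) ^ i) /
                  lambda ^ (i + 1)‖
            ≤ L₀ * M ^ N * (Nat.factorial N : ℝ) / ‖lambda‖ ^ (N + 1) := by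
  set c0 : ℝ := -s0 with hc0def
  have hc0 : 0 < c0 := neg_pos.2 hs0
  -- basic summability
  have hSc : ∀ c : ℝ, 0 < c → Summable (fun n => Real.exp (-(c * lam n))) :=
    fun c hc => summable_exp_lam d hd lam hpos L hL hweyl c hc
  have hS2 : Summable (fun n => Real.exp (-(c0/2 * lam n))) := hSc (c0/2) (by linarith)
  -- norm computation
  have norm_eq : ∀ (i n : ℕ), ‖Complex.exp ((s0:ℂ)*(lam n:ℂ)) * (-(lam n:ℂ))^i‖
      = Real.exp (s0 * lam n) * lam n ^ i := by
    intro i n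
    rw [norm_mul, norm_pow, norm_neg,
      Complex.norm_exp, ← Complex.ofReal_mul, Complex.ofReal_re, Complex.norm_real, Real.norm_eq_abs,
      abs_of_pos (hpos n)]
  -- per-term factorial bound
  have hfb : ∀ (N : ℕ) (n : ℕ), lam n ^ N * Real.exp (-(c0/2 * lam n)) ≤ (2/c0)^N * N.factorial := by
    intro N n
    have h := exp_pow_bound (c := c0/2) (x := lam n) (by linarith) (hpos n).le N
    have : (1/(c0/2) : ℝ) = 2/c0 := one_div_div c0 2
    rwa [this] at h
  -- part 1
  have part1 : ∀ i : ℕ, Summable fun n : ℕ =>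
      ‖Complex.exp ((s0 : ℂ) * (lam n : ℂ)) * (-(lam n : ℂ)) ^ i‖ := by
    intro i
    apply Summable.of_nonneg_of_le (fun n => norm_nonneg _)
      (f := fun n => Real.exp (-(c0/2 * lam n)) * ((2/c0)^i * i.factorial))
    · intro n
      rw [norm_eq i n]
      have h1 : s0 * lam n = -(c0/2 * lam n) + -(c0/2 * lam n) := by rw [hc0def]; ring
      rw [h1, Real.exp_add]
      have := hfb i n
      calc Real.exp (-(c0/2*lam n)) * Real.exp (-(c0/2*lam n)) * lam n ^ i
          = Real.exp (-(c0/2*lam n)) * (lam n ^ i * Real.exp (-(c0/2*lam n))) := by ring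
        _ ≤ Real.exp (-(c0/2*lam n)) * ((2/c0)^i * i.factorial) := by
            exact mul_le_mul_of_nonneg_left this (Real.exp_pos _).le
    · exact hS2.mul_right _
  refine ⟨part1, ?_⟩
  intro A B hA hAB hB
  set m := max |A| |B| with hmdef
  set c := Real.cos m with hcdef
  have hm0 : 0 ≤ m := le_trans (abs_nonneg A) (le_max_left _ _)
  have hm : m < π/2 := by
    have h1 : |A| < π/2 := abs_lt.2 ⟨hA, lt_of_le_of_lt hAB hB⟩
    have h2 : |B| < π/2 := abs_lt.2 ⟨lt_of_lt_of_le hA hAB, hB⟩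
    exact max_lt h1 h2
  have hc : 0 < c := Real.cos_pos_of_mem_Ioo ⟨by linarith, hm⟩
  set S : ℝ := ∑' n, Real.exp (-(c0/2 * lam n)) with hSdef
  have hSpos : 0 < S := by
    have := Summable.tsum_pos hS2 (fun n => (Real.exp_pos _).le) 0 (Real.exp_pos _)
    simpa [hSdef] using this
  refine ⟨S / c, 2/c0, by positivity, by positivity, ?_⟩
  intro N hN lambda ⟨θ, hθ, hzre⟩
  -- geometry
  have hsec := fun (t : ℝ) (ht : 0 < t) => sector_bounds hA hAB hB hθ hzre t ht
  have hlam0 : lambda ≠ 0 := by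
    intro h
    rw [h, zero_mul] at hzre
    simp at hzre
  have hnl : 0 < ‖lambda‖ := norm_pos_iff.2 hlam0
  have hdenpos : ∀ n : ℕ, (0:ℝ) < ‖lambda + (lam n : ℂ)‖ := by
    intro n
    have := (hsec (lam n) (hpos n)).1
    nlinarith [hpos n, hc]
  have hne : ∀ n : ℕ, lambda + (lam n : ℂ) ≠ 0 := by
    intro n h
    have := hdenpos n
    rw [h] at this; simp at this
  -- summable families
  have hS0 : Summable (fun n => Real.exp (s0 * lam n)) := by
    have := hSc c0 hc0
    have heq : ∀ n, -(c0 * lam n) = s0 * lam n := by intro n; rw [hc0def]; ring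
    simpa [heq] using this
  have hg : Summable (fun n : ℕ => Complex.exp ((s0:ℂ)*(lam n:ℂ)) / (lambda + (lam n:ℂ))) := by
    apply Summable.of_norm
    apply Summable.of_nonneg_of_le (fun n => norm_nonneg _)
      (f := fun n => Real.exp (s0 * lam n) * (1/(c * lam 0)))
    · intro n
      rw [norm_div]
      have hnum : ‖Complex.exp ((s0:ℂ)*(lam n:ℂ))‖ = Real.exp (s0 * lam n) := by
        rw [Complex.norm_exp, ← Complex.ofReal_mul, Complex.ofReal_re]
      rw [hnum]
      have h1 : c * lam 0 ≤ ‖lambda + (lam n:ℂ)‖ := by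
        have h2 := (hsec (lam n) (hpos n)).1
        have h3 : lam 0 ≤ lam n := hmono (Nat.zero_le n)
        nlinarith [hc]
      rw [div_eq_mul_one_div]
      apply mul_le_mul_of_nonneg_left _ (Real.exp_pos _).le
      rw [div_le_div_iff₀ (hdenpos n) (mul_pos hc (hpos 0))]
      nlinarith [hdenpos n]
    · exact hS0.mul_right _
  have hfi : ∀ i : ℕ, Summable (fun n : ℕ => Complex.exp ((s0:ℂ)*(lam n:ℂ)) * (-(lam n:ℂ))^i) :=
    fun i => (part1 i).of_norm
  -- rewrite partial sums
  have hps : ∑ i ∈ Finset.range N,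
      (∑' n : ℕ, Complex.exp ((s0:ℂ)*(lam n:ℂ)) * (-(lam n:ℂ))^i) / lambda ^ (i+1)
      = ∑' n : ℕ, ∑ i ∈ Finset.range N,
        (Complex.exp ((s0:ℂ)*(lam n:ℂ)) * (-(lam n:ℂ))^i) / lambda ^ (i+1) := by
    rw [Summable.tsum_finsetSum (fun i _ => (hfi i).div_const _)]
    exact Finset.sum_congr rfl fun i _ => (tsum_div_const).symm
  have hinner : Summable (fun n : ℕ => ∑ i ∈ Finset.range N,
      (Complex.exp ((s0:ℂ)*(lam n:ℂ)) * (-(lam n:ℂ))^i) / lambda ^ (i+1)) :=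
    summable_sum (fun i _ => (hfi i).div_const _)
  rw [hps, ← Summable.tsum_sub hg hinner]
  -- per-term identity
  have hid : ∀ n : ℕ,
      Complex.exp ((s0:ℂ)*(lam n:ℂ)) / (lambda + (lam n:ℂ)) -
        ∑ i ∈ Finset.range N, (Complex.exp ((s0:ℂ)*(lam n:ℂ)) * (-(lam n:ℂ))^i) / lambda ^ (i+1)
      = Complex.exp ((s0:ℂ)*(lam n:ℂ)) *
          ((-(lam n:ℂ))^N / (lambda^N * (lambda + (lam n:ℂ)))) := by
    intro n
    have key := key_tel N lambda ((lam n : ℝ) : ℂ) hlam0 (hne n)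
    calc Complex.exp ((s0:ℂ)*(lam n:ℂ)) / (lambda + (lam n:ℂ)) -
        ∑ i ∈ Finset.range N, (Complex.exp ((s0:ℂ)*(lam n:ℂ)) * (-(lam n:ℂ))^i) / lambda ^ (i+1)
        = Complex.exp ((s0:ℂ)*(lam n:ℂ)) *
          (1/(lambda + (lam n:ℂ)) - ∑ i ∈ Finset.range N, (-(lam n:ℂ))^i / lambda ^ (i+1)) := by
          rw [mul_sub, Finset.mul_sum]
          congr 1
          · rw [mul_one_div]
          · exact Finset.sum_congr rfl fun i _ => (mul_div_assoc _ _ _)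
      _ = _ := by rw [key]
  rw [tsum_congr hid]
  -- norm bound
  set K : ℝ := (2/c0)^N * N.factorial / (c * ‖lambda‖^(N+1)) with hKdef
  have hterm : ∀ n : ℕ, ‖Complex.exp ((s0:ℂ)*(lam n:ℂ)) *
      ((-(lam n:ℂ))^N / (lambda^N * (lambda + (lam n:ℂ))))‖
      ≤ Real.exp (-(c0/2 * lam n)) * K := by
    intro n
    have h1 : ‖Complex.exp ((s0:ℂ)*(lam n:ℂ)) *
        ((-(lam n:ℂ))^N / (lambda^N * (lambda + (lam n:ℂ))))‖
        = Real.exp (s0 * lam n) * (lam n ^ N / (‖lambda‖^N * ‖lambda + (lam n:ℂ)‖)) := by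
      rw [norm_mul, norm_div, norm_pow, norm_neg, norm_mul, norm_pow]
      rw [Complex.norm_exp, ← Complex.ofReal_mul,
        Complex.ofReal_re, Complex.norm_real, Real.norm_eq_abs,
        abs_of_pos (hpos n)]
    rw [h1]
    have hcz : c * ‖lambda‖ ≤ ‖lambda + (lam n:ℂ)‖ := (hsec (lam n) (hpos n)).2
    have hczpos : 0 < c * ‖lambda‖ := by positivity
    have step1 : lam n ^ N / (‖lambda‖^N * ‖lambda + (lam n:ℂ)‖)
        ≤ lam n ^ N / (‖lambda‖^N * (c * ‖lambda‖)) := by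
      exact div_le_div_of_nonneg_left (pow_nonneg (hpos n).le N)
        (mul_pos (pow_pos hnl N) (mul_pos hc hnl))
        (mul_le_mul_of_nonneg_left hcz (by positivity))
    have hexp : Real.exp (s0 * lam n)
        = Real.exp (-(c0/2 * lam n)) * Real.exp (-(c0/2 * lam n)) := by
      rw [← Real.exp_add]; congr 1; rw [hc0def]; ring
    calc Real.exp (s0 * lam n) * (lam n ^ N / (‖lambda‖^N * ‖lambda + (lam n:ℂ)‖))
        ≤ Real.exp (s0 * lam n) * (lam n ^ N / (‖lambda‖^N * (c * ‖lambda‖))) :=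
          mul_le_mul_of_nonneg_left step1 (Real.exp_pos _).le
      _ = Real.exp (-(c0/2 * lam n)) * ((lam n ^ N * Real.exp (-(c0/2 * lam n)))
            / (c * ‖lambda‖^(N+1))) := by
          rw [hexp]
          rw [pow_succ]
          ring
      _ ≤ Real.exp (-(c0/2 * lam n)) * (((2/c0)^N * N.factorial) / (c * ‖lambda‖^(N+1))) := by
          apply mul_le_mul_of_nonneg_left _ (Real.exp_pos _).le
          exact (div_le_div_iff_of_pos_right (mul_pos hc (pow_pos hnl (N+1)))).2 (hfb N n)
      _ = Real.exp (-(c0/2 * lam n)) * K := by rw [hKdef]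
  have hnorms : Summable (fun n : ℕ => ‖Complex.exp ((s0:ℂ)*(lam n:ℂ)) *
      ((-(lam n:ℂ))^N / (lambda^N * (lambda + (lam n:ℂ))))‖) :=
    Summable.of_nonneg_of_le (fun n => norm_nonneg _) hterm (hS2.mul_right K)
  calc ‖∑' n : ℕ, Complex.exp ((s0:ℂ)*(lam n:ℂ)) *
      ((-(lam n:ℂ))^N / (lambda^N * (lambda + (lam n:ℂ))))‖
      ≤ ∑' n : ℕ, ‖Complex.exp ((s0:ℂ)*(lam n:ℂ)) *
        ((-(lam n:ℂ))^N / (lambda^N * (lambda + (lam n:ℂ))))‖ := norm_tsum_le_tsum_norm hnorms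
    _ ≤ ∑' n : ℕ, Real.exp (-(c0/2 * lam n)) * K :=
        Summable.tsum_le_tsum hterm hnorms (hS2.mul_right K)
    _ = S * K := by rw [tsum_mul_right]
    _ = S / c * (2/c0) ^ N * N.factorial / ‖lambda‖^(N+1) := by
        rw [hKdef]
        field_simp
end

section
/- Let s_0 < 0 be real. Suppose h : ℂ → ℂ satisfies: (i) there exists η with 0 < η < |s_0| such that h is holomorphic on the strip {ρ : |Im ρ| < 2η}; (ii) there exists δ > 0 such that |h(ρ)| = O(|ρ|^{−1−δ}) as Re ρ → −∞, uniformly for Im ρ ∈ (−2η, 2η); (iii) there exists δ′ < s_0 such that |h(ρ)| = O(e^{δ′ |ρ|}) as Re ρ → +∞, uniformly for Im ρ ∈ (−2η, 2η). Then both series below converge and Σ_{n∈ℤ} h(n) e^{−s_0 n} = 2π Σ_{m∈ℤ} ĥ(2πm + i s_0), where ĥ(τ) = (1/2π) ∫_{−∞}^{∞} h(ρ) e^{iτρ} dρ is the Fourier transform of h. -/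
open Filter MeasureTheory Set
open scoped Topology Real FourierTransform

lemma aux_integrable_exp_neg_mul_abs {c : ℝ} (hc : 0 < c) :
    Integrable fun x : ℝ => Real.exp (-c * |x|) := by
  have key : IntegrableOn (fun x : ℝ => Real.exp (-c * |x|)) (Ioi 0) := by
    refine (exp_neg_integrableOn_Ioi 0 hc).congr_fun (fun x hx => by rw [abs_of_pos hx])
      measurableSet_Ioi
  rw [← integrableOn_univ, ← @Iio_union_Ici _ _ (0 : ℝ), integrableOn_union,
    integrableOn_Ici_iff_integrableOn_Ioi]
  refine ⟨?_, key⟩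
  rw [← (Measure.measurePreserving_neg (volume : Measure ℝ)).integrableOn_comp_preimage
      (Homeomorph.neg ℝ).measurableEmbedding]
  simp only [Function.comp_def, abs_neg, neg_preimage, neg_Iio, neg_zero]
  exact key

lemma aux_cauchy {F : ℂ → ℂ} {b r c A : ℝ} (hr : 0 < r) (hc : 0 ≤ c) (hA : 0 ≤ A)
    (hd : ∀ ζ : ℂ, |ζ.im| ≤ b + r → DifferentiableAt ℂ F ζ)
    (hb : ∀ ζ : ℂ, |ζ.im| ≤ b + r → ‖F ζ‖ ≤ A * Real.exp (-c * |ζ.re|)) :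
    ∀ ζ : ℂ, |ζ.im| ≤ b → ‖deriv F ζ‖ ≤ A * Real.exp (c * r) / r * Real.exp (-c * |ζ.re|) := by
  intro ζ hζ
  have him : ∀ z : ℂ, dist z ζ ≤ r → |z.im| ≤ b + r := by
    intro z hz
    have h1 : |z.im - ζ.im| ≤ ‖z - ζ‖ := by
      simpa using Complex.abs_im_le_norm (z - ζ)
    rw [Complex.dist_eq] at hz
    calc |z.im| ≤ |ζ.im| + |z.im - ζ.im| := by
          have := abs_add_le (z.im - ζ.im) ζ.im; simpa [sub_add_cancel, add_comm] using this
      _ ≤ b + r := add_le_add hζ (h1.trans hz)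
  have hdc : DiffContOnCl ℂ F (Metric.ball ζ r) := by
    apply DifferentiableOn.diffContOnCl
    rw [closure_ball ζ hr.ne']
    intro z hz
    exact (hd z (him z (Metric.mem_closedBall.mp hz))).differentiableWithinAt
  have key := Complex.norm_deriv_le_of_forall_mem_sphere_norm_le hr hdc
    (C := A * Real.exp (c * r) * Real.exp (-c * |ζ.re|)) ?_
  · calc ‖deriv F ζ‖ ≤ A * Real.exp (c * r) * Real.exp (-c * |ζ.re|) / r := key
      _ = A * Real.exp (c * r) / r * Real.exp (-c * |ζ.re|) := by ring
  · intro z hz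
    have hdz : dist z ζ = r := Metric.mem_sphere.mp hz
    have h2 : |ζ.re| - r ≤ |z.re| := by
      have h1 : |ζ.re - z.re| ≤ ‖z - ζ‖ := by
        rw [abs_sub_comm]
        simpa using Complex.abs_re_le_norm (z - ζ)
      rw [Complex.dist_eq] at hdz
      linarith [hdz ▸ h1, abs_sub_abs_le_abs_sub ζ.re z.re]
    calc ‖F z‖ ≤ A * Real.exp (-c * |z.re|) := hb z (him z hdz.le)
      _ ≤ A * (Real.exp (c * r) * Real.exp (-c * |ζ.re|)) := by
          rw [← Real.exp_add]
          refine mul_le_mul_of_nonneg_left (Real.exp_le_exp.mpr ?_) hA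
          nlinarith
      _ = A * Real.exp (c * r) * Real.exp (-c * |ζ.re|) := by ring

lemma aux_exp_le_rpow {c : ℝ} (hc : 0 < c) {t : ℝ} (ht : 1 ≤ t) :
    Real.exp (-c * t) ≤ 27 / c ^ 3 * t ^ (-2 : ℝ) := by
  have ht0 : 0 < t := lt_of_lt_of_le one_pos ht
  have h1 : c * t / 3 ≤ Real.exp (c * t / 3) := by
    linarith [Real.add_one_le_exp (c * t / 3)]
  have h2 : (c * t / 3) ^ 3 ≤ Real.exp (c * t) := by
    have he : Real.exp (c * t) = Real.exp (c * t / 3) ^ 3 := by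
      rw [← Real.exp_nat_mul]; ring_nf
    rw [he]
    exact pow_le_pow_left₀ (by positivity) h1 3
  have h4 : Real.exp (-c * t) ≤ 27 / (c ^ 3 * t ^ 3) := by
    rw [neg_mul, Real.exp_neg, inv_le_comm₀ (Real.exp_pos _) (by positivity)]
    calc (27 / (c ^ 3 * t ^ 3))⁻¹ = (c * t / 3) ^ 3 := by
          rw [inv_div]; ring
      _ ≤ Real.exp (c * t) := h2
  calc Real.exp (-c * t) ≤ 27 / (c ^ 3 * t ^ 3) := h4
    _ ≤ 27 / c ^ 3 * t ^ (-2 : ℝ) := by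
        rw [Real.rpow_neg ht0.le, show (2:ℝ) = ((2:ℕ):ℝ) by norm_num, Real.rpow_natCast]
        have heq : 27 / (c ^ 3 * t ^ 3) = 27 / c ^ 3 * (t ^ 2)⁻¹ * t⁻¹ := by
          field_simp
        rw [heq]
        have h5 : 27 / c ^ 3 * (t ^ 2)⁻¹ * t⁻¹ ≤ 27 / c ^ 3 * (t ^ 2)⁻¹ * 1 := by
          refine mul_le_mul_of_nonneg_left ?_ (by positivity)
          exact inv_le_one_of_one_le₀ ht
        simpa using h5

lemma aux_eventually_cocompact : ∀ᶠ x : ℝ in cocompact ℝ, 1 ≤ |x| := by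
  rw [cocompact_eq_atBot_atTop, eventually_sup]
  constructor
  · filter_upwards [eventually_le_atBot (-1 : ℝ)] with x hx
    rw [_root_.abs_of_nonpos (by linarith)]; linarith
  · filter_upwards [eventually_ge_atTop (1 : ℝ)] with x hx
    rw [_root_.abs_of_nonneg (by linarith)]; linarith

lemma aux_isBigO_of_exp_decay {f : ℝ → ℂ} {c A : ℝ} (hc : 0 < c)
    (hf : ∀ x : ℝ, ‖f x‖ ≤ A * Real.exp (-c * |x|)) :
    f =O[cocompact ℝ] (fun x => |x| ^ (-2 : ℝ)) := by
  have hA : 0 ≤ A := by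
    nlinarith [norm_nonneg (f 0), hf 0, Real.exp_pos (-c * |(0:ℝ)|)]
  refine Asymptotics.IsBigO.of_bound (A * (27 / c ^ 3)) ?_
  filter_upwards [aux_eventually_cocompact] with x hx
  have h2 : Real.exp (-c * |x|) ≤ 27 / c ^ 3 * |x| ^ (-2 : ℝ) := aux_exp_le_rpow hc hx
  have h3 : ‖|x| ^ (-2 : ℝ)‖ = |x| ^ (-2 : ℝ) := by
    rw [Real.norm_eq_abs, _root_.abs_of_nonneg (Real.rpow_nonneg (abs_nonneg x) _)]
  rw [h3]
  calc ‖f x‖ ≤ A * Real.exp (-c * |x|) := hf x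
    _ ≤ A * (27 / c ^ 3 * |x| ^ (-2 : ℝ)) := mul_le_mul_of_nonneg_left h2 hA
    _ = A * (27 / c ^ 3) * |x| ^ (-2 : ℝ) := by ring

set_option maxHeartbeats 2000000 in
/-- Deformed Poisson summation formula: Let `s₀ < 0` and let
`h : ℂ → ℂ` be holomorphic on the strip `{|Im ρ| < 2η}` for some `0 < η < |s₀|`,
with `|h(ρ)| = O(|ρ|^{-1-δ})` as `Re ρ → -∞` and `|h(ρ)| = O(e^{δ' |ρ|})` as
`Re ρ → +∞` (uniformly on the strip), for some `δ > 0` and `δ' < s₀`.  Then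
`Σ_{n∈ℤ} h(n) e^{-s₀ n} = 2π Σ_{m∈ℤ} ĥ(2πm + i s₀)`, both series converging,
where `ĥ(τ) = (1/2π) ∫_ℝ h(ρ) e^{iτρ} dρ`. -/
theorem stmt_14 (s0 : ℝ) (hs0 : s0 < 0) (h : ℂ → ℂ)
    (η : ℝ) (hη : 0 < η) (hη2 : η < |s0|)
    (hhol : DifferentiableOn ℂ h {ρ : ℂ | |ρ.im| < 2 * η})
    (δ : ℝ) (hδ : 0 < δ)
    (hleft : ∃ C R : ℝ, 0 < C ∧ ∀ ρ : ℂ, ρ.re ≤ -R → |ρ.im| < 2 * η →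
      ‖h ρ‖ ≤ C * ‖ρ‖ ^ (-(1 : ℝ) - δ))
    (δ' : ℝ) (hδ' : δ' < s0)
    (hright : ∃ C R : ℝ, 0 < C ∧ ∀ ρ : ℂ, R ≤ ρ.re → |ρ.im| < 2 * η →
      ‖h ρ‖ ≤ C * Real.exp (δ' * ‖ρ‖)) :
    Summable (fun n : ℤ => h (n : ℂ) * Complex.exp (-(s0 : ℂ) * (n : ℂ))) ∧
    Summable (fun m : ℤ =>
      (1 / (2 * (π : ℂ))) *
        ∫ x : ℝ, h (x : ℂ) *
          Complex.exp (Complex.I * (2 * (π : ℂ) * (m : ℂ) + Complex.I * (s0 : ℂ)) * (x : ℂ))) ∧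
    ∑' n : ℤ, h (n : ℂ) * Complex.exp (-(s0 : ℂ) * (n : ℂ))
      = 2 * (π : ℂ) *
          ∑' m : ℤ,
            (1 / (2 * (π : ℂ))) *
              ∫ x : ℝ, h (x : ℂ) *
                Complex.exp (Complex.I * (2 * (π : ℂ) * (m : ℂ) + Complex.I * (s0 : ℂ)) * (x : ℂ)) := by
  obtain ⟨C1, R1, hC1, hLb⟩ := hleft
  obtain ⟨C2, R2, hC2, hRb⟩ := hright
  set c : ℝ := min (-s0) (s0 - δ') with hcdef
  have hc : 0 < c := lt_min (by linarith) (by linarith)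
  set G : ℂ → ℂ := fun ρ => h ρ * Complex.exp (-(s0:ℂ) * ρ) with hGdef
  have hSo : IsOpen {ρ : ℂ | |ρ.im| < 2 * η} := by
    have : {ρ : ℂ | |ρ.im| < 2 * η} = (fun ρ : ℂ => |ρ.im|) ⁻¹' Iio (2*η) := rfl
    rw [this]
    exact (continuous_abs.comp Complex.continuous_im).isOpen_preimage _ isOpen_Iio
  have hGd : DifferentiableOn ℂ G {ρ : ℂ | |ρ.im| < 2 * η} := by
    apply hhol.mul
    exact (Complex.differentiable_exp.comp ((differentiable_const _).mul differentiable_id)).differentiableOn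
  have hGd' : DifferentiableOn ℂ (deriv G) {ρ : ℂ | |ρ.im| < 2 * η} :=
    ((hGd.analyticOnNhd hSo).deriv).differentiableOn
  have hnexp : ∀ ρ : ℂ, ‖Complex.exp (-(s0:ℂ) * ρ)‖ = Real.exp (-s0 * ρ.re) := by
    intro ρ
    rw [Complex.norm_exp]
    congr 1
    simp [Complex.mul_re]
  -- middle bound
  set B : ℝ := max (max R1 1) (max R2 0) with hBdef
  set K : Set ℂ := {ζ : ℂ | |ζ.re| ≤ B ∧ |ζ.im| ≤ 3/2 * η} with hKdef
  have hKc : IsCompact K := by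
    apply Metric.isCompact_of_isClosed_isBounded
    · have : K = (fun ζ : ℂ => |ζ.re|) ⁻¹' (Iic B) ∩ (fun ζ : ℂ => |ζ.im|) ⁻¹' (Iic (3/2*η)) := rfl
      rw [this]
      exact (isClosed_Iic.preimage (continuous_abs.comp Complex.continuous_re)).inter
        (isClosed_Iic.preimage (continuous_abs.comp Complex.continuous_im))
    · apply Bornology.IsBounded.subset (Metric.isBounded_closedBall (x := (0:ℂ)) (r := B + 3/2*η))
      intro ζ hζ
      simp only [Metric.mem_closedBall, Complex.dist_eq, sub_zero]
      calc ‖ζ‖ ≤ |ζ.re| + |ζ.im| := Complex.norm_le_abs_re_add_abs_im ζ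
        _ ≤ B + 3/2*η := add_le_add hζ.1 hζ.2
  have hKsub : K ⊆ {ρ : ℂ | |ρ.im| < 2 * η} := fun ζ hζ => by
    simp only [mem_setOf_eq]; have := hζ.2; linarith
  obtain ⟨M, hM⟩ := hKc.exists_bound_of_continuousOn (hGd.continuousOn.mono hKsub)
  set A : ℝ := max (max C1 C2) (max M 0 * Real.exp (c * B)) with hAdef
  have hA0 : 0 ≤ A := le_trans hC1.le ((le_max_left C1 C2).trans (le_max_left _ _))
  have hGb : ∀ ζ : ℂ, |ζ.im| ≤ 3/2 * η → ‖G ζ‖ ≤ A * Real.exp (-c * |ζ.re|) := by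
    intro ζ hζ
    have him2 : |ζ.im| < 2 * η := lt_of_le_of_lt hζ (by linarith)
    have hGnorm : ‖G ζ‖ = ‖h ζ‖ * Real.exp (-s0 * ζ.re) := by
      rw [hGdef]; simp only [norm_mul]; rw [hnexp]
    have habs_re : |ζ.re| ≤ ‖ζ‖ := Complex.abs_re_le_norm ζ
    rcases le_or_gt ζ.re (-B) with hre | hre
    · -- left region
      have hB1 : (1:ℝ) ≤ B := (le_max_right R1 1).trans (le_max_left _ _)
      have hBR1 : R1 ≤ B := (le_max_left R1 1).trans (le_max_left _ _)
      have h1 : ‖h ζ‖ ≤ C1 * ‖ζ‖ ^ (-(1 : ℝ) - δ) := hLb ζ (by linarith) him2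
      have hre_abs : |ζ.re| = -ζ.re := _root_.abs_of_nonpos (by linarith)
      have hζ1 : 1 ≤ ‖ζ‖ := by
        calc (1:ℝ) ≤ B := hB1
          _ ≤ |ζ.re| := by rw [hre_abs]; linarith
          _ ≤ ‖ζ‖ := habs_re
      have h2 : ‖ζ‖ ^ (-(1 : ℝ) - δ) ≤ 1 :=
        Real.rpow_le_one_of_one_le_of_nonpos hζ1 (by linarith)
      have h3 : ‖h ζ‖ ≤ C1 := by
        calc ‖h ζ‖ ≤ C1 * ‖ζ‖ ^ (-(1 : ℝ) - δ) := h1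
          _ ≤ C1 * 1 := mul_le_mul_of_nonneg_left h2 hC1.le
          _ = C1 := mul_one _
      have h4 : Real.exp (-s0 * ζ.re) ≤ Real.exp (-c * |ζ.re|) := by
        apply Real.exp_le_exp.mpr
        have hcle : c ≤ -s0 := min_le_left _ _
        rw [hre_abs]
        nlinarith
      calc ‖G ζ‖ = ‖h ζ‖ * Real.exp (-s0 * ζ.re) := hGnorm
        _ ≤ C1 * Real.exp (-c * |ζ.re|) := by
            apply mul_le_mul h3 h4 (Real.exp_pos _).le hC1.le
        _ ≤ A * Real.exp (-c * |ζ.re|) := by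
            apply mul_le_mul_of_nonneg_right _ (Real.exp_pos _).le
            exact (le_max_left C1 C2).trans (le_max_left _ _)
    · rcases le_or_gt B ζ.re with hre2 | hre2
      · -- right region
        have hBR2 : R2 ≤ B := (le_max_left R2 0).trans (le_max_right _ _)
        have hB0 : (0:ℝ) ≤ B := (le_max_right R2 0).trans (le_max_right _ _)
        have h1 : ‖h ζ‖ ≤ C2 * Real.exp (δ' * ‖ζ‖) := hRb ζ (by linarith) him2
        have hre_abs : |ζ.re| = ζ.re := _root_.abs_of_nonneg (by linarith)
        have h2 : Real.exp (δ' * ‖ζ‖) ≤ Real.exp (δ' * ζ.re) := by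
          apply Real.exp_le_exp.mpr
          have : ζ.re ≤ ‖ζ‖ := by
            exact (le_abs_self _).trans habs_re
          nlinarith
        have hcle : c ≤ s0 - δ' := min_le_right _ _
        calc ‖G ζ‖ = ‖h ζ‖ * Real.exp (-s0 * ζ.re) := hGnorm
          _ ≤ C2 * Real.exp (δ' * ζ.re) * Real.exp (-s0 * ζ.re) := by
              apply mul_le_mul_of_nonneg_right _ (Real.exp_pos _).le
              exact h1.trans (mul_le_mul_of_nonneg_left h2 hC2.le)
          _ = C2 * Real.exp ((δ' - s0) * ζ.re) := by
              rw [mul_assoc, ← Real.exp_add]; ring_nf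
          _ ≤ C2 * Real.exp (-c * |ζ.re|) := by
              apply mul_le_mul_of_nonneg_left _ hC2.le
              apply Real.exp_le_exp.mpr
              rw [hre_abs]
              nlinarith
          _ ≤ A * Real.exp (-c * |ζ.re|) := by
              apply mul_le_mul_of_nonneg_right _ (Real.exp_pos _).le
              exact (le_max_right C1 C2).trans (le_max_left _ _)
      · -- middle region
        have hmem : ζ ∈ K := ⟨abs_le.mpr ⟨by linarith, by linarith⟩, hζ⟩
        have h1 : ‖G ζ‖ ≤ M := hM ζ hmem
        have h2 : (1:ℝ) ≤ Real.exp (c * B) * Real.exp (-c * |ζ.re|) := by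
          rw [← Real.exp_add, ← Real.exp_zero]
          apply Real.exp_le_exp.mpr
          have : |ζ.re| ≤ B := (abs_le.mpr ⟨by linarith, by linarith⟩)
          nlinarith
        calc ‖G ζ‖ ≤ M := h1
          _ ≤ max M 0 * (Real.exp (c * B) * Real.exp (-c * |ζ.re|)) := by
              nlinarith [le_max_left M (0:ℝ), le_max_right M (0:ℝ)]
          _ = max M 0 * Real.exp (c * B) * Real.exp (-c * |ζ.re|) := by ring
          _ ≤ A * Real.exp (-c * |ζ.re|) := by
              apply mul_le_mul_of_nonneg_right (le_max_right _ _) (Real.exp_pos _).le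
  -- Cauchy estimates for derivatives
  set A1 : ℝ := A * Real.exp (c * (η/2)) / (η/2) with hA1def
  have hA1 : 0 ≤ A1 := by positivity
  have hG1 : ∀ ζ : ℂ, |ζ.im| ≤ η → ‖deriv G ζ‖ ≤ A1 * Real.exp (-c * |ζ.re|) := by
    apply aux_cauchy (by positivity) hc.le hA0
    · intro ζ hζ
      exact hGd.differentiableAt (hSo.mem_nhds (by simp only [mem_setOf_eq]; linarith [abs_nonneg ζ.im]))
    · intro ζ hζ
      exact hGb ζ (by linarith)
  set A2 : ℝ := A1 * Real.exp (c * (η/2)) / (η/2) with hA2def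
  have hG2 : ∀ ζ : ℂ, |ζ.im| ≤ η/2 → ‖deriv (deriv G) ζ‖ ≤ A2 * Real.exp (-c * |ζ.re|) := by
    apply aux_cauchy (by positivity) hc.le hA1
    · intro ζ hζ
      exact hGd'.differentiableAt (hSo.mem_nhds (by simp only [mem_setOf_eq]; linarith [abs_nonneg ζ.im]))
    · intro ζ hζ
      exact hG1 ζ (by linarith)
  -- restriction to the real axis
  set g : ℝ → ℂ := fun x => G (x : ℂ) with hgdef
  set g1 : ℝ → ℂ := fun x => deriv G (x : ℂ) with hg1def
  set g2 : ℝ → ℂ := fun x => deriv (deriv G) (x : ℂ) with hg2def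
  have hmemR : ∀ x : ℝ, (x:ℂ) ∈ {ρ : ℂ | |ρ.im| < 2 * η} := by
    intro x; simp only [mem_setOf_eq, Complex.ofReal_im, abs_zero]; positivity
  have hgd_at : ∀ x : ℝ, HasDerivAt g (g1 x) x := fun x =>
    ((hGd.differentiableAt (hSo.mem_nhds (hmemR x))).hasDerivAt).comp_ofReal
  have hg1d_at : ∀ x : ℝ, HasDerivAt g1 (g2 x) x := fun x =>
    ((hGd'.differentiableAt (hSo.mem_nhds (hmemR x))).hasDerivAt).comp_ofReal
  have hderivg : deriv g = g1 := funext fun x => (hgd_at x).deriv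
  have hderivg1 : deriv g1 = g2 := funext fun x => (hg1d_at x).deriv
  have hgc : Continuous g := by
    have : Differentiable ℝ g := fun x => (hgd_at x).differentiableAt
    exact this.continuous
  have hg1c : Continuous g1 := by
    have : Differentiable ℝ g1 := fun x => (hg1d_at x).differentiableAt
    exact this.continuous
  have hg2c : Continuous g2 := by
    have hanl := ((hGd.analyticOnNhd hSo).deriv).deriv
    have : DifferentiableOn ℂ (deriv (deriv G)) {ρ : ℂ | |ρ.im| < 2 * η} := hanl.differentiableOn
    apply Continuous.comp (this.continuousOn.comp_continuous Complex.continuous_ofReal hmemR) continuous_id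
  -- bounds on the real axis
  have hgb : ∀ x : ℝ, ‖g x‖ ≤ A * Real.exp (-c * |x|) := by
    intro x
    have := hGb (x:ℂ) (by simp only [Complex.ofReal_im, abs_zero]; positivity)
    simpa using this
  have hg1b : ∀ x : ℝ, ‖g1 x‖ ≤ A1 * Real.exp (-c * |x|) := by
    intro x
    have := hG1 (x:ℂ) (by simp only [Complex.ofReal_im, abs_zero]; positivity)
    simpa using this
  have hg2b : ∀ x : ℝ, ‖g2 x‖ ≤ A2 * Real.exp (-c * |x|) := by
    intro x
    have := hG2 (x:ℂ) (by simp only [Complex.ofReal_im, abs_zero]; positivity)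
    simpa using this
  -- integrability
  have hint : ∀ {f : ℝ → ℂ} {A' : ℝ}, Continuous f →
      (∀ x, ‖f x‖ ≤ A' * Real.exp (-c * |x|)) → Integrable f := by
    intro f A' hfc hfb
    refine ((aux_integrable_exp_neg_mul_abs hc).const_mul A').mono'
      hfc.aestronglyMeasurable (ae_of_all _ fun x => ?_)
    exact hfb x
  have hgi : Integrable g := hint hgc hgb
  have hg1i : Integrable g1 := hint hg1c hg1b
  have hg2i : Integrable g2 := hint hg2c hg2b
  -- Fourier transform decay
  have hgdiff : Differentiable ℝ g := fun x => (hgd_at x).differentiableAt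
  have hg1diff : Differentiable ℝ g1 := fun x => (hg1d_at x).differentiableAt
  have hF1 : 𝓕 g1 = fun ξ : ℝ => (2 * π * Complex.I * ξ) • 𝓕 g ξ := by
    rw [← hderivg]
    exact Real.fourier_deriv hgi hgdiff (hderivg ▸ hg1i)
  have hF2 : 𝓕 g2 = fun ξ : ℝ => (2 * π * Complex.I * ξ) • 𝓕 g1 ξ := by
    rw [← hderivg1]
    exact Real.fourier_deriv hg1i hg1diff (hderivg1 ▸ hg2i)
  set Mg : ℝ := ∫ x : ℝ, ‖g2 x‖ with hMgdef
  have hFb : ∀ ξ : ℝ, ‖𝓕 g2 ξ‖ ≤ Mg := fun ξ =>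
    VectorFourier.norm_fourierIntegral_le_integral_norm _ _ _ _ _
  have hFO : (𝓕 g) =O[cocompact ℝ] (fun ξ : ℝ => |ξ| ^ (-2:ℝ)) := by
    refine Asymptotics.IsBigO.of_bound Mg ?_
    filter_upwards [aux_eventually_cocompact] with ξ hξ
    have hξ0 : (0:ℝ) < |ξ| := lt_of_lt_of_le one_pos hξ
    have hnorm2 : ‖(2*(π:ℂ)*Complex.I*(ξ:ℂ))‖ = 2*π*|ξ| := by
      simp [norm_mul, Real.pi_pos.le, _root_.abs_of_nonneg]
    have e1 : ‖𝓕 g2 ξ‖ = 2*π*|ξ| * (2*π*|ξ| * ‖𝓕 g ξ‖) := by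
      rw [congrFun hF2 ξ, norm_smul, hnorm2, congrFun hF1 ξ, norm_smul, hnorm2]
    have key : 2*π*|ξ| * (2*π*|ξ| * ‖𝓕 g ξ‖) ≤ Mg := e1 ▸ hFb ξ
    have h3 : ‖|ξ| ^ (-2 : ℝ)‖ = (|ξ|^2)⁻¹ := by
      rw [Real.norm_eq_abs, _root_.abs_of_nonneg (Real.rpow_nonneg (abs_nonneg ξ) _),
        Real.rpow_neg (abs_nonneg ξ), show (2:ℝ) = ((2:ℕ):ℝ) by norm_num, Real.rpow_natCast]
    rw [h3, ← div_eq_mul_inv, le_div_iff₀ (by positivity)]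
    have h36 : (1:ℝ) ≤ 4*π^2 := by nlinarith [Real.pi_gt_three]
    nlinarith [key, mul_nonneg (mul_nonneg (abs_nonneg ξ) (abs_nonneg ξ)) (norm_nonneg (𝓕 g ξ)),
      norm_nonneg (𝓕 g ξ)]
  have hgO : g =O[cocompact ℝ] (fun x : ℝ => |x| ^ (-2:ℝ)) := aux_isBigO_of_exp_decay hc hgb
  -- Poisson summation
  have poisson := Real.tsum_eq_tsum_fourier_of_rpow_decay hgc
    (by norm_num : (1:ℝ) < 2) hgO hFO 0
  simp only [zero_add, QuotientAddGroup.mk_zero, fourier_eval_zero, mul_one] at poisson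
  -- summability
  have Sg : Summable fun n : ℤ => g n :=
    summable_of_isBigO (Real.summable_abs_int_rpow (by norm_num : (1:ℝ) < 2))
      (hgO.comp_tendsto Int.tendsto_coe_cofinite)
  have SF : Summable fun n : ℤ => 𝓕 g n :=
    summable_of_isBigO (Real.summable_abs_int_rpow (by norm_num : (1:ℝ) < 2))
      (hFO.comp_tendsto Int.tendsto_coe_cofinite)
  -- identification of both sides
  have hLHS : (fun n : ℤ => h (n:ℂ) * Complex.exp (-(s0:ℂ) * (n:ℂ))) = fun n : ℤ => g ((n:ℤ):ℝ) := by
    funext n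
    simp only [hgdef, hGdef, Complex.ofReal_intCast]
  have hTm : ∀ m : ℤ, (∫ x : ℝ, h (x:ℂ) *
      Complex.exp (Complex.I * (2 * (π:ℂ) * (m:ℂ) + Complex.I * (s0:ℂ)) * (x:ℂ)))
      = 𝓕 g (((-m : ℤ) : ℝ)) := by
    intro m
    rw [Real.fourier_eq']
    have hmul : ∀ (z a b : ℂ), Complex.exp a • (z * Complex.exp b) = z * Complex.exp (a + b) := by
      intro z a b
      rw [smul_eq_mul, Complex.exp_add]; ring
    congr 1
    funext x
    rw [hgdef, hGdef]
    simp only []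
    rw [hmul]
    congr 1
    congr 1
    have hinner : (inner ℝ x (((-m : ℤ):ℝ)) : ℝ) = x * ((-m : ℤ):ℝ) := Real.inner_apply _ _
    rw [hinner]
    push_cast
    linear_combination ((s0:ℂ) * (x:ℂ)) * Complex.I_sq
  have hT : (fun m : ℤ => (1 / (2 * (π : ℂ))) *
        ∫ x : ℝ, h (x : ℂ) *
          Complex.exp (Complex.I * (2 * (π : ℂ) * (m : ℂ) + Complex.I * (s0 : ℂ)) * (x : ℂ)))
      = fun m : ℤ => (1 / (2 * (π : ℂ))) * 𝓕 g (((-m : ℤ)):ℝ) :=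
    funext fun m => by rw [hTm m]
  have SFneg : Summable fun m : ℤ => 𝓕 g (((-m : ℤ)):ℝ) :=
    ((Equiv.neg ℤ).summable_iff (f := fun n : ℤ => 𝓕 g ((n:ℤ):ℝ))).mpr SF
  have hneg : ∑' m : ℤ, 𝓕 g (((-m : ℤ)):ℝ) = ∑' n : ℤ, 𝓕 g ((n:ℤ):ℝ) :=
    (Equiv.neg ℤ).tsum_eq (fun n : ℤ => 𝓕 g ((n:ℤ):ℝ))
  have hπ : (2 * (π:ℂ)) ≠ 0 := by
    simp [Real.pi_ne_zero, Complex.ofReal_ne_zero]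
  refine ⟨hLHS ▸ Sg, ?_, ?_⟩
  · rw [hT]
    exact SFneg.mul_left _
  · rw [hLHS, hT, tsum_mul_left, hneg, ← poisson]
    rw [← mul_assoc]
    rw [mul_one_div, div_self hπ, one_mul]
end

section
/- Let d be a positive integer and (λ_n)_{n≥1} a nondecreasing sequence of positive real numbers with λ_n/n^{2/d} → L as n → ∞ for some L > 0; set ρ_n = √λ_n. For s_0 < 0 define F_{s_0}(ρ) = Σ_{n≥1} 2ρ e^{s_0 ρ_n} / (ρ² + ρ_n²), a holomorphic function on ℂ ∖ {±iρ_n : n ≥ 1}. Then for every integer m ≥ d and every complex ρ with Re ρ > 0, the termwise m-th derivative series Σ_{n≥1} (d^m/dρ^m)[2ρ/(ρ² + ρ_n²)] converges absolutely and lim_{s_0 → 0⁻} F_{s_0}^{(m)}(ρ) = Σ_{n≥1} (d^m/dρ^m)[2ρ/(ρ² + ρ_n²)], where F_{s_0}^{(m)} denotes the m-th complex derivative of F_{s_0}. -/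
open Filter MeasureTheory Set
open scoped Topology Real

open Complex


-- nonvanishing of denominator
lemma aux_ne (a : ℝ) (z : ℂ) (hz : 0 < z.re) : z - (a:ℂ) * I ≠ 0 ∧ z + (a:ℂ) * I ≠ 0 := by
  constructor <;> intro h <;>
  · have := congrArg Complex.re h
    simp at this
    linarith

lemma aux_fact (a : ℝ) (z : ℂ) (hz : 0 < z.re) :
    z ^ 2 + (a:ℂ) ^ 2 = (z - (a:ℂ) * I) * (z + (a:ℂ) * I) := by
  have : (I:ℂ)^2 = -1 := Complex.I_sq
  ring_nf
  rw [Complex.I_sq]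
  ring

lemma aux_iden (a : ℝ) (z : ℂ) (hz : 0 < z.re) :
    2 * z / (z ^ 2 + (a:ℂ) ^ 2) = (z - (a:ℂ)*I)⁻¹ + (z + (a:ℂ)*I)⁻¹ := by
  obtain ⟨h1, h2⟩ := aux_ne a z hz
  rw [aux_fact a z hz]
  field_simp
  ring

lemma aux_deriv_pow (c : ℂ) (e : ℤ) (z : ℂ) (h : z - c ≠ 0) :
    HasDerivAt (fun w : ℂ => (w - c) ^ e) ((e:ℂ) * (z - c) ^ (e-1)) z := by
  have h1 := hasDerivAt_zpow e (z - c) (Or.inl h)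
  have h2 : HasDerivAt (fun w : ℂ => w - c) 1 z := (hasDerivAt_id z).sub_const c
  have h3 := h1.comp z h2
  rw [mul_one] at h3
  exact h3

lemma aux_iter (a : ℝ) (k : ℕ) :
    ∀ z : ℂ, 0 < z.re →
      deriv^[k] (fun w : ℂ => 2 * w / (w ^ 2 + (a:ℂ) ^ 2)) z
        = (-1)^k * (k.factorial:ℂ) * ((z - (a:ℂ)*I) ^ (-(k:ℤ)-1) + (z + (a:ℂ)*I) ^ (-(k:ℤ)-1)) := by
  induction k with
  | zero =>
    intro z hz
    simp only [Function.iterate_zero, id_eq, pow_zero, Nat.factorial_zero, Nat.cast_one,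
      one_mul, Nat.cast_zero, neg_zero, zero_sub, zpow_neg, zpow_one]
    exact aux_iden a z hz
  | succ k ih =>
    intro z hz
    rw [Function.iterate_succ_apply']
    have hU : IsOpen {w : ℂ | 0 < w.re} := isOpen_lt continuous_const Complex.continuous_re
    have hev : deriv^[k] (fun w : ℂ => 2 * w / (w ^ 2 + (a:ℂ) ^ 2)) =ᶠ[𝓝 z]
        (fun w => (-1)^k * (k.factorial:ℂ) * ((w - (a:ℂ)*I) ^ (-(k:ℤ)-1) + (w + (a:ℂ)*I) ^ (-(k:ℤ)-1))) :=
      Filter.eventually_of_mem (hU.mem_nhds hz) ih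
    rw [hev.deriv_eq]
    obtain ⟨h1, h2⟩ := aux_ne a z hz
    have d1 := aux_deriv_pow ((a:ℂ)*I) (-(k:ℤ)-1) z h1
    have d2 : HasDerivAt (fun w : ℂ => (w + (a:ℂ)*I) ^ (-(k:ℤ)-1))
        (((-(k:ℤ)-1 : ℤ):ℂ) * (z + (a:ℂ)*I) ^ ((-(k:ℤ)-1)-1)) z := by
      have := aux_deriv_pow (-((a:ℂ)*I)) (-(k:ℤ)-1) z (by simpa [sub_neg_eq_add] using h2)
      simpa [sub_neg_eq_add] using this
    have D := ((d1.add d2).const_mul ((-1:ℂ)^k * (k.factorial:ℂ)))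
    have D' : HasDerivAt (fun w : ℂ => (-1:ℂ)^k * (k.factorial:ℂ) * ((w - (a:ℂ)*I) ^ (-(k:ℤ)-1) + (w + (a:ℂ)*I) ^ (-(k:ℤ)-1))) _ z := D
    rw [D'.deriv]
    have he : ((-(k:ℤ)-1)-1 : ℤ) = (-((k+1:ℕ):ℤ)-1) := by push_cast; ring
    rw [he]
    rw [Nat.factorial_succ]
    push_cast
    ring

lemma aux_diffOn_iter {U : Set ℂ} (hU : IsOpen U) {f : ℂ → ℂ} (hf : DifferentiableOn ℂ f U) :
    ∀ k, DifferentiableOn ℂ (deriv^[k] f) U := by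
  intro k
  induction k with
  | zero => simpa using hf
  | succ k ih =>
    rw [Function.iterate_succ']
    exact ((ih.analyticOnNhd hU).deriv).differentiableOn

lemma aux_tlu_iter {F : ℕ → ℂ → ℂ} {f : ℂ → ℂ} {U : Set ℂ} (hU : IsOpen U)
    (h : TendstoLocallyUniformlyOn F f atTop U)
    (hF : ∀ N, DifferentiableOn ℂ (F N) U) (k : ℕ) :
    TendstoLocallyUniformlyOn (fun N => deriv^[k] (F N)) (deriv^[k] f) atTop U := by
  induction k with
  | zero => simpa using h
  | succ k ih =>
    have := ih.deriv (Filter.Eventually.of_forall fun N => aux_diffOn_iter hU (hF N) k) hU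
    rw [Function.iterate_succ']
    refine this.congr fun N x hx => ?_
    simp [Function.iterate_succ_apply']

lemma aux_iter_sum {U : Set ℂ} (hU : IsOpen U) {ι : Type*} (t : Finset ι) (g : ι → ℂ → ℂ)
    (hg : ∀ i ∈ t, DifferentiableOn ℂ (g i) U) (k : ℕ) :
    ∀ z ∈ U, deriv^[k] (fun w => ∑ i ∈ t, g i w) z = ∑ i ∈ t, deriv^[k] (g i) z := by
  induction k with
  | zero => intro z _; simp
  | succ k ih =>
    intro z hz
    rw [Function.iterate_succ_apply']
    have hev : deriv^[k] (fun w => ∑ i ∈ t, g i w) =ᶠ[𝓝 z]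
        (fun w => ∑ i ∈ t, deriv^[k] (g i) w) :=
      Filter.eventually_of_mem (hU.mem_nhds hz) ih
    rw [hev.deriv_eq, deriv_fun_sum fun i hi =>
      ((aux_diffOn_iter hU (hg i hi) k).differentiableAt (hU.mem_nhds hz))]
    exact Finset.sum_congr rfl fun i _ => (Function.iterate_succ_apply' deriv k (g i)).symm ▸ rfl

lemma aux_iter_const_mul (c : ℂ) (f : ℂ → ℂ) (k : ℕ) :
    deriv^[k] (fun w => c * f w) = fun w => c * deriv^[k] f w := by
  induction k with
  | zero => simp
  | succ k ih =>
    rw [Function.iterate_succ_apply', ih, deriv_const_mul_field' c]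
    funext w
    rw [Function.iterate_succ_apply' deriv k f]

lemma aux_summable_pow {d : ℕ} (hd : 0 < d) {c : ℝ} (hc : 0 < c) {r : ℕ → ℝ}
    (hr : ∀ n, 0 < r n) (hgrow : ∀ᶠ n : ℕ in atTop, c * ((n:ℝ)+1) ^ ((1:ℝ)/d) ≤ r n)
    {p : ℕ} (hp : d < p) : Summable (fun n => (r n ^ p)⁻¹) := by
  have hq : (-((p:ℝ)/d) : ℝ) < -1 := by
    have : (1:ℝ) < (p:ℝ)/d := (one_lt_div (by positivity)).2 (by exact_mod_cast hp)
    linarith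
  have hg : Summable (fun n : ℕ => ((n:ℝ)+1) ^ (-((p:ℝ)/d))) := by
    have := (summable_nat_add_iff (f := fun n : ℕ => (n:ℝ) ^ (-((p:ℝ)/d))) 1).2
      (Real.summable_nat_rpow.2 hq)
    refine this.congr fun n => ?_
    push_cast
    ring_nf
  refine summable_of_isBigO_nat hg ?_
  rw [Asymptotics.isBigO_iff]
  refine ⟨(c^p)⁻¹, ?_⟩
  filter_upwards [hgrow] with n hn
  have hb : (0:ℝ) < ((n:ℝ)+1) ^ ((1:ℝ)/d) := by positivity
  have key : (((n:ℝ)+1) ^ ((1:ℝ)/d)) ^ p = ((n:ℝ)+1) ^ ((p:ℝ)/d) := by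
    rw [← Real.rpow_natCast (((n:ℝ)+1) ^ ((1:ℝ)/d)) p, ← Real.rpow_mul (by positivity)]
    congr 1
    ring
  have h1 : (r n ^ p)⁻¹ ≤ ((c * ((n:ℝ)+1) ^ ((1:ℝ)/d)) ^ p)⁻¹ := by
    apply inv_anti₀ (pow_pos (mul_pos hc hb) p)
    exact pow_le_pow_left₀ (le_of_lt (mul_pos hc hb)) hn p
  calc ‖(r n ^ p)⁻¹‖ = (r n ^ p)⁻¹ := by
        rw [Real.norm_eq_abs, abs_of_pos (inv_pos.2 (pow_pos (hr n) p))]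
    _ ≤ ((c * ((n:ℝ)+1) ^ ((1:ℝ)/d)) ^ p)⁻¹ := h1
    _ = (c^p)⁻¹ * ‖((n:ℝ)+1) ^ (-((p:ℝ)/d))‖ := by
        rw [mul_pow, mul_inv, key, Real.norm_eq_abs,
          abs_of_pos (by positivity), Real.rpow_neg (by positivity)]

lemma aux_summable_exp {d : ℕ} (hd : 0 < d) {c : ℝ} (hc : 0 < c) {r : ℕ → ℝ}
    (hr : ∀ n, 0 < r n) (hgrow : ∀ᶠ n : ℕ in atTop, c * ((n:ℝ)+1) ^ ((1:ℝ)/d) ≤ r n)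
    {s : ℝ} (hs : s < 0) : Summable (fun n => Real.exp (s * r n)) := by
  have hsc : 0 < (-s) * c := mul_pos (by linarith) hc
  have hr' : ∀ n, 0 < (-s) * r n := fun n => mul_pos (by linarith) (hr n)
  have hgrow' : ∀ᶠ n : ℕ in atTop, ((-s)*c) * ((n:ℝ)+1) ^ ((1:ℝ)/d) ≤ (-s) * r n := by
    filter_upwards [hgrow] with n hn
    calc ((-s)*c) * ((n:ℝ)+1) ^ ((1:ℝ)/d) = (-s) * (c * ((n:ℝ)+1) ^ ((1:ℝ)/d)) := by ring
      _ ≤ (-s) * r n := by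
          apply mul_le_mul_of_nonneg_left hn (by linarith)
  have hbase : Summable (fun n => (((-s) * r n) ^ (2*d))⁻¹) :=
    aux_summable_pow hd hsc hr' hgrow' (by omega)
  have htend : Tendsto (fun n : ℕ => (-s) * r n) atTop atTop := by
    refine tendsto_atTop_mono' atTop hgrow' ?_
    have h1 : Tendsto (fun n : ℕ => ((n:ℝ)+1)) atTop atTop :=
      tendsto_atTop_add_const_right atTop 1 tendsto_natCast_atTop_atTop
    exact (tendsto_rpow_atTop (by positivity)).comp h1 |>.const_mul_atTop hsc
  have hev : ∀ᶠ n : ℕ in atTop,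
      Real.exp (s * r n) ≤ (((-s) * r n) ^ (2*d))⁻¹ := by
    have h0 := (Real.tendsto_pow_mul_exp_neg_atTop_nhds_zero (2*d)).comp htend
    have h1 : ∀ᶠ n : ℕ in atTop,
        ((-s) * r n) ^ (2*d) * Real.exp (-((-s) * r n)) ≤ 1 := by
      filter_upwards [h0.eventually (eventually_le_nhds (by norm_num : (0:ℝ) < 1))] with n hn
      simpa using hn
    filter_upwards [h1] with n hn
    have hp : (0:ℝ) < ((-s) * r n) ^ (2*d) := pow_pos (hr' n) _
    have he : s * r n = -((-s) * r n) := by ring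
    rw [he, inv_eq_one_div, le_div_iff₀ hp, mul_comm]
    exact hn
  refine summable_of_isBigO_nat hbase ?_
  rw [Asymptotics.isBigO_iff]
  refine ⟨1, ?_⟩
  filter_upwards [hev] with n hn
  rw [Real.norm_eq_abs, abs_of_pos (Real.exp_pos _), Real.norm_eq_abs,
    abs_of_pos (inv_pos.2 (pow_pos (hr' n) _)), one_mul]
  exact hn

lemma aux_znorm (k : ℕ) (w : ℂ) : ‖w ^ (-(k:ℤ)-1)‖ = (‖w‖^(k+1))⁻¹ := by
  rw [show (-(k:ℤ)-1) = -((k+1:ℕ):ℤ) by push_cast; ring, zpow_neg, norm_inv,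
    zpow_natCast, norm_pow]

lemma aux_lb (a : ℝ) (ρ : ℂ) :
    a - ‖ρ‖ ≤ ‖ρ - (a:ℂ)*I‖ ∧ a - ‖ρ‖ ≤ ‖ρ + (a:ℂ)*I‖ := by
  have hn : ‖(a:ℂ)*I‖ = |a| := by
    rw [norm_mul, Complex.norm_I, mul_one, Complex.norm_real, Real.norm_eq_abs]
  constructor
  · calc a - ‖ρ‖ ≤ |a| - ‖ρ‖ := sub_le_sub_right (le_abs_self a) _
      _ = ‖(a:ℂ)*I‖ - ‖ρ‖ := by rw [hn]
      _ ≤ ‖(a:ℂ)*I - ρ‖ := norm_sub_norm_le _ _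
      _ = ‖ρ - (a:ℂ)*I‖ := norm_sub_rev _ _
  · calc a - ‖ρ‖ ≤ |a| - ‖ρ‖ := sub_le_sub_right (le_abs_self a) _
      _ = ‖(a:ℂ)*I‖ - ‖-ρ‖ := by rw [hn, norm_neg]
      _ ≤ ‖(a:ℂ)*I - (-ρ)‖ := norm_sub_norm_le _ _
      _ = ‖ρ + (a:ℂ)*I‖ := by rw [sub_neg_eq_add, add_comm]

lemma aux_tendsto_atTop {d : ℕ} (hd : 0 < d) {c : ℝ} (hc : 0 < c) {r : ℕ → ℝ}
    (hgrow : ∀ᶠ n : ℕ in atTop, c * ((n:ℝ)+1) ^ ((1:ℝ)/d) ≤ r n) :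
    Tendsto r atTop atTop := by
  refine tendsto_atTop_mono' atTop hgrow ?_
  have h1 : Tendsto (fun n : ℕ => ((n:ℝ)+1)) atTop atTop :=
    tendsto_atTop_add_const_right atTop 1 tendsto_natCast_atTop_atTop
  exact (tendsto_rpow_atTop (div_pos one_pos (by exact_mod_cast hd))).comp h1
    |>.const_mul_atTop hc

lemma aux_SB {d m : ℕ} (hd : 0 < d) (hm : d ≤ m) {c : ℝ} (hc : 0 < c) {r : ℕ → ℝ}
    (hr : ∀ n, 0 < r n) (hgrow : ∀ᶠ n : ℕ in atTop, c * ((n:ℝ)+1) ^ ((1:ℝ)/d) ≤ r n)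
    (ρ : ℂ) :
    Summable (fun n => ‖(ρ - (r n:ℂ)*I) ^ (-(m:ℤ)-1) + (ρ + (r n:ℂ)*I) ^ (-(m:ℤ)-1)‖) := by
  have hbase : Summable (fun n => (r n ^ (m+1))⁻¹) :=
    aux_summable_pow hd hc hr hgrow (by omega)
  refine summable_of_isBigO_nat hbase ?_
  rw [Asymptotics.isBigO_iff]
  refine ⟨2 * 2^(m+1), ?_⟩
  have hbig : ∀ᶠ n : ℕ in atTop, 2 * ‖ρ‖ ≤ r n :=
    (aux_tendsto_atTop hd hc hgrow).eventually_ge_atTop _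
  filter_upwards [hbig] with n hn
  have hrn := hr n
  have h2 : r n / 2 ≤ r n - ‖ρ‖ := by
    have := norm_nonneg ρ; linarith
  have hhalf : (0:ℝ) < r n / 2 := by linarith
  obtain ⟨l1, l2⟩ := aux_lb (r n) ρ
  have b1 : ‖(ρ - (r n:ℂ)*I) ^ (-(m:ℤ)-1)‖ ≤ ((r n / 2)^(m+1))⁻¹ := by
    rw [aux_znorm]
    apply inv_anti₀ (pow_pos hhalf _)
    apply pow_le_pow_left₀ (le_of_lt hhalf)
    linarith
  have b2 : ‖(ρ + (r n:ℂ)*I) ^ (-(m:ℤ)-1)‖ ≤ ((r n / 2)^(m+1))⁻¹ := by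
    rw [aux_znorm]
    apply inv_anti₀ (pow_pos hhalf _)
    apply pow_le_pow_left₀ (le_of_lt hhalf)
    linarith
  have key : ((r n / 2)^(m+1))⁻¹ = 2^(m+1) * (r n ^ (m+1))⁻¹ := by
    rw [div_pow, inv_div, div_eq_mul_inv]
  calc ‖‖(ρ - (r n:ℂ)*I) ^ (-(m:ℤ)-1) + (ρ + (r n:ℂ)*I) ^ (-(m:ℤ)-1)‖‖
      = ‖(ρ - (r n:ℂ)*I) ^ (-(m:ℤ)-1) + (ρ + (r n:ℂ)*I) ^ (-(m:ℤ)-1)‖ := norm_norm _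
    _ ≤ ‖(ρ - (r n:ℂ)*I) ^ (-(m:ℤ)-1)‖ + ‖(ρ + (r n:ℂ)*I) ^ (-(m:ℤ)-1)‖ := norm_add_le _ _
    _ ≤ ((r n / 2)^(m+1))⁻¹ + ((r n / 2)^(m+1))⁻¹ := add_le_add b1 b2
    _ = 2 * 2^(m+1) * (r n ^ (m+1))⁻¹ := by rw [key]; ring
    _ ≤ 2 * 2^(m+1) * ‖(r n ^ (m+1))⁻¹‖ := by
        rw [Real.norm_eq_abs, abs_of_pos (inv_pos.2 (pow_pos hrn _))]

lemma aux_grow {d : ℕ} (hd : 0 < d) {lam : ℕ → ℝ} {L : ℝ} (hL : 0 < L)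
    (hweyl : Tendsto (fun n : ℕ => lam n / (((n : ℝ) + 1) ^ ((2 : ℝ) / (d : ℝ))))
      atTop (𝓝 L)) :
    ∃ c : ℝ, 0 < c ∧ ∀ᶠ n : ℕ in atTop,
      c * ((n:ℝ)+1) ^ ((1:ℝ)/d) ≤ Real.sqrt (lam n) := by
  refine ⟨Real.sqrt (L/2), Real.sqrt_pos.2 (by linarith), ?_⟩
  have hev : ∀ᶠ n : ℕ in atTop, L/2 < lam n / (((n : ℝ) + 1) ^ ((2 : ℝ) / (d : ℝ))) :=
    hweyl.eventually (eventually_gt_nhds (by linarith))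
  filter_upwards [hev] with n hn
  have hb : (0:ℝ) < ((n:ℝ)+1) ^ ((2:ℝ)/d) := by positivity
  have h1 : (L/2) * ((n:ℝ)+1) ^ ((2:ℝ)/d) ≤ lam n := by
    exact le_of_lt ((lt_div_iff₀ hb).mp hn)
  calc Real.sqrt (L/2) * ((n:ℝ)+1) ^ ((1:ℝ)/d)
      = Real.sqrt (L/2) * Real.sqrt (((n:ℝ)+1) ^ ((2:ℝ)/d)) := by
        congr 1
        rw [show ((n:ℝ)+1) ^ ((2:ℝ)/d) = (((n:ℝ)+1) ^ ((1:ℝ)/d))^2 by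
          rw [← Real.rpow_natCast (((n:ℝ)+1) ^ ((1:ℝ)/d)) 2, ← Real.rpow_mul (by positivity)]
          congr 1; push_cast; ring]
        rw [Real.sqrt_sq (by positivity)]
    _ = Real.sqrt ((L/2) * ((n:ℝ)+1) ^ ((2:ℝ)/d)) := (Real.sqrt_mul (by linarith) _).symm
    _ ≤ Real.sqrt (lam n) := Real.sqrt_le_sqrt h1



/-- With `ρ_n = √λ_n` and
`F_{s₀}(ρ) = Σ_{n≥1} 2ρ e^{s₀ ρ_n}/(ρ² + ρ_n²)`, for every integer `m ≥ d` and every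
`ρ` with `Re ρ > 0`, the termwise `m`-th derivative series of `Σ_n 2ρ/(ρ² + ρ_n²)`
converges absolutely and `lim_{s₀→0⁻} F_{s₀}^{(m)}(ρ)` equals its sum. -/
theorem stmt_17 (d : ℕ) (hd : 0 < d) (lam : ℕ → ℝ) (hpos : ∀ n, 0 < lam n)
    (hmono : Monotone lam) (L : ℝ) (hL : 0 < L)
    (hweyl : Tendsto (fun n : ℕ => lam n / (((n : ℝ) + 1) ^ ((2 : ℝ) / (d : ℝ))))
      atTop (𝓝 L))
    (m : ℕ) (hm : d ≤ m) (ρ : ℂ) (hρ : 0 < ρ.re) :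
    Summable (fun n : ℕ =>
      ‖iteratedDeriv m
        (fun z : ℂ => 2 * z / (z ^ 2 + ((Real.sqrt (lam n) : ℂ)) ^ 2)) ρ‖) ∧
    Tendsto
      (fun s0 : ℝ =>
        iteratedDeriv m
          (fun z : ℂ => ∑' n : ℕ,
            2 * z * Complex.exp ((s0 : ℂ) * (Real.sqrt (lam n) : ℂ)) /
              (z ^ 2 + ((Real.sqrt (lam n) : ℂ)) ^ 2)) ρ)
      (𝓝[Set.Iio (0 : ℝ)] 0)
      (𝓝 (∑' n : ℕ,
        iteratedDeriv m
          (fun z : ℂ => 2 * z / (z ^ 2 + ((Real.sqrt (lam n) : ℂ)) ^ 2)) ρ)) := by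
  set r : ℕ → ℝ := fun n => Real.sqrt (lam n) with hr_def
  have hr : ∀ n, 0 < r n := fun n => Real.sqrt_pos.2 (hpos n)
  obtain ⟨c, hc, hgrow⟩ := aux_grow hd hL hweyl
  set U : Set ℂ := {z : ℂ | 0 < z.re} with hU_def
  have hU : IsOpen U := isOpen_lt continuous_const Complex.continuous_re
  have hρU : ρ ∈ U := hρ
  set f : ℕ → ℂ → ℂ := fun n z => 2 * z / (z ^ 2 + ((r n : ℝ) : ℂ) ^ 2) with hf_def
  set D : ℕ → ℂ := fun n => iteratedDeriv m (f n) ρ with hD_def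
  -- derivative formula
  have hDf : ∀ n, D n = (-1)^m * (m.factorial : ℂ) *
      ((ρ - (r n:ℂ)*I) ^ (-(m:ℤ)-1) + (ρ + (r n:ℂ)*I) ^ (-(m:ℤ)-1)) := by
    intro n
    rw [hD_def]
    simp only [iteratedDeriv_eq_iterate]
    exact aux_iter (r n) m ρ hρ
  -- Part 1 : summability
  have part1 : Summable (fun n => ‖D n‖) := by
    have := (aux_SB hd hm hc hr hgrow ρ).mul_left ((m.factorial : ℝ))
    refine this.congr fun n => ?_
    rw [hDf n, norm_mul, norm_mul, norm_pow, norm_neg, norm_one, one_pow, one_mul,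
      Complex.norm_natCast]
  refine ⟨part1, ?_⟩
  -- nonvanishing denominators and differentiability
  have hden : ∀ (n : ℕ) (z : ℂ), z ∈ U → z ^ 2 + ((r n :ℝ): ℂ) ^ 2 ≠ 0 := by
    intro n z hz
    rw [aux_fact (r n) z hz]
    exact mul_ne_zero (aux_ne (r n) z hz).1 (aux_ne (r n) z hz).2
  -- key identity for fixed s0 < 0
  have key : ∀ s0 : ℝ, s0 < 0 →
      iteratedDeriv m
        (fun z : ℂ => ∑' n : ℕ,
          2 * z * Complex.exp ((s0 : ℂ) * (r n : ℂ)) /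
            (z ^ 2 + ((r n : ℝ) : ℂ) ^ 2)) ρ
      = ∑' n : ℕ, Complex.exp ((s0 : ℂ) * (r n : ℂ)) * D n := by
    intro s0 hs0
    set E : ℕ → ℂ := fun n => Complex.exp ((s0 : ℂ) * (r n : ℂ)) with hE_def
    have hEnorm : ∀ n, ‖E n‖ = Real.exp (s0 * r n) := by
      intro n
      rw [hE_def]
      simp only [Complex.norm_exp]
      norm_num [Complex.mul_re]
    set g : ℕ → ℂ → ℂ := fun n z => 2 * z * E n / (z ^ 2 + ((r n : ℝ) : ℂ) ^ 2) with hg_def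
    have hg_eq : ∀ n, g n = fun z => E n * f n z := by
      intro n
      funext z
      rw [hg_def, hf_def]
      simp only
      rw [mul_comm (2*z) (E n), mul_div_assoc]
    have hgdiff : ∀ n, DifferentiableOn ℂ (g n) U := by
      intro n
      rw [hg_eq n]
      apply DifferentiableOn.const_mul
      apply DifferentiableOn.div
      · exact (differentiable_id.const_mul 2).differentiableOn
      · exact ((differentiable_pow 2).add_const _).differentiableOn
      · exact hden n
    have hSdiff : ∀ N, DifferentiableOn ℂ (fun z => ∑ n ∈ Finset.range N, g n z) U := by
      intro N
      exact DifferentiableOn.fun_sum fun n _ => hgdiff n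
    -- locally uniform convergence of the partial sums
    have TLU0 : TendstoLocallyUniformlyOn (fun N z => ∑ n ∈ Finset.range N, g n z)
        (fun z => ∑' n, g n z) atTop U := by
      rw [tendstoLocallyUniformlyOn_iff_forall_isCompact hU]
      intro K hKU hK
      rcases K.eq_empty_or_nonempty with rfl | hne
      · intro u _; simp
      obtain ⟨z₀, hz₀K, hz₀min'⟩ := hK.exists_isMinOn hne Complex.continuous_re.continuousOn
      have hz₀min := isMinOn_iff.mp hz₀min'
      obtain ⟨z₁, hz₁K, hz₁max'⟩ := hK.exists_isMaxOn hne continuous_norm.continuousOn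
      have hz₁max := isMaxOn_iff.mp hz₁max'
      have hδ : 0 < z₀.re := hKU hz₀K
      apply tendstoUniformlyOn_tsum_nat
        ((aux_summable_exp hd hc hr hgrow hs0).mul_left (2 * ‖z₁‖ / z₀.re ^ 2))
      intro n z hz
      have hzre : 0 < z.re := hKU hz
      have hlb1 : z₀.re ≤ ‖z - (r n:ℂ)*I‖ := by
        calc z₀.re ≤ z.re := hz₀min z hz
          _ = (z - (r n:ℂ)*I).re := by simp
          _ ≤ |(z - (r n:ℂ)*I).re| := le_abs_self _
          _ ≤ ‖z - (r n:ℂ)*I‖ := Complex.abs_re_le_norm _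
      have hlb2 : z₀.re ≤ ‖z + (r n:ℂ)*I‖ := by
        calc z₀.re ≤ z.re := hz₀min z hz
          _ = (z + (r n:ℂ)*I).re := by simp
          _ ≤ |(z + (r n:ℂ)*I).re| := le_abs_self _
          _ ≤ ‖z + (r n:ℂ)*I‖ := Complex.abs_re_le_norm _
      have hdenlb : z₀.re ^ 2 ≤ ‖z ^ 2 + ((r n:ℝ):ℂ) ^ 2‖ := by
        rw [aux_fact (r n) z hzre, norm_mul]
        calc z₀.re ^ 2 = z₀.re * z₀.re := sq z₀.re
          _ ≤ ‖z - (r n:ℂ)*I‖ * ‖z + (r n:ℂ)*I‖ := by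
              apply mul_le_mul hlb1 hlb2 (le_of_lt hδ) (norm_nonneg _)
      rw [hg_def]
      simp only
      rw [norm_div, norm_mul, norm_mul]
      have hnum : ‖(2:ℂ)‖ * ‖z‖ * ‖E n‖ ≤ 2 * ‖z₁‖ * Real.exp (s0 * r n) := by
        rw [hEnorm n]
        have h2 : ‖(2:ℂ)‖ = 2 := by norm_num
        rw [h2]
        apply mul_le_mul_of_nonneg_right _ (le_of_lt (Real.exp_pos _))
        exact mul_le_mul_of_nonneg_left (hz₁max z hz) (by norm_num)
      calc ‖(2:ℂ)‖ * ‖z‖ * ‖E n‖ / ‖z ^ 2 + ((r n:ℝ):ℂ) ^ 2‖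
          ≤ (2 * ‖z₁‖ * Real.exp (s0 * r n)) / z₀.re ^ 2 := by
            apply div_le_div₀ (by positivity) hnum (by positivity) hdenlb
        _ = 2 * ‖z₁‖ / z₀.re ^ 2 * Real.exp (s0 * r n) := by ring
    -- iterate derivatives
    have TLUm := aux_tlu_iter hU TLU0 hSdiff m
    have hpt := TLUm.tendsto_at hρU
    -- partial sums of derivatives
    have hSN : ∀ N, deriv^[m] (fun z => ∑ n ∈ Finset.range N, g n z) ρ
        = ∑ n ∈ Finset.range N, E n * D n := by
      intro N
      rw [aux_iter_sum hU (Finset.range N) g (fun n _ => hgdiff n) m ρ hρU]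
      refine Finset.sum_congr rfl fun n _ => ?_
      rw [hg_eq n, aux_iter_const_mul (E n) (f n) m]
      rw [hD_def]
      simp only [iteratedDeriv_eq_iterate]
    -- summability of the limit series
    have hsum : Summable (fun n => E n * D n) := by
      apply Summable.of_norm
      apply Summable.of_nonneg_of_le (fun n => norm_nonneg _) _ part1
      intro n
      rw [norm_mul, hEnorm n]
      calc Real.exp (s0 * r n) * ‖D n‖ ≤ 1 * ‖D n‖ := by
            apply mul_le_mul_of_nonneg_right _ (norm_nonneg _)
            exact Real.exp_le_one_iff.mpr (by nlinarith [hr n])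
        _ = ‖D n‖ := one_mul _
    have hlim2 := hsum.hasSum.tendsto_sum_nat
    have hpt' : Tendsto (fun N => ∑ n ∈ Finset.range N, E n * D n) atTop
        (𝓝 (deriv^[m] (fun z => ∑' n, g n z) ρ)) := by
      refine hpt.congr fun N => hSN N
    rw [iteratedDeriv_eq_iterate]
    exact tendsto_nhds_unique hpt' hlim2
  -- final limit
  have final : Tendsto (fun s0 : ℝ => ∑' n, Complex.exp ((s0 : ℂ) * (r n : ℂ)) * D n)
      (𝓝[Set.Iio (0:ℝ)] 0) (𝓝 (∑' n, D n)) := by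
    apply tendsto_tsum_of_dominated_convergence part1
    · intro n
      have hcont : Continuous (fun s0 : ℝ => Complex.exp ((s0 : ℂ) * (r n : ℂ)) * D n) := by
        fun_prop
      have := hcont.tendsto' 0 (D n) (by simp)
      exact this.mono_left nhdsWithin_le_nhds
    · filter_upwards [self_mem_nhdsWithin] with s0 hs0
      intro n
      rw [norm_mul]
      have : ‖Complex.exp ((s0 : ℂ) * (r n : ℂ))‖ ≤ 1 := by
        rw [Complex.norm_exp]
        apply Real.exp_le_one_iff.mpr
        have : ((s0 : ℂ) * (r n : ℂ)).re = s0 * r n := by norm_num [Complex.mul_re]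
        rw [this]
        nlinarith [hr n, mem_Iio.mp hs0]
      calc ‖Complex.exp ((s0 : ℂ) * (r n : ℂ))‖ * ‖D n‖ ≤ 1 * ‖D n‖ :=
            mul_le_mul_of_nonneg_right this (norm_nonneg _)
        _ = ‖D n‖ := one_mul _
  refine final.congr' ?_
  filter_upwards [self_mem_nhdsWithin] with s0 hs0
  exact (key s0 (mem_Iio.mp hs0)).symm
end

section
/- For every complex t with Re t > 0, the series Σ_{j=0}^{∞} (2j+1) e^{−t(j + 1/2)} converges absolutely and equals cosh(t/2) / (2 sinh²(t/2)). -/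
open Filter Set
open scoped Topology Real

/-- For every complex `t` with `Re t > 0`, the series
`Σ_{j≥0} (2j+1) e^{-t(j+1/2)}` converges absolutely and equals
`cosh(t/2)/(2 sinh²(t/2))`. -/
theorem stmt_18 (t : ℂ) (ht : 0 < t.re) :
    Summable (fun j : ℕ => ‖(2 * (j : ℂ) + 1) * Complex.exp (-t * ((j : ℂ) + 1 / 2))‖) ∧
    ∑' j : ℕ, (2 * (j : ℂ) + 1) * Complex.exp (-t * ((j : ℂ) + 1 / 2))
      = Complex.cosh (t / 2) / (2 * Complex.sinh (t / 2) ^ 2) := by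
  set q : ℂ := Complex.exp (-t) with hq
  have hqn : ‖q‖ < 1 := by
    rw [hq, Complex.norm_exp]
    simp only [Complex.neg_re]
    exact Real.exp_lt_one_iff.mpr (by linarith)
  have hterm : ∀ j : ℕ, Complex.exp (-t * ((j : ℂ) + 1 / 2))
      = Complex.exp (-t / 2) * q ^ j := by
    intro j
    rw [hq, ← Complex.exp_nat_mul, ← Complex.exp_add]
    ring_nf
  -- HasSum computations
  have h1 : HasSum (fun j : ℕ => q ^ j) (1 - q)⁻¹ := hasSum_geometric_of_norm_lt_one hqn
  have h2 : HasSum (fun j : ℕ => (j : ℂ) * q ^ j) (q / (1 - q) ^ 2) :=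
    hasSum_coe_mul_geometric_of_norm_lt_one hqn
  have h3 : HasSum (fun j : ℕ => (2 * (j : ℂ) + 1) * Complex.exp (-t * ((j : ℂ) + 1 / 2)))
      (Complex.exp (-t / 2) * (2 * (q / (1 - q) ^ 2) + (1 - q)⁻¹)) := by
    have := (((h2.mul_left 2).add h1).mul_left (Complex.exp (-t / 2)))
    refine this.congr_fun ?_
    intro j
    rw [hterm j]
    ring
  constructor
  · have : Summable (fun j : ℕ => (2 * (j : ℂ) + 1) * Complex.exp (-t * ((j : ℂ) + 1 / 2))) :=
      h3.summable
    -- need summability of norms: use that the real series is summable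
    have hr : Summable (fun j : ℕ => (2 * (j : ℝ) + 1) * (‖Complex.exp (-t / 2)‖ * ‖q‖ ^ j)) := by
      have hs1 : Summable (fun j : ℕ => (j : ℝ) * ‖q‖ ^ j) := by
        have h' : ‖(‖q‖ : ℝ)‖ < 1 := by rwa [Real.norm_eq_abs, abs_of_nonneg (norm_nonneg q)]
        simpa using summable_pow_mul_geometric_of_norm_lt_one (R := ℝ) 1 h'
      have hs2 : Summable (fun j : ℕ => ‖q‖ ^ j) := summable_geometric_of_lt_one (norm_nonneg q) hqn
      have := ((hs1.mul_left 2).add hs2).mul_left ‖Complex.exp (-t / 2)‖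
      refine this.congr ?_
      intro j; ring
    refine hr.congr ?_
    intro j
    rw [hterm j, norm_mul, norm_mul, norm_pow]
    have : ‖(2 * (j : ℂ) + 1)‖ = 2 * (j : ℝ) + 1 := by
      have : (2 * (j : ℂ) + 1) = ((2 * (j : ℝ) + 1 : ℝ) : ℂ) := by push_cast; ring
      rw [this, Complex.norm_real, Real.norm_eq_abs, abs_of_nonneg (by positivity)]
    rw [this]
  · rw [h3.tsum_eq]
    -- algebra
    set u : ℂ := Complex.exp (t / 2) with hu
    set v : ℂ := Complex.exp (-t / 2) with hv
    have huv : u * v = 1 := by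
      rw [hu, hv, ← Complex.exp_add]; ring_nf; exact Complex.exp_zero
    have hqv : q = v ^ 2 := by
      rw [hq, hv, pow_two, ← Complex.exp_add]; congr 1; ring
    have hv0 : v ≠ 0 := Complex.exp_ne_zero _
    have h1q : (1 : ℂ) - q ≠ 0 := by
      intro h
      have : ‖q‖ = 1 := by
        have : q = 1 := by linear_combination -h
        simp [this]
      linarith
    have huv' : u - v ≠ 0 := by
      intro h
      apply h1q
      have : v * (u - v) = 1 - q := by rw [hqv]; ring_nf; linear_combination huv
      rw [← this, h, mul_zero]
    have hsinh : Complex.sinh (t / 2) = (u - v) / 2 := by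
      rw [Complex.sinh, hu, hv]; ring_nf
    have hcosh : Complex.cosh (t / 2) = (u + v) / 2 := by
      rw [Complex.cosh, hu, hv]; ring_nf
    rw [hsinh, hcosh, hqv]
    have h1q' : (1 : ℂ) - v ^ 2 ≠ 0 := by rw [← hqv]; exact h1q
    field_simp
    ring_nf
    linear_combination ((1 + v^2)*u + v - 3*v^3) * huv
end
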